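/- arXiv:1505.00156 — 6 statements merged into one kernel-verified Lean document; each statement's English description precedes it below -/
import Mathlib

section
/- Let X be a real Banach space, {S(t)}_{t≥0} a compact C0 semigroup on X, Λ a metric space, and F:Λ×[0,∞)×X→X a continuous map satisfying conditions (F1) and (F2). Then for every t>0 and every bounded set V⊆X, the set { u(t) : λ∈Λ, u a mild solution of u̇=−Au+F(λ,t,u) with u(0)∈V } is relatively compact in X. -/
open MeasureTheory Set Filter Topology Bornology intervalIntegral

/-- A mild solution of `u' = -Au + G(t,u)` (with `-A` generating the semigroup `S`):
a continuous map `u : [0,∞) → X` satisfying the variation of constants formula. -/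
def IsMildSol {X : Type*} [NormedAddCommGroup X] [NormedSpace ℝ X] [CompleteSpace X]
    (S : ℝ → X →L[ℝ] X) (G : ℝ → X → X) (u : ℝ → X) : Prop :=
  ContinuousOn u (Set.Ici (0 : ℝ)) ∧
  ∀ t : ℝ, 0 ≤ t → u t = S t (u 0) + ∫ s in (0:ℝ)..t, S (t - s) (G s (u s))

/-- Monotonicity of `gronwallBound` in the time variable. -/
lemma gronwallBound_mono_time {K ε : ℝ} (hK : 0 < K) (hε : 0 ≤ ε) {x y : ℝ} (h : x ≤ y) :
    gronwallBound 0 K ε x ≤ gronwallBound 0 K ε y := by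
  rw [gronwallBound_of_K_ne_0 hK.ne']
  have hexp : Real.exp (K * x) ≤ Real.exp (K * y) :=
    Real.exp_le_exp.2 (mul_le_mul_of_nonneg_left h hK.le)
  have hdiv : 0 ≤ ε / K := div_nonneg hε hK.le
  simp only [zero_mul, zero_add]
  nlinarith

set_option maxHeartbeats 1000000 in
/-- for a compact `C₀` semigroup, the set of time-`t` values of
mild solutions starting in a bounded set `V`, over all parameters `λ ∈ Λ`, is
relatively compact in `X`. -/
theorem statement3
    {X : Type*} [NormedAddCommGroup X] [NormedSpace ℝ X] [CompleteSpace X]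
    {Λ : Type*} [MetricSpace Λ]
    (S : ℝ → X →L[ℝ] X)
    (hS0 : S 0 = 1)
    (hSadd : ∀ t s : ℝ, 0 ≤ t → 0 ≤ s → S (t + s) = (S t).comp (S s))
    (hScont : ∀ x : X, ContinuousOn (fun t => S t x) (Set.Ici (0:ℝ)))
    (hScomp : ∀ t : ℝ, 0 < t → ∀ B : Set X, Bornology.IsBounded B →
      IsCompact (closure (S t '' B)))
    (F : Λ → ℝ → X → X)
    (hFcont : ContinuousOn (fun p : Λ × ℝ × X => F p.1 p.2.1 p.2.2)
      {p : Λ × ℝ × X | 0 ≤ p.2.1})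
    (hF1 : ∀ (l : Λ) (x₀ : X), ∃ W ∈ nhds x₀, ∃ L : ℝ, 0 < L ∧
      ∀ x ∈ W, ∀ y ∈ W, ∀ t : ℝ, 0 ≤ t → ‖F l t x - F l t y‖ ≤ L * ‖x - y‖)
    (c : ℝ → ℝ) (hc : Continuous c) (hc0 : ∀ t : ℝ, 0 ≤ t → 0 ≤ c t)
    (hF2 : ∀ (l : Λ) (t : ℝ) (x : X), 0 ≤ t → ‖F l t x‖ ≤ c t * (1 + ‖x‖))
    (V : Set X) (hV : Bornology.IsBounded V)
    (t : ℝ) (ht : 0 < t) :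
    IsCompact (closure {y : X | ∃ (l : Λ) (u : ℝ → X),
      IsMildSol S (F l) u ∧ u 0 ∈ V ∧ y = u t}) := by
  classical
  -- uniform bound on operator norms on compact time intervals
  have hBdd : ∀ T : ℝ, ∃ M : ℝ, 1 ≤ M ∧ ∀ r ∈ Icc (0:ℝ) T, ‖S r‖ ≤ M := by
    intro T
    obtain ⟨C, hC⟩ := banach_steinhaus (g := fun r : Icc (0:ℝ) T => S r) (fun x => by
      obtain ⟨C, hC⟩ := (isCompact_Icc (a := (0:ℝ)) (b := T)).exists_bound_of_continuousOn
        ((hScont x).mono (Icc_subset_Ici_self))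
      exact ⟨C, fun r => hC r r.2⟩)
    exact ⟨max C 1, le_max_right _ _,
      fun r hr => le_trans (hC ⟨r, hr⟩) (le_max_left _ _)⟩
  -- joint continuity of (r, x) ↦ S r x on [0,∞) × X
  have hjoint : ContinuousOn (fun p : ℝ × X => S p.1 p.2) {p : ℝ × X | 0 ≤ p.1} := by
    rintro ⟨r₀, x₀⟩ (hr₀ : 0 ≤ r₀)
    obtain ⟨C, hC1, hC⟩ := hBdd (r₀ + 1)
    have h1 : Tendsto (fun p : ℝ × X => S p.1 (p.2 - x₀))
        (𝓝[{p : ℝ × X | 0 ≤ p.1}] (r₀, x₀)) (𝓝 0) := by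
      apply squeeze_zero_norm' (a := fun p : ℝ × X => C * ‖p.2 - x₀‖)
      · have hlt : ∀ᶠ p : ℝ × X in 𝓝[{p : ℝ × X | 0 ≤ p.1}] (r₀, x₀), p.1 < r₀ + 1 :=
          eventually_nhdsWithin_of_eventually_nhds
            ((continuous_fst.tendsto (r₀, x₀)).eventually (eventually_lt_nhds (by linarith)))
        filter_upwards [hlt, self_mem_nhdsWithin] with p hp1 hp0
        calc ‖S p.1 (p.2 - x₀)‖ ≤ ‖S p.1‖ * ‖p.2 - x₀‖ := (S p.1).le_opNorm _
          _ ≤ C * ‖p.2 - x₀‖ :=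
            mul_le_mul_of_nonneg_right (hC _ ⟨hp0, hp1.le⟩) (norm_nonneg _)
      · have : Tendsto (fun p : ℝ × X => C * ‖p.2 - x₀‖) (𝓝 (r₀, x₀)) (𝓝 (C * ‖x₀ - x₀‖)) :=
          (tendsto_const_nhds.mul (((continuous_snd.sub continuous_const).norm).tendsto _))
        simpa using this.mono_left nhdsWithin_le_nhds
    have h2 : Tendsto (fun p : ℝ × X => S p.1 x₀)
        (𝓝[{p : ℝ × X | 0 ≤ p.1}] (r₀, x₀)) (𝓝 (S r₀ x₀)) := by
      have := (hScont x₀ r₀ hr₀).tendsto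
      exact this.comp (tendsto_nhdsWithin_of_tendsto_nhds_of_eventually_within _
        ((continuous_fst.tendsto (r₀, x₀)).mono_left nhdsWithin_le_nhds)
        (eventually_mem_nhdsWithin.mono (fun p hp => hp)))
    have h3 := h1.add h2
    have heq : (fun p : ℝ × X => S p.1 (p.2 - x₀) + S p.1 x₀) = fun p : ℝ × X => S p.1 p.2 := by
      funext p; rw [← map_add, sub_add_cancel]
    rw [heq] at h3
    simpa [ContinuousWithinAt] using h3
  -- constants
  obtain ⟨M, hM1, hM⟩ := hBdd (t + 1)
  have hM0 : (0:ℝ) ≤ M := le_trans zero_le_one hM1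
  obtain ⟨R₀, hR₀⟩ := hV.exists_norm_le
  set R : ℝ := max R₀ 0 with hRdef
  have hR0 : 0 ≤ R := le_max_right _ _
  have hR : ∀ x ∈ V, ‖x‖ ≤ R := fun x hx => le_trans (hR₀ x hx) (le_max_left _ _)
  obtain ⟨Cb₀, hCb₀⟩ := (isCompact_Icc (a := (0:ℝ)) (b := t)).exists_bound_of_continuousOn
    hc.continuousOn
  set Cb : ℝ := max Cb₀ 0 with hCbdef
  have hCb0 : 0 ≤ Cb := le_max_right _ _
  have hCb : ∀ s ∈ Icc (0:ℝ) t, c s ≤ Cb :=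
    fun s hs => le_trans (le_trans (le_abs_self _) (hCb₀ s hs)) (le_max_left _ _)
  set K : ℝ := M * Cb + 1 with hKdef
  have hK0 : 0 < K := by positivity
  set ε₀ : ℝ := K * (1 + M * R) with hε₀def
  have hε₀0 : 0 ≤ ε₀ := by positivity
  set D : ℝ := M * R + gronwallBound 0 K ε₀ t with hDdef
  have hgb0 : 0 ≤ gronwallBound 0 K ε₀ t := by
    have := gronwallBound_mono_time hK0 hε₀0 (le_of_lt ht) (x := 0)
    simpa [gronwallBound_x0] using this
  have hD0 : 0 ≤ D := by positivity
  -- continuity facts for a given mild solution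
  have hGcont : ∀ (l : Λ) (u : ℝ → X), ContinuousOn u (Ici (0:ℝ)) →
      ContinuousOn (fun s => F l s (u s)) (Ici (0:ℝ)) := by
    intro l u hu
    have hmap : ContinuousOn (fun s : ℝ => ((l, s, u s) : Λ × ℝ × X)) (Ici (0:ℝ)) :=
      continuousOn_const.prodMk (continuousOn_id.prodMk hu)
    exact hFcont.comp hmap (fun s hs => hs)
  have hIcont : ∀ (l : Λ) (u : ℝ → X), ContinuousOn u (Ici (0:ℝ)) → ∀ τ : ℝ, 0 ≤ τ →
      ContinuousOn (fun s => S (τ - s) (F l s (u s))) (Icc (0:ℝ) τ) := by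
    intro l u hu τ hτ
    have hmap : ContinuousOn (fun s : ℝ => ((τ - s, F l s (u s)) : ℝ × X)) (Icc (0:ℝ) τ) :=
      (continuousOn_const.sub continuousOn_id).prodMk
        ((hGcont l u hu).mono Icc_subset_Ici_self)
    exact hjoint.comp hmap (fun s hs => by simpa using sub_nonneg.2 hs.2)
  have hIint : ∀ (l : Λ) (u : ℝ → X), ContinuousOn u (Ici (0:ℝ)) → ∀ τ : ℝ, 0 ≤ τ →
      ∀ a b, a ∈ Icc (0:ℝ) τ → b ∈ Icc (0:ℝ) τ →
      IntervalIntegrable (fun s => S (τ - s) (F l s (u s))) volume a b := by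
    intro l u hu τ hτ a b ha hb
    apply ((hIcont l u hu τ hτ).mono ?_).intervalIntegrable
    exact (uIcc_subset_Icc ha hb)
  -- uniform a priori bound on solutions
  have key_bound : ∀ (l : Λ) (u : ℝ → X), IsMildSol S (F l) u → u 0 ∈ V →
      ∀ s ∈ Icc (0:ℝ) t, ‖u s‖ ≤ D := by
    intro l u hu hu0
    obtain ⟨hucont, hmild⟩ := hu
    set g : ℝ → ℝ := fun r => K * (1 + ‖u (max r 0)‖) with hgdef
    have hgc : Continuous g := by
      have humax : Continuous (fun r : ℝ => u (max r 0)) :=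
        hucont.comp_continuous (continuous_id.max continuous_const)
          (fun r => le_max_right r 0)
      exact continuous_const.mul (continuous_const.add humax.norm)
    have hgnn : ∀ r, 0 ≤ g r := fun r => by positivity
    set ψ : ℝ → ℝ := fun s => ∫ r in (0:ℝ)..s, g r with hψdef
    have hψd : ∀ s : ℝ, HasDerivAt ψ (g s) s := fun s =>
      intervalIntegral.integral_hasDerivAt_right (hgc.intervalIntegrable _ _)
        (hgc.stronglyMeasurableAtFilter _ _) hgc.continuousAt
    have hψc : Continuous ψ := by
      have : Differentiable ℝ ψ := fun s => (hψd s).differentiableAt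
      exact this.continuous
    have hψnn : ∀ s, 0 ≤ s → 0 ≤ ψ s := fun s hs =>
      intervalIntegral.integral_nonneg hs (fun r _ => hgnn r)
    -- pointwise estimate ‖u s‖ ≤ M R + ψ s on [0,t]
    have key : ∀ s ∈ Icc (0:ℝ) t, ‖u s‖ ≤ M * R + ψ s := by
      intro s hs
      have hs0 : (0:ℝ) ≤ s := hs.1
      have hst : s ≤ t := hs.2
      have h1 : ‖S s (u 0)‖ ≤ M * R := by
        calc ‖S s (u 0)‖ ≤ ‖S s‖ * ‖u 0‖ := (S s).le_opNorm _
          _ ≤ M * R := mul_le_mul (hM s ⟨hs0, by linarith⟩) (hR _ hu0) (norm_nonneg _) hM0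
      have hnorm_cont : ContinuousOn (fun r => ‖S (s - r) (F l r (u r))‖) (Icc (0:ℝ) s) :=
        (hIcont l u hucont s hs0).norm
      have h2 : ‖∫ r in (0:ℝ)..s, S (s - r) (F l r (u r))‖ ≤ ψ s := by
        have hψeq : ψ s = ∫ r in (0:ℝ)..s, K * (1 + ‖u r‖) := by
          apply intervalIntegral.integral_congr
          intro r hr
          rw [uIcc_of_le hs0] at hr
          simp [hgdef, max_eq_left hr.1]
        calc ‖∫ r in (0:ℝ)..s, S (s - r) (F l r (u r))‖
            ≤ ∫ r in (0:ℝ)..s, ‖S (s - r) (F l r (u r))‖ :=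
              intervalIntegral.norm_integral_le_integral_norm hs0
          _ ≤ ∫ r in (0:ℝ)..s, K * (1 + ‖u r‖) := by
              apply intervalIntegral.integral_mono_on hs0
              · exact (hnorm_cont.mono (by rw [uIcc_of_le hs0])).intervalIntegrable
              · apply ContinuousOn.intervalIntegrable
                have : ContinuousOn (fun r => K * (1 + ‖u r‖)) (Icc (0:ℝ) s) :=
                  continuousOn_const.mul (continuousOn_const.add
                    ((hucont.mono Icc_subset_Ici_self).norm))
                exact this.mono (by rw [uIcc_of_le hs0])
              · intro r hr
                have hr0 : (0:ℝ) ≤ r := hr.1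
                have hrs : r ≤ s := hr.2
                have hbF : ‖F l r (u r)‖ ≤ c r * (1 + ‖u r‖) := hF2 l r (u r) hr0
                have hcr : c r ≤ Cb := hCb r ⟨hr0, by linarith⟩
                have hcr0 : 0 ≤ c r := hc0 r hr0
                have hSb : ‖S (s - r)‖ ≤ M := hM _ ⟨by linarith, by linarith⟩
                have hun : (0:ℝ) ≤ 1 + ‖u r‖ := by positivity
                calc ‖S (s - r) (F l r (u r))‖ ≤ ‖S (s - r)‖ * ‖F l r (u r)‖ :=
                      (S (s - r)).le_opNorm _
                  _ ≤ M * (c r * (1 + ‖u r‖)) :=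
                      mul_le_mul hSb hbF (norm_nonneg _) hM0
                  _ ≤ K * (1 + ‖u r‖) := by
                      have hmc : M * c r ≤ M * Cb := mul_le_mul_of_nonneg_left hcr hM0
                      have h2 : M * c r * (1 + ‖u r‖) ≤ (M * Cb) * (1 + ‖u r‖) :=
                        mul_le_mul_of_nonneg_right hmc hun
                      nlinarith
          _ = ψ s := hψeq.symm
      calc ‖u s‖ = ‖S s (u 0) + ∫ r in (0:ℝ)..s, S (s - r) (F l r (u r))‖ := by
            rw [← hmild s hs0]
        _ ≤ ‖S s (u 0)‖ + ‖∫ r in (0:ℝ)..s, S (s - r) (F l r (u r))‖ := norm_add_le _ _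
        _ ≤ M * R + ψ s := add_le_add h1 h2
    -- Gronwall
    have hgron : ∀ s ∈ Icc (0:ℝ) t, ‖ψ s‖ ≤ gronwallBound 0 K ε₀ (s - 0) := by
      apply norm_le_gronwallBound_of_norm_deriv_right_le (f' := g)
        hψc.continuousOn (fun x _ => (hψd x).hasDerivWithinAt)
      · simp [hψdef]
      · intro x hx
        have hx0 : (0:ℝ) ≤ x := hx.1
        have hψx : 0 ≤ ψ x := hψnn x hx0
        have hux : ‖u x‖ ≤ M * R + ψ x := key x ⟨hx.1, hx.2.le⟩
        have hgx : g x = K * (1 + ‖u x‖) := by simp [hgdef, max_eq_left hx0]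
        rw [Real.norm_of_nonneg (hgnn x), Real.norm_of_nonneg hψx, hgx]
        nlinarith
    intro s hs
    have h1 := key s hs
    have h2 := hgron s hs
    rw [Real.norm_of_nonneg (hψnn s hs.1), sub_zero] at h2
    have h3 : gronwallBound 0 K ε₀ s ≤ gronwallBound 0 K ε₀ t :=
      gronwallBound_mono_time hK0 hε₀0 hs.2
    calc ‖u s‖ ≤ M * R + ψ s := h1
      _ ≤ M * R + gronwallBound 0 K ε₀ t := by linarith
  -- decomposition lemma
  have hdecomp : ∀ (l : Λ) (u : ℝ → X), IsMildSol S (F l) u → ∀ ε : ℝ, 0 < ε → ε ≤ t →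
      u t = S ε (u (t - ε)) + ∫ s in (t - ε)..t, S (t - s) (F l s (u s)) := by
    intro l u hu ε hε hεt
    obtain ⟨hucont, hmild⟩ := hu
    have htε : (0:ℝ) ≤ t - ε := by linarith
    have h1 := hmild t ht.le
    have h2 := hmild (t - ε) htε
    have hsplit : (∫ s in (0:ℝ)..t, S (t - s) (F l s (u s)))
        = (∫ s in (0:ℝ)..(t - ε), S (t - s) (F l s (u s)))
          + ∫ s in (t - ε)..t, S (t - s) (F l s (u s)) :=
      (intervalIntegral.integral_add_adjacent_intervals
        (hIint l u hucont t ht.le 0 (t - ε) ⟨le_refl _, ht.le⟩ ⟨htε, by linarith⟩)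
        (hIint l u hucont t ht.le (t - ε) t ⟨htε, by linarith⟩ ⟨ht.le, le_refl _⟩)).symm
    have hcomm : (∫ s in (0:ℝ)..(t - ε), S (t - s) (F l s (u s)))
        = S ε (∫ s in (0:ℝ)..(t - ε), S (t - ε - s) (F l s (u s))) := by
      have hcong : (∫ s in (0:ℝ)..(t - ε), S (t - s) (F l s (u s)))
          = ∫ s in (0:ℝ)..(t - ε), S ε (S (t - ε - s) (F l s (u s))) := by
        apply intervalIntegral.integral_congr
        intro s hs
        rw [uIcc_of_le htε] at hs
        have hcompeq : S (t - s) = (S ε).comp (S (t - ε - s)) := by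
          have := hSadd ε (t - ε - s) hε.le (by linarith [hs.2])
          rw [show ε + (t - ε - s) = t - s by ring] at this
          exact this
        show S (t - s) (F l s (u s)) = S ε (S (t - ε - s) (F l s (u s)))
        exact DFunLike.congr_fun hcompeq (F l s (u s))
      rw [hcong]
      exact (S ε).intervalIntegral_comp_comm
        (hIint l u hucont (t - ε) htε 0 (t - ε) ⟨le_refl _, htε⟩ ⟨htε, le_refl _⟩)
    have hS_t : S t (u 0) = S ε (S (t - ε) (u 0)) := by
      have h := hSadd ε (t - ε) hε.le htε
      rw [show ε + (t - ε) = t by ring] at h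
      exact DFunLike.congr_fun h (u 0)
    rw [h1, hsplit, hcomm, hS_t, ← add_assoc, ← (S ε).map_add, ← h2]
  -- total boundedness
  apply TotallyBounded.isCompact_of_isClosed (TotallyBounded.closure ?_) isClosed_closure
  rw [Metric.totallyBounded_iff]
  intro δ hδ
  set Ct : ℝ := K * (1 + D) with hCtdef
  have hCt0 : 0 ≤ Ct := by positivity
  set ε : ℝ := min t (δ / (3 * (Ct + 1))) with hεdef
  have hε0 : 0 < ε := lt_min ht (by positivity)
  have hεt : ε ≤ t := min_le_left _ _
  -- compact set
  have hcompact : IsCompact (closure (S ε '' Metric.closedBall 0 D)) :=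
    hScomp ε hε0 _ Metric.isBounded_closedBall
  obtain ⟨N, hNfin, hNnet⟩ := (Metric.totallyBounded_iff.1 hcompact.totallyBounded)
    (δ / 3) (by positivity)
  refine ⟨N, hNfin, ?_⟩
  rintro y ⟨l, u, hu, hu0, rfl⟩
  have hutε : ‖u (t - ε)‖ ≤ D := key_bound l u hu hu0 (t - ε) ⟨by linarith, by linarith⟩
  have hmem : S ε (u (t - ε)) ∈ closure (S ε '' Metric.closedBall 0 D) :=
    subset_closure ⟨u (t - ε), by simpa [Metric.mem_closedBall, dist_zero_right] using hutε, rfl⟩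
  obtain ⟨z, hzN, hz⟩ : ∃ z ∈ N, S ε (u (t - ε)) ∈ Metric.ball z (δ / 3) := by
    have := hNnet hmem
    simpa using this
  -- tail estimate
  have htail : ‖u t - S ε (u (t - ε))‖ ≤ δ / 3 := by
    rw [hdecomp l u hu ε hε0 hεt]
    rw [add_sub_cancel_left]
    have hb : ∀ s ∈ Set.uIoc (t - ε) t, ‖S (t - s) (F l s (u s))‖ ≤ Ct := by
      intro s hs
      rw [Set.uIoc_of_le (by linarith)] at hs
      have hs0 : (0:ℝ) ≤ s := by linarith [hs.1]
      have hst : s ≤ t := hs.2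
      have hus : ‖u s‖ ≤ D := key_bound l u hu hu0 s ⟨hs0, hst⟩
      have hbF : ‖F l s (u s)‖ ≤ c s * (1 + ‖u s‖) := hF2 l s (u s) hs0
      have hcs : c s ≤ Cb := hCb s ⟨hs0, hst⟩
      have hcs0 : 0 ≤ c s := hc0 s hs0
      have hSb : ‖S (t - s)‖ ≤ M := hM _ ⟨by linarith, by linarith⟩
      calc ‖S (t - s) (F l s (u s))‖ ≤ ‖S (t - s)‖ * ‖F l s (u s)‖ := (S (t - s)).le_opNorm _
        _ ≤ M * (c s * (1 + ‖u s‖)) := mul_le_mul hSb hbF (norm_nonneg _) hM0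
        _ = (M * c s) * (1 + ‖u s‖) := by ring
        _ ≤ (M * Cb) * (1 + D) := by
            have h1 : (0:ℝ) ≤ 1 + ‖u s‖ := by positivity
            have h2 : 1 + ‖u s‖ ≤ 1 + D := by linarith
            exact mul_le_mul (mul_le_mul_of_nonneg_left hcs hM0) h2 h1 (by positivity)
        _ ≤ K * (1 + D) := by
            have hMK : M * Cb ≤ K := by rw [hKdef]; linarith
            exact mul_le_mul_of_nonneg_right hMK (by positivity)
        _ = Ct := hCtdef.symm
    calc ‖∫ s in (t - ε)..t, S (t - s) (F l s (u s))‖ ≤ Ct * |t - (t - ε)| :=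
          intervalIntegral.norm_integral_le_of_norm_le_const hb
      _ = Ct * ε := by rw [show t - (t - ε) = ε by ring, abs_of_pos hε0]
      _ ≤ Ct * (δ / (3 * (Ct + 1))) :=
          mul_le_mul_of_nonneg_left (min_le_right _ _) hCt0
      _ ≤ (Ct + 1) * (δ / (3 * (Ct + 1))) :=
          mul_le_mul_of_nonneg_right (by linarith) (by positivity)
      _ = δ / 3 := by
          have hne : Ct + 1 ≠ 0 := by positivity
          field_simp
  have hd : dist (u t) z < δ := by
    calc dist (u t) z ≤ dist (u t) (S ε (u (t - ε))) + dist (S ε (u (t - ε))) z :=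
          dist_triangle _ _ _
      _ ≤ δ / 3 + dist (S ε (u (t - ε))) z :=
          add_le_add (by rw [dist_eq_norm]; exact htail) le_rfl
      _ < δ / 3 + δ / 3 := by
          have := Metric.mem_ball.1 hz
          linarith [this]
      _ < δ := by linarith
  exact mem_iUnion₂.2 ⟨z, hzN, Metric.mem_ball.2 hd⟩
end

section
/- Let X be a real Banach space, {S(t)}_{t≥0} a compact C0 semigroup on X, Λ a metric space, and F:Λ×[0,∞)×X→X a continuous map satisfying conditions (F1) and (F2). Let (λₙ) be a sequence in Λ, let (xₙ) be a relatively compact sequence in X, and for each n let uₙ be a mild solution of u̇=−Au+F(λₙ,t,u) with uₙ(0)=xₙ. Then the family (uₙ) is equicontinuous at every t∈[0,∞): for every t≥0 and ε>0 there is δ>0 such that for all n and all t'∈[0,∞) with |t'−t|<δ one has ‖uₙ(t')−uₙ(t)‖≤ε. -/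
open MeasureTheory Set Filter Topology Bornology intervalIntegral

section helpers
variable {X : Type*} [NormedAddCommGroup X] [NormedSpace ℝ X] [CompleteSpace X]
  {S : ℝ → X →L[ℝ] X}

lemma sg_opBound (hScont : ∀ x : X, ContinuousOn (fun t => S t x) (Set.Ici (0:ℝ))) (T : ℝ) :
    ∃ M : ℝ, 1 ≤ M ∧ ∀ s : ℝ, 0 ≤ s → s ≤ T → ‖S s‖ ≤ M := by
  have hsub : Set.Icc (0:ℝ) T ⊆ Set.Ici 0 := fun r hr => hr.1
  have h : ∀ x : X, ∃ C : ℝ, ∀ i : Set.Icc (0:ℝ) T, ‖(S i.1) x‖ ≤ C := by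
    intro x
    obtain ⟨C, hC⟩ := IsCompact.exists_bound_of_continuousOn isCompact_Icc
      ((hScont x).mono hsub)
    exact ⟨C, fun i => hC i.1 i.2⟩
  obtain ⟨C, hC⟩ := banach_steinhaus (g := fun i : Set.Icc (0:ℝ) T => S i.1)
    (fun x => h x)
  refine ⟨max C 1, le_max_right _ _, fun s hs hsT => le_trans (hC ⟨s, hs, hsT⟩) (le_max_left _ _)⟩

lemma sg_jointCont (hScont : ∀ x : X, ContinuousOn (fun t => S t x) (Set.Ici (0:ℝ))) :
    ContinuousOn (fun p : ℝ × X => S p.1 p.2) (Set.Ici (0:ℝ) ×ˢ Set.univ) := by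
  rintro ⟨r₀, y₀⟩ ⟨hr₀, -⟩
  obtain ⟨M, hM1, hM⟩ := sg_opBound hScont (r₀ + 1)
  rw [Metric.continuousWithinAt_iff]
  intro ε hε
  have h0 : ContinuousWithinAt (fun t => S t y₀) (Set.Ici 0) r₀ := hScont y₀ r₀ hr₀
  rw [Metric.continuousWithinAt_iff] at h0
  obtain ⟨δ₁, hδ₁, hδ₁'⟩ := h0 (ε/2) (by linarith)
  refine ⟨min (min δ₁ 1) (ε / (2 * M)), by positivity, ?_⟩
  rintro ⟨r, y⟩ ⟨hr, -⟩ hdist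
  simp only [Prod.dist_eq, max_lt_iff] at hdist
  obtain ⟨hd1, hd2⟩ := hdist
  have hrr : dist r r₀ < δ₁ := lt_of_lt_of_le hd1 (le_trans (min_le_left _ _) (min_le_left _ _))
  have hr1 : r ≤ r₀ + 1 := by
    have h := lt_of_lt_of_le hd1 (le_trans (min_le_left _ _) (min_le_right _ _))
    rw [Real.dist_eq] at h
    have := abs_le.1 h.le
    linarith [this.2]
  have hy : dist y y₀ < ε / (2 * M) := lt_of_lt_of_le hd2 (min_le_right _ _)
  have key : dist (S r y) (S r₀ y₀) ≤ dist (S r y) (S r y₀) + dist (S r y₀) (S r₀ y₀) :=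
    dist_triangle _ _ _
  have h1 : dist (S r y) (S r y₀) ≤ M * dist y y₀ := by
    rw [dist_eq_norm, dist_eq_norm, ← map_sub]
    calc ‖S r (y - y₀)‖ ≤ ‖S r‖ * ‖y - y₀‖ := (S r).le_opNorm _
    _ ≤ M * ‖y - y₀‖ := by
        apply mul_le_mul_of_nonneg_right (hM r hr hr1) (norm_nonneg _)
  have h2 : dist (S r y₀) (S r₀ y₀) < ε/2 := hδ₁' hr hrr
  have : M * dist y y₀ < M * (ε / (2 * M)) :=
    mul_lt_mul_of_pos_left hy (by linarith)
  rw [mul_div_assoc'] at this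
  calc dist (S r y) (S r₀ y₀) ≤ M * dist y y₀ + dist (S r y₀) (S r₀ y₀) := by linarith
  _ < M * ε / (2 * M) + ε/2 := by linarith
  _ ≤ ε/2 + ε/2 := by
      have : M * ε / (2 * M) = ε / 2 := by field_simp
      rw [this]
  _ = ε := by ring


variable {X : Type*} [NormedAddCommGroup X] [NormedSpace ℝ X] [CompleteSpace X]
  {S : ℝ → X →L[ℝ] X}

lemma sg_unif (hS0 : S 0 = 1)
    (hScont : ∀ x : X, ContinuousOn (fun t => S t x) (Set.Ici (0:ℝ)))
    {K : Set X} (hK : IsCompact K) {ε : ℝ} (hε : 0 < ε) :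
    ∃ δ : ℝ, 0 < δ ∧ ∀ h : ℝ, 0 ≤ h → h < δ → ∀ y ∈ K, ‖S h y - y‖ ≤ ε := by
  obtain ⟨M, hM1, hM⟩ := sg_opBound hScont 1
  set ρ : ℝ := ε / (3 * (M + 1)) with hρdef
  have hρ : 0 < ρ := by positivity
  obtain ⟨t, htfin, htcov⟩ := Metric.totallyBounded_iff.1 hK.totallyBounded ρ hρ
  -- for each y in t, eventually small
  have hev : ∀ᶠ h in 𝓝[Set.Ici (0:ℝ)] 0, ∀ y ∈ t, ‖S h y - y‖ < ε/3 := by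
    rw [Filter.eventually_all_finite htfin]
    intro y hy
    have hc : ContinuousWithinAt (fun h => S h y) (Set.Ici 0) 0 :=
      hScont y 0 Set.self_mem_Ici
    have h0 : (fun h : ℝ => ‖S h y - y‖) 0 = 0 := by simp [hS0]
    have hn : ContinuousWithinAt (fun h : ℝ => ‖S h y - y‖) (Set.Ici 0) 0 :=
      (hc.sub continuousWithinAt_const).norm
    have : Set.Iio (ε/3) ∈ 𝓝 ((fun h : ℝ => ‖S h y - y‖) 0) := by
      rw [h0]; exact Iio_mem_nhds (by positivity)
    exact hn this
  rw [Filter.eventually_iff, Metric.mem_nhdsWithin_iff] at hev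
  obtain ⟨δ', hδ', hδ''⟩ := hev
  refine ⟨min δ' 1, by positivity, ?_⟩
  intro h hh0 hhδ y hyK
  have hh1 : h < 1 := lt_of_lt_of_le hhδ (min_le_right _ _)
  have hhδ2 : h ∈ Metric.ball (0:ℝ) δ' ∩ Set.Ici 0 := by
    constructor
    · rw [Metric.mem_ball, Real.dist_eq, sub_zero, abs_of_nonneg hh0]
      exact lt_of_lt_of_le hhδ (min_le_left _ _)
    · exact hh0
  have hnet := htcov hyK
  simp only [Set.mem_iUnion, Metric.mem_ball] at hnet
  obtain ⟨z, hzt, hyz⟩ := hnet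
  have h1 : ‖S h (y - z)‖ ≤ M * ρ := by
    calc ‖S h (y - z)‖ ≤ ‖S h‖ * ‖y - z‖ := (S h).le_opNorm _
    _ ≤ M * ρ := by
        apply mul_le_mul (hM h hh0 hh1.le) ?_ (norm_nonneg _) (by linarith)
        rw [← dist_eq_norm]; exact hyz.le
  have h2 : ‖S h z - z‖ < ε/3 := hδ'' hhδ2 z hzt
  have h3 : ‖z - y‖ < ρ := by rw [norm_sub_rev, ← dist_eq_norm]; exact hyz
  have hdecomp : S h y - y = S h (y - z) + (S h z - z) + (z - y) := by
    simp only [map_sub]; abel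
  rw [hdecomp]
  have hρM : M * ρ + ρ = ε/3 := by
    rw [hρdef]; field_simp
  calc ‖S h (y - z) + (S h z - z) + (z - y)‖
      ≤ ‖S h (y - z)‖ + ‖S h z - z‖ + ‖z - y‖ := norm_add₃_le
  _ ≤ M * ρ + ε/3 + ρ := by linarith
  _ ≤ ε := by linarith


end helpers


set_option maxHeartbeats 1000000 in
/-- equicontinuity of a sequence of mild solutions whose initial
values form a relatively compact sequence, for a compact `C₀` semigroup. -/
theorem statement4
    {X : Type*} [NormedAddCommGroup X] [NormedSpace ℝ X] [CompleteSpace X]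
    {Λ : Type*} [MetricSpace Λ]
    (S : ℝ → X →L[ℝ] X)
    (hS0 : S 0 = 1)
    (hSadd : ∀ t s : ℝ, 0 ≤ t → 0 ≤ s → S (t + s) = (S t).comp (S s))
    (hScont : ∀ x : X, ContinuousOn (fun t => S t x) (Set.Ici (0:ℝ)))
    (hScomp : ∀ t : ℝ, 0 < t → ∀ B : Set X, Bornology.IsBounded B →
      IsCompact (closure (S t '' B)))
    (F : Λ → ℝ → X → X)
    (hFcont : ContinuousOn (fun p : Λ × ℝ × X => F p.1 p.2.1 p.2.2)
      {p : Λ × ℝ × X | 0 ≤ p.2.1})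
    (hF1 : ∀ (l : Λ) (x₀ : X), ∃ W ∈ nhds x₀, ∃ L : ℝ, 0 < L ∧
      ∀ x ∈ W, ∀ y ∈ W, ∀ t : ℝ, 0 ≤ t → ‖F l t x - F l t y‖ ≤ L * ‖x - y‖)
    (c : ℝ → ℝ) (hc : Continuous c) (hc0 : ∀ t : ℝ, 0 ≤ t → 0 ≤ c t)
    (hF2 : ∀ (l : Λ) (t : ℝ) (x : X), 0 ≤ t → ‖F l t x‖ ≤ c t * (1 + ‖x‖))
    (l : ℕ → Λ) (x : ℕ → X)
    (hx : IsCompact (closure (Set.range x)))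
    (u : ℕ → ℝ → X)
    (hu : ∀ n : ℕ, IsMildSol S (F (l n)) (u n) ∧ u n 0 = x n) :
    ∀ t : ℝ, 0 ≤ t → ∀ ε : ℝ, 0 < ε → ∃ δ : ℝ, 0 < δ ∧
      ∀ n : ℕ, ∀ t' : ℝ, 0 ≤ t' → |t' - t| < δ → ‖u n t' - u n t‖ ≤ ε := by
  intro t₀ ht₀ ε hε
  set T : ℝ := t₀ + 1 with hTdef
  have hT0 : (0:ℝ) ≤ T := by linarith
  have ht₀T : t₀ ≤ T := by linarith
  obtain ⟨M, hM1, hM⟩ := sg_opBound hScont T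
  have hM0 : (0:ℝ) < M := by linarith
  -- bound on initial data
  obtain ⟨B₀, hB₀⟩ : ∃ B₀ : ℝ, ∀ n, ‖x n‖ ≤ B₀ := by
    obtain ⟨C, hC⟩ := isBounded_iff_forall_norm_le.1 (hx.isBounded.subset subset_closure)
    exact ⟨C, fun n => hC _ (Set.mem_range_self n)⟩
  -- bound on c
  obtain ⟨Cc, hCc0, hCc⟩ : ∃ Cc : ℝ, 0 ≤ Cc ∧ ∀ r ∈ Set.Icc (0:ℝ) T, c r ≤ Cc := by
    obtain ⟨C, hC⟩ := IsCompact.exists_bound_of_continuousOn isCompact_Icc hc.continuousOn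
    exact ⟨max C 0, le_max_right _ _, fun r hr =>
      le_trans (le_trans (le_abs_self _) (hC r hr)) (le_max_left _ _)⟩
  set g : ℕ → ℝ → X := fun n r => F (l n) r (u n r) with hgdef
  have hgcont : ∀ n, ContinuousOn (g n) (Set.Ici (0:ℝ)) := by
    intro n
    have hmap : Set.MapsTo (fun r : ℝ => ((l n, r, u n r) : Λ × ℝ × X))
        (Set.Ici 0) {p : Λ × ℝ × X | 0 ≤ p.2.1} := fun r hr => hr
    exact hFcont.comp (continuousOn_const.prodMk
      ((continuousOn_id).prodMk (hu n).1.1)) hmap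
  have hψ := sg_jointCont (S := S) hScont
  -- continuity of the integrand
  have hICont : ∀ n : ℕ, ∀ b : ℝ, 0 ≤ b →
      ContinuousOn (fun r => S (b - r) (g n r)) (Set.Icc 0 b) := by
    intro n b hb
    have hmap : Set.MapsTo (fun r : ℝ => ((b - r, g n r) : ℝ × X))
        (Set.Icc 0 b) (Set.Ici (0:ℝ) ×ˢ Set.univ) := by
      rintro r ⟨hr0, hrb⟩
      exact ⟨by simp; linarith, Set.mem_univ _⟩
    exact hψ.comp ((continuousOn_const.sub continuousOn_id).prodMk
      ((hgcont n).mono (fun r hr => hr.1))) hmap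
  have hII : ∀ n : ℕ, ∀ b a a' : ℝ, 0 ≤ a → a ≤ a' → a' ≤ b →
      IntervalIntegrable (fun r => S (b - r) (g n r)) volume a a' := by
    intro n b a a' ha ha' ha'b
    have hb : (0:ℝ) ≤ b := by linarith
    apply ContinuousOn.intervalIntegrable
    apply (hICont n b hb).mono
    rw [Set.uIcc_of_le ha']
    intro r hr
    exact ⟨by linarith [hr.1], by linarith [hr.2]⟩
  -- translation identity
  have hseg : ∀ n : ℕ, ∀ a b : ℝ, 0 ≤ a → a ≤ b →
      u n b = S (b - a) (u n a) + ∫ r in a..b, S (b - r) (g n r) := by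
    intro n a b ha hab
    have hb : (0:ℝ) ≤ b := le_trans ha hab
    have hub := (hu n).1.2 b hb
    have hua := (hu n).1.2 a ha
    have hsplit : (∫ r in (0:ℝ)..b, S (b - r) (g n r)) =
        (∫ r in (0:ℝ)..a, S (b - r) (g n r)) + ∫ r in a..b, S (b - r) (g n r) :=
      (intervalIntegral.integral_add_adjacent_intervals
        (hII n b 0 a le_rfl ha hab) (hII n b a b ha hab le_rfl)).symm
    have hpull : S (b - a) (∫ r in (0:ℝ)..a, S (a - r) (g n r)) =
        ∫ r in (0:ℝ)..a, S (b - a) (S (a - r) (g n r)) :=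
      (ContinuousLinearMap.intervalIntegral_comp_comm _ (hII n a 0 a le_rfl ha le_rfl)).symm
    have hcongr : (∫ r in (0:ℝ)..a, S (b - a) (S (a - r) (g n r))) =
        ∫ r in (0:ℝ)..a, S (b - r) (g n r) := by
      apply intervalIntegral.integral_congr
      intro r hr
      rw [Set.uIcc_of_le ha] at hr
      have h1 : (0:ℝ) ≤ b - a := by linarith
      have h2 : (0:ℝ) ≤ a - r := by linarith [hr.2]
      have := hSadd (b - a) (a - r) h1 h2
      have heq : b - a + (a - r) = b - r := by ring
      rw [heq] at this
      simp only [this, ContinuousLinearMap.coe_comp', Function.comp_apply]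
    have hSb : S b (u n 0) = S (b - a) (S a (u n 0)) := by
      have := hSadd (b - a) a (by linarith) ha
      have heq : b - a + a = b := by ring
      rw [heq] at this
      rw [this]; rfl
    rw [hub, hsplit, hua, map_add, hSb, hpull, hcongr]
    abel
  -- interval integrability of norm of solution
  have hnormII : ∀ n : ℕ, ∀ a a' : ℝ, 0 ≤ a → a ≤ a' →
      IntervalIntegrable (fun r => ‖u n r‖) volume a a' := by
    intro n a a' ha ha'
    apply ContinuousOn.intervalIntegrable
    apply ((hu n).1.1.norm).mono
    rw [Set.uIcc_of_le ha']
    exact fun r hr => le_trans ha hr.1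
  -- key pointwise bound via the integral formula
  have hptw : ∀ n : ℕ, ∀ s : ℝ, ∀ r : ℝ, 0 ≤ r → r ≤ s → s ≤ T →
      ‖S (s - r) (g n r)‖ ≤ M * Cc + M * Cc * ‖u n r‖ := by
    intro n s r hr hrs hsT
    have h1 : ‖S (s - r) (g n r)‖ ≤ M * ‖g n r‖ := by
      calc ‖S (s - r) (g n r)‖ ≤ ‖S (s - r)‖ * ‖g n r‖ := (S _).le_opNorm _
      _ ≤ M * ‖g n r‖ := mul_le_mul_of_nonneg_right
          (hM _ (by linarith) (by linarith)) (norm_nonneg _)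
    have h2 : ‖g n r‖ ≤ c r * (1 + ‖u n r‖) := hF2 (l n) r (u n r) hr
    have h3 : c r * (1 + ‖u n r‖) ≤ Cc * (1 + ‖u n r‖) :=
      mul_le_mul_of_nonneg_right (hCc r ⟨hr, by linarith⟩)
        (by positivity)
    have := le_trans h2 h3
    calc ‖S (s - r) (g n r)‖ ≤ M * (Cc * (1 + ‖u n r‖)) :=
      le_trans h1 (mul_le_mul_of_nonneg_left this hM0.le)
    _ = M * Cc + M * Cc * ‖u n r‖ := by ring
  -- Gronwall: uniform bound R for solutions on [0, T]
  obtain ⟨R, hR0, hR⟩ : ∃ R : ℝ, 0 ≤ R ∧ ∀ n : ℕ, ∀ s : ℝ, 0 ≤ s → s ≤ T → ‖u n s‖ ≤ R := by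
    have hB₀0 : (0:ℝ) ≤ B₀ := le_trans (norm_nonneg (x 0)) (hB₀ 0)
    set K : ℝ := M * Cc + 1 with hKdef
    have hKpos : (0:ℝ) < K := by positivity
    set A : ℝ := M * B₀ + M * Cc * T + M * Cc with hAdef
    have hA0 : (0:ℝ) ≤ A := by positivity
    have key : ∀ n : ℕ, ∀ s : ℝ, 0 ≤ s → s ≤ T →
        ‖u n s‖ ≤ A + K * ‖∫ r in (0:ℝ)..s, ‖u n r‖‖ := by
      intro n s hs hsT
      have hform := (hu n).1.2 s hs
      rw [(hu n).2] at hform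
      have hIb : ‖∫ r in (0:ℝ)..s, S (s - r) (g n r)‖ ≤
          ∫ r in (0:ℝ)..s, (M * Cc + K * ‖u n r‖) := by
        calc ‖∫ r in (0:ℝ)..s, S (s - r) (g n r)‖
            ≤ ∫ r in (0:ℝ)..s, ‖S (s - r) (g n r)‖ :=
          intervalIntegral.norm_integral_le_integral_norm hs
        _ ≤ ∫ r in (0:ℝ)..s, (M * Cc + K * ‖u n r‖) := by
            apply intervalIntegral.integral_mono_on hs
            · exact (hII n s 0 s le_rfl hs le_rfl).norm
            · exact (_root_.intervalIntegrable_const).add ((hnormII n 0 s le_rfl hs).const_mul K)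
            · intro r hr
              have := hptw n s r hr.1 hr.2 hsT
              have hKK : M * Cc * ‖u n r‖ ≤ K * ‖u n r‖ :=
                mul_le_mul_of_nonneg_right (by rw [hKdef]; linarith) (norm_nonneg _)
              linarith
      have hsplit : (∫ r in (0:ℝ)..s, (M * Cc + K * ‖u n r‖)) =
          M * Cc * s + K * ∫ r in (0:ℝ)..s, ‖u n r‖ := by
        rw [intervalIntegral.integral_add _root_.intervalIntegrable_const
          ((hnormII n 0 s le_rfl hs).const_mul K),
          intervalIntegral.integral_const, intervalIntegral.integral_const_mul]
        simp [smul_eq_mul]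
        ring
      have hS1 : ‖S s (x n)‖ ≤ M * B₀ := by
        calc ‖S s (x n)‖ ≤ ‖S s‖ * ‖x n‖ := (S s).le_opNorm _
        _ ≤ M * B₀ := mul_le_mul (hM s hs hsT) (hB₀ n) (norm_nonneg _) hM0.le
      have h2 : K * (∫ r in (0:ℝ)..s, ‖u n r‖) ≤ K * ‖∫ r in (0:ℝ)..s, ‖u n r‖‖ :=
        mul_le_mul_of_nonneg_left (le_abs_self _) hKpos.le
      have hMCc : 0 ≤ M * Cc := by positivity
      have hMCs : M * Cc * s ≤ M * Cc * T := mul_le_mul_of_nonneg_left hsT hMCc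
      calc ‖u n s‖ = ‖S s (x n) + ∫ r in (0:ℝ)..s, S (s - r) (g n r)‖ := by rw [← hform]
      _ ≤ ‖S s (x n)‖ + ‖∫ r in (0:ℝ)..s, S (s - r) (g n r)‖ := norm_add_le _ _
      _ ≤ M * B₀ + (M * Cc * s + K * ∫ r in (0:ℝ)..s, ‖u n r‖) := by
          rw [← hsplit]; linarith
      _ ≤ A + K * ‖∫ r in (0:ℝ)..s, ‖u n r‖‖ := by
          rw [hAdef]; linarith
    refine ⟨A + K * gronwallBound 0 K A T, ?_, ?_⟩
    · -- nonneg
      have := gronwallBound_x0 (0:ℝ) K A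
      have hgb : (0:ℝ) ≤ gronwallBound 0 K A T := by
        rw [gronwallBound_of_K_ne_0 hKpos.ne']
        have h1 : (1:ℝ) ≤ Real.exp (K * T) := by
          rw [← Real.exp_zero]
          exact Real.exp_le_exp.2 (by positivity)
        have : (0:ℝ) ≤ A / K := by positivity
        nlinarith
      positivity
    · intro n s hs hsT
      set v : ℝ → ℝ := fun s => ∫ r in (0:ℝ)..s, ‖u n r‖ with hvdef
      have hvcont : ContinuousOn v (Set.Icc 0 T) := by
        have := continuousOn_primitive_interval'
          (μ := volume) (hnormII n 0 T le_rfl hT0) (by rw [Set.uIcc_of_le hT0]; exact ⟨le_rfl, hT0⟩)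
        rwa [Set.uIcc_of_le hT0] at this
      have hvder : ∀ r ∈ Set.Ico (0:ℝ) T, HasDerivWithinAt v (‖u n r‖) (Set.Ici r) r := by
        intro r hr
        apply intervalIntegral.integral_hasDerivWithinAt_right
          (hnormII n 0 r le_rfl hr.1) (t := Set.Ioi r)
        · refine ⟨Set.Ici 0, ?_, ?_⟩
          · exact Filter.mem_of_superset self_mem_nhdsWithin
              (fun z hz => le_trans hr.1 (le_of_lt hz))
          · exact ((hu n).1.1.norm).aestronglyMeasurable measurableSet_Ici
        · exact (((hu n).1.1.norm) r hr.1).mono (fun z hz => le_trans hr.1 (le_of_lt hz))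
      have hgron := norm_le_gronwallBound_of_norm_deriv_right_le (K := K) (δ := 0) (ε := A)
        hvcont hvder (by simp [hvdef]) ?_
      · have hvs := hgron s ⟨hs, hsT⟩
        rw [sub_zero] at hvs
        have hmono : gronwallBound 0 K A s ≤ gronwallBound 0 K A T := by
          rw [gronwallBound_of_K_ne_0 hKpos.ne']
          simp only
          have h1 : Real.exp (K * s) ≤ Real.exp (K * T) :=
            Real.exp_le_exp.2 (mul_le_mul_of_nonneg_left hsT hKpos.le)
          have h2 : (0:ℝ) ≤ A / K := by positivity
          nlinarith
        have hks := key n s hs hsT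
        have : K * ‖v s‖ ≤ K * gronwallBound 0 K A T :=
          mul_le_mul_of_nonneg_left (le_trans hvs hmono) hKpos.le
        linarith
      · intro r hr
        have := key n r hr.1 hr.2.le
        rw [Real.norm_eq_abs, abs_of_nonneg (norm_nonneg _)]
        have h2 : K * ‖∫ q in (0:ℝ)..r, ‖u n q‖‖ = K * ‖v r‖ := rfl
        linarith
  -- uniform bound on the integrand
  set Cstar : ℝ := M * Cc * (1 + R) + 1 with hCstardef
  have hCstar0 : (0:ℝ) < Cstar := by positivity
  have hptw2 : ∀ n : ℕ, ∀ b r : ℝ, 0 ≤ r → r ≤ b → b ≤ T →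
      ‖S (b - r) (g n r)‖ ≤ Cstar := by
    intro n b r hr hrb hbT
    have h1 := hptw n b r hr hrb hbT
    have h2 : ‖u n r‖ ≤ R := hR n r hr (by linarith)
    have h3 : M * Cc * ‖u n r‖ ≤ M * Cc * R :=
      mul_le_mul_of_nonneg_left h2 (by positivity)
    have : M * Cc + M * Cc * R ≤ Cstar := by rw [hCstardef]; nlinarith
    linarith
  have hIntBound : ∀ n : ℕ, ∀ a b : ℝ, 0 ≤ a → a ≤ b → b ≤ T →
      ‖∫ r in a..b, S (b - r) (g n r)‖ ≤ Cstar * (b - a) := by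
    intro n a b ha hab hbT
    have := intervalIntegral.norm_integral_le_of_norm_le_const
      (C := Cstar) (f := fun r => S (b - r) (g n r)) (a := a) (b := b) ?_
    · rwa [abs_of_nonneg (by linarith : (0:ℝ) ≤ b - a)] at this
    · intro r hr
      rw [Set.uIoc_of_le hab] at hr
      exact hptw2 n b r (le_trans ha hr.1.le) hr.2 hbT
  -- pointwise relative compactness
  have hcompact : ∀ σ : ℝ, 0 ≤ σ → σ ≤ T →
      IsCompact (closure (Set.range fun n => u n σ)) := by
    intro σ hσ hσT
    rcases eq_or_lt_of_le hσ with h0 | hpos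
    · have heq : (Set.range fun n => u n σ) = Set.range x := by
        ext z
        constructor
        · rintro ⟨n, rfl⟩
          exact ⟨n, by show x n = u n σ; rw [← h0, (hu n).2]⟩
        · rintro ⟨n, rfl⟩
          exact ⟨n, by show u n σ = x n; rw [← h0, (hu n).2]⟩
      rw [heq]; exact hx
    · apply TotallyBounded.isCompact_of_isClosed ?_ isClosed_closure
      rw [totallyBounded_closure, Metric.totallyBounded_iff]
      intro ε' hε'
      set η : ℝ := min σ (ε' / (2 * Cstar)) with hηdef
      have hη0 : 0 < η := lt_min hpos (by positivity)
      have hησ : η ≤ σ := min_le_left _ _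
      have hηε : Cstar * η ≤ ε' / 2 := by
        have : η ≤ ε' / (2 * Cstar) := min_le_right _ _
        calc Cstar * η ≤ Cstar * (ε' / (2 * Cstar)) :=
          mul_le_mul_of_nonneg_left this hCstar0.le
        _ = ε' / 2 := by field_simp
      have hKc : IsCompact (closure (S η '' Metric.closedBall 0 R)) :=
        hScomp η hη0 _ Metric.isBounded_closedBall
      obtain ⟨t, htfin, htcov⟩ := Metric.totallyBounded_iff.1 hKc.totallyBounded
        (ε'/4) (by positivity)
      refine ⟨t, htfin, ?_⟩
      rintro _ ⟨n, rfl⟩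
      have hseg' := hseg n (σ - η) σ (by linarith) (by linarith)
      have hηeq : σ - (σ - η) = η := by ring
      rw [hηeq] at hseg'
      have hmem : S η (u n (σ - η)) ∈ closure (S η '' Metric.closedBall 0 R) := by
        apply subset_closure
        exact ⟨u n (σ - η), by
          rw [Metric.mem_closedBall, dist_zero_right]
          exact hR n (σ - η) (by linarith) (by linarith), rfl⟩
      have := htcov hmem
      simp only [Set.mem_iUnion, Metric.mem_ball] at this
      obtain ⟨z, hzt, hdz⟩ := this
      have herr : ‖u n σ - S η (u n (σ - η))‖ ≤ ε' / 2 := by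
        rw [hseg']
        have : S η (u n (σ - η)) + (∫ r in (σ - η)..σ, S (σ - r) (g n r)) -
            S η (u n (σ - η)) = ∫ r in (σ - η)..σ, S (σ - r) (g n r) := by abel
        rw [this]
        have := hIntBound n (σ - η) σ (by linarith) (by linarith) hσT
        have heq2 : σ - (σ - η) = η := by ring
        rw [heq2] at this
        exact le_trans this hηε
      simp only [Set.mem_iUnion, Metric.mem_ball]
      refine ⟨z, hzt, ?_⟩
      calc dist (u n σ) z ≤ dist (u n σ) (S η (u n (σ - η))) + dist (S η (u n (σ - η))) z :=
        dist_triangle _ _ _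
      _ ≤ ε' / 2 + dist (S η (u n (σ - η))) z := by
          rw [dist_eq_norm]; linarith
      _ < ε' / 2 + ε' / 4 := by linarith
      _ < ε' := by linarith
  -- endgame
  set δ₀ : ℝ := min 1 (ε / (8 * Cstar)) with hδ₀def
  have hδ₀pos : 0 < δ₀ := lt_min one_pos (by positivity)
  have hδ₀1 : δ₀ ≤ 1 := min_le_left _ _
  have hδ₀ε : Cstar * δ₀ ≤ ε / 8 := by
    have : δ₀ ≤ ε / (8 * Cstar) := min_le_right _ _
    calc Cstar * δ₀ ≤ Cstar * (ε / (8 * Cstar)) := mul_le_mul_of_nonneg_left this hCstar0.le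
    _ = ε / 8 := by field_simp
  set σ : ℝ := max (t₀ - δ₀) 0 with hσdef
  have hσ0 : (0:ℝ) ≤ σ := le_max_right _ _
  have hσt₀ : σ ≤ t₀ := max_le (by linarith) ht₀
  have hσT : σ ≤ T := le_trans hσt₀ ht₀T
  have ht₀σ : t₀ - σ ≤ δ₀ := by
    rw [hσdef]
    rcases le_total (t₀ - δ₀) 0 with h | h
    · rw [max_eq_right h]; linarith
    · rw [max_eq_left h]; linarith
  have hKσ := hcompact σ hσ0 hσT
  set K₁ : Set X := (fun p : ℝ × X => S p.1 p.2) ''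
    (Set.Icc 0 (2*δ₀) ×ˢ closure (Set.range fun n => u n σ)) with hK₁def
  have hK₁ : IsCompact K₁ := by
    apply (isCompact_Icc.prod hKσ).image_of_continuousOn
    apply hψ.mono
    rintro ⟨r, y⟩ ⟨hr, -⟩
    exact ⟨hr.1, Set.mem_univ _⟩
  obtain ⟨δ₂, hδ₂pos, hδ₂⟩ := sg_unif hS0 hScont hK₁ (half_pos hε)
  refine ⟨min δ₀ δ₂, lt_min hδ₀pos hδ₂pos, ?_⟩
  intro n t' ht' hdist
  have hδδ₀ : min δ₀ δ₂ ≤ δ₀ := min_le_left _ _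
  have hδδ₂ : min δ₀ δ₂ ≤ δ₂ := min_le_right _ _
  have habs := abs_lt.1 hdist
  have ht'T : t' ≤ T := by rw [hTdef]; linarith [habs.2]
  have hσt' : σ ≤ t' := by
    apply max_le _ ht'
    linarith [habs.1]
  have e' := hseg n σ t' hσ0 hσt'
  have e₀ := hseg n σ t₀ hσ0 hσt₀
  have hI' : ‖∫ r in σ..t', S (t' - r) (g n r)‖ ≤ Cstar * (t' - σ) :=
    hIntBound n σ t' hσ0 hσt' ht'T
  have hI₀ : ‖∫ r in σ..t₀, S (t₀ - r) (g n r)‖ ≤ Cstar * (t₀ - σ) :=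
    hIntBound n σ t₀ hσ0 hσt₀ ht₀T
  set w : X := u n σ with hwdef
  have hwK : w ∈ closure (Set.range fun n => u n σ) :=
    subset_closure (Set.mem_range_self n)
  have ht'σ : t' - σ ≤ 2 * δ₀ := by
    have : t' ≤ t₀ + min δ₀ δ₂ := by linarith [habs.2]
    linarith
  have hsg : ‖S (t' - σ) w - S (t₀ - σ) w‖ ≤ ε / 2 := by
    rcases le_total t' t₀ with hc | hc
    · -- t' ≤ t₀, h = t₀ - t'
      have hK1mem : S (t' - σ) w ∈ K₁ := by
        have hmemI : t' - σ ∈ Set.Icc (0:ℝ) (2*δ₀) := ⟨by linarith, by linarith⟩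
        exact ⟨(t' - σ, w), ⟨hmemI, hwK⟩, rfl⟩
      have hcomp : S (t₀ - σ) w = S (t₀ - t') (S (t' - σ) w) := by
        have := hSadd (t₀ - t') (t' - σ) (by linarith) (by linarith)
        have heq : t₀ - t' + (t' - σ) = t₀ - σ := by ring
        rw [heq] at this
        rw [this]; rfl
      rw [norm_sub_rev, hcomp]
      exact hδ₂ (t₀ - t') (by linarith) (by linarith [habs.1]) _ hK1mem
    · -- t₀ ≤ t'
      have hK1mem : S (t₀ - σ) w ∈ K₁ := by
        have hmemI : t₀ - σ ∈ Set.Icc (0:ℝ) (2*δ₀) := ⟨by linarith, by linarith⟩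
        exact ⟨(t₀ - σ, w), ⟨hmemI, hwK⟩, rfl⟩
      have hcomp : S (t' - σ) w = S (t' - t₀) (S (t₀ - σ) w) := by
        have := hSadd (t' - t₀) (t₀ - σ) (by linarith) (by linarith)
        have heq : t' - t₀ + (t₀ - σ) = t' - σ := by ring
        rw [heq] at this
        rw [this]; rfl
      rw [hcomp]
      exact hδ₂ (t' - t₀) (by linarith) (by linarith [habs.2]) _ hK1mem
  have hdecomp : u n t' - u n t₀ = (S (t' - σ) w - S (t₀ - σ) w) +
      (∫ r in σ..t', S (t' - r) (g n r)) - (∫ r in σ..t₀, S (t₀ - r) (g n r)) := by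
    rw [e', e₀]
    abel
  have hE1 : Cstar * (t' - σ) ≤ Cstar * (2 * δ₀) :=
    mul_le_mul_of_nonneg_left ht'σ hCstar0.le
  have hE2 : Cstar * (t₀ - σ) ≤ Cstar * δ₀ :=
    mul_le_mul_of_nonneg_left ht₀σ hCstar0.le
  calc ‖u n t' - u n t₀‖
      = ‖(S (t' - σ) w - S (t₀ - σ) w) +
        (∫ r in σ..t', S (t' - r) (g n r)) - (∫ r in σ..t₀, S (t₀ - r) (g n r))‖ := by
        rw [hdecomp]
  _ ≤ ‖(S (t' - σ) w - S (t₀ - σ) w) + (∫ r in σ..t', S (t' - r) (g n r))‖ +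
      ‖∫ r in σ..t₀, S (t₀ - r) (g n r)‖ := norm_sub_le _ _
  _ ≤ ‖S (t' - σ) w - S (t₀ - σ) w‖ + ‖∫ r in σ..t', S (t' - r) (g n r)‖ +
      ‖∫ r in σ..t₀, S (t₀ - r) (g n r)‖ := by
        have := norm_add_le (S (t' - σ) w - S (t₀ - σ) w) (∫ r in σ..t', S (t' - r) (g n r))
        linarith
  _ ≤ ε / 2 + Cstar * (2 * δ₀) + Cstar * δ₀ := by
        have q1 := le_trans hI' hE1
        have q2 := le_trans hI₀ hE2
        exact add_le_add (add_le_add hsg q1) q2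
  _ ≤ ε / 2 + 2 * (ε / 8) + ε / 8 := by linarith
  _ ≤ ε := by linarith
end

section
/- Let X be a real Banach space, {S(t)}_{t≥0} a compact C0 semigroup on X, Λ a metric space, and F:Λ×[0,∞)×X→X a continuous map satisfying conditions (F1) and (F2). Let λₙ→λ₀ in Λ and xₙ→x₀ in X, for each n≥1 let uₙ be a mild solution of u̇=−Au+F(λₙ,t,u) with uₙ(0)=xₙ, and let u₀ be a mild solution of u̇=−Au+F(λ₀,t,u) with u₀(0)=x₀ which is unique in the sense that every mild solution for the parameter λ₀ with initial value x₀ coincides with u₀. Then uₙ(t)→u₀(t) as n→∞, uniformly for t in bounded intervals of [0,∞). -/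
open MeasureTheory Set Filter Topology Bornology intervalIntegral Real
open scoped Pointwise

theorem my_gron {φ : ℝ → ℝ} {T A K : ℝ} (hK : 0 < K) (hφc : Continuous φ)
    (hφ0 : ∀ t, 0 ≤ φ t)
    (hineq : ∀ t ∈ Icc (0:ℝ) T, φ t ≤ A + K * ∫ s in (0:ℝ)..t, φ s) :
    ∀ t ∈ Icc (0:ℝ) T, φ t ≤ A * exp (K * T) := by
  intro t ht
  have hA : 0 ≤ A := by
    have h0 : (0:ℝ) ∈ Icc (0:ℝ) T := ⟨le_refl _, ht.1.trans ht.2⟩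
    have := hineq 0 h0
    simp only [intervalIntegral.integral_same, mul_zero, add_zero] at this
    exact (hφ0 0).trans this
  set ψ : ℝ → ℝ := fun t => ∫ s in (0:ℝ)..t, φ s with hψ
  have hψd : ∀ b : ℝ, HasDerivAt ψ (φ b) b := fun b =>
    (hφc.integral_hasStrictDerivAt 0 b).hasDerivAt
  have hψ0 : ∀ s ∈ Icc (0:ℝ) T, 0 ≤ ψ s := fun s hs =>
    intervalIntegral.integral_nonneg hs.1 (fun x _ => hφ0 x)
  have key : ∀ s ∈ Icc (0:ℝ) T, ‖ψ s‖ ≤ gronwallBound 0 K A (s - 0) := by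
    apply norm_le_gronwallBound_of_norm_deriv_right_le
    · exact (continuous_primitive (fun a b => hφc.intervalIntegrable a b) 0).continuousOn
    · exact fun x _ => (hψd x).hasDerivWithinAt
    · simp [hψ]
    · intro x hx
      rw [Real.norm_eq_abs, abs_of_nonneg (hφ0 x), Real.norm_eq_abs,
        abs_of_nonneg (hψ0 x ⟨hx.1, hx.2.le⟩)]
      have := hineq x ⟨hx.1, hx.2.le⟩
      linarith
  have hψle := key t ht
  rw [Real.norm_eq_abs, abs_of_nonneg (hψ0 t ht),
    gronwallBound_of_K_ne_0 hK.ne'] at hψle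
  simp only [] at hψle
  have h1 : φ t ≤ A + K * ψ t := hineq t ht
  have h2 : K * ψ t ≤ A * exp (K * (t - 0)) - A := by
    have h3 := mul_le_mul_of_nonneg_left hψle hK.le
    have h4 : K * (A / K) = A := by field_simp
    simp only [zero_mul, zero_add] at h3
    rw [← mul_assoc, h4, mul_sub, mul_one] at h3
    linarith
  have h5 : exp (K * (t - 0)) ≤ exp (K * T) := by
    apply exp_le_exp.2
    have := ht.2
    nlinarith
  nlinarith [mul_le_mul_of_nonneg_left h5 hA]

theorem my_opbound {X : Type*} [NormedAddCommGroup X] [NormedSpace ℝ X] [CompleteSpace X]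
    (S : ℝ → X →L[ℝ] X)
    (hScont : ∀ x : X, ContinuousOn (fun t => S t x) (Set.Ici (0:ℝ))) (t₀ : ℝ) :
    ∃ M : ℝ, 1 ≤ M ∧ ∀ τ ∈ Icc (0:ℝ) t₀, ‖S τ‖ ≤ M := by
  obtain ⟨C, hC⟩ := banach_steinhaus (g := fun τ : Icc (0:ℝ) t₀ => S τ.1) (fun x => by
    obtain ⟨C, hC⟩ := isCompact_Icc.exists_bound_of_continuousOn
      ((hScont x).mono (Icc_subset_Ici_self (a := t₀) (b := 0)))
    exact ⟨C, fun τ => hC τ.1 τ.2⟩)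
  exact ⟨max C 1, le_max_right _ _, fun τ hτ => le_trans (hC ⟨τ, hτ⟩) (le_max_left _ _)⟩

theorem my_jointcont {X : Type*} [NormedAddCommGroup X] [NormedSpace ℝ X] [CompleteSpace X]
    (S : ℝ → X →L[ℝ] X)
    (hScont : ∀ x : X, ContinuousOn (fun t => S t x) (Set.Ici (0:ℝ)))
    {t₀ M : ℝ} (hM1 : 1 ≤ M) (hM : ∀ τ ∈ Icc (0:ℝ) t₀, ‖S τ‖ ≤ M) :
    ContinuousOn (fun p : ℝ × X => S p.1 p.2) (Icc (0:ℝ) t₀ ×ˢ (univ : Set X)) := by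
  rintro ⟨τ₀, y₀⟩ ⟨hτ₀, -⟩
  rw [Metric.continuousWithinAt_iff]
  intro ε hε
  have hM0 : 0 < M := lt_of_lt_of_le one_pos hM1
  obtain ⟨δ₁, hδ₁, h1⟩ := (Metric.continuousWithinAt_iff.1
    ((hScont y₀) τ₀ (hτ₀.1 : (0:ℝ) ≤ τ₀))) (ε/2) (by positivity)
  refine ⟨min δ₁ (ε/(2*M)), by positivity, ?_⟩
  rintro ⟨τ, y⟩ ⟨hτ, -⟩ hd
  rw [Prod.dist_eq, max_lt_iff] at hd
  obtain ⟨hdτ, hdy⟩ := hd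
  have e1 : dist (S τ y₀) (S τ₀ y₀) < ε/2 := h1 (hτ.1 : (0:ℝ) ≤ τ)
    (lt_of_lt_of_le hdτ (min_le_left _ _))
  have e2 : dist (S τ y) (S τ y₀) < ε/2 := by
    rw [dist_eq_norm, ← map_sub]
    calc ‖S τ (y - y₀)‖ ≤ ‖S τ‖ * ‖y - y₀‖ := (S τ).le_opNorm _
    _ ≤ M * ‖y - y₀‖ := by
        apply mul_le_mul_of_nonneg_right (hM τ hτ) (norm_nonneg _)
    _ < M * (ε/(2*M)) := by
        apply mul_lt_mul_of_pos_left _ hM0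
        rw [← dist_eq_norm]
        exact lt_of_lt_of_le hdy (min_le_right _ _)
    _ = ε/2 := by field_simp
  calc dist (S τ y) (S τ₀ y₀) ≤ dist (S τ y) (S τ y₀) + dist (S τ y₀) (S τ₀ y₀) :=
        dist_triangle _ _ _
  _ < ε/2 + ε/2 := add_lt_add e2 e1
  _ = ε := by ring

set_option maxHeartbeats 2000000 in
/-- continuous dependence: if `λₙ → λ₀`, `xₙ → x₀`, `uₙ` are mild
solutions for `(λₙ, xₙ)` and `u₀` is the unique mild solution for `(λ₀, x₀)`,
then `uₙ → u₀` uniformly on bounded intervals. -/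
theorem statement6
    {X : Type*} [NormedAddCommGroup X] [NormedSpace ℝ X] [CompleteSpace X]
    {Λ : Type*} [MetricSpace Λ]
    (S : ℝ → X →L[ℝ] X)
    (hS0 : S 0 = 1)
    (hSadd : ∀ t s : ℝ, 0 ≤ t → 0 ≤ s → S (t + s) = (S t).comp (S s))
    (hScont : ∀ x : X, ContinuousOn (fun t => S t x) (Set.Ici (0:ℝ)))
    (hScomp : ∀ t : ℝ, 0 < t → ∀ B : Set X, Bornology.IsBounded B →
      IsCompact (closure (S t '' B)))
    (F : Λ → ℝ → X → X)
    (hFcont : ContinuousOn (fun p : Λ × ℝ × X => F p.1 p.2.1 p.2.2)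
      {p : Λ × ℝ × X | 0 ≤ p.2.1})
    (hF1 : ∀ (l : Λ) (x₀ : X), ∃ W ∈ nhds x₀, ∃ L : ℝ, 0 < L ∧
      ∀ x ∈ W, ∀ y ∈ W, ∀ t : ℝ, 0 ≤ t → ‖F l t x - F l t y‖ ≤ L * ‖x - y‖)
    (c : ℝ → ℝ) (hc : Continuous c) (hc0 : ∀ t : ℝ, 0 ≤ t → 0 ≤ c t)
    (hF2 : ∀ (l : Λ) (t : ℝ) (x : X), 0 ≤ t → ‖F l t x‖ ≤ c t * (1 + ‖x‖))
    (l : ℕ → Λ) (l₀ : Λ) (hl : Filter.Tendsto l Filter.atTop (nhds l₀))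
    (x : ℕ → X) (x₀ : X) (hx : Filter.Tendsto x Filter.atTop (nhds x₀))
    (u : ℕ → ℝ → X)
    (hu : ∀ n : ℕ, IsMildSol S (F (l n)) (u n) ∧ u n 0 = x n)
    (u₀ : ℝ → X)
    (hu₀ : IsMildSol S (F l₀) u₀ ∧ u₀ 0 = x₀)
    (huniq : ∀ v : ℝ → X, IsMildSol S (F l₀) v → v 0 = x₀ →
      ∀ t : ℝ, 0 ≤ t → v t = u₀ t) :
    ∀ t₀ : ℝ, 0 < t₀ →
      TendstoUniformlyOn (fun n t => u n t) u₀ Filter.atTop (Set.Icc (0:ℝ) t₀) := by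
  intro t₀ ht₀
  obtain ⟨M, hM1, hM⟩ := my_opbound S hScont t₀
  have hM0 : (0:ℝ) < M := lt_of_lt_of_le one_pos hM1
  have hjoint := my_jointcont S hScont hM1 hM
  -- regularized solutions, continuous on all of ℝ
  set v : ℕ → ℝ → X := fun n t => u n (max t 0) with hvdef
  set v₀ : ℝ → X := fun t => u₀ (max t 0) with hv₀def
  -- basic facts about mild solutions composed with max
  have hmildv : ∀ (lam : Λ) (w : ℝ → X), IsMildSol S (F lam) w →
      Continuous (fun t => w (max t 0)) ∧
      ∀ t : ℝ, 0 ≤ t → w (max t 0) =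
        S t (w 0) + ∫ s in (0:ℝ)..t, S (t - s) (F lam s (w (max s 0))) := by
    intro lam w hw
    constructor
    · exact hw.1.comp_continuous (continuous_id.max continuous_const)
        (fun x => mem_Ici.2 (le_max_right _ _))
    · intro t ht
      rw [max_eq_left ht, hw.2 t ht]
      congr 1
      apply intervalIntegral.integral_congr
      intro s hs
      rw [uIcc_of_le ht] at hs
      simp only [max_eq_left hs.1]
  have hvc : ∀ n, Continuous (v n) := fun n => (hmildv (l n) (u n) (hu n).1).1
  have hv₀c : Continuous v₀ := (hmildv l₀ u₀ hu₀.1).1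
  have hveq : ∀ n (t : ℝ), 0 ≤ t → v n t = u n t := by
    intro n t ht; simp only [hvdef, max_eq_left ht]
  have hv₀eq : ∀ t : ℝ, 0 ≤ t → v₀ t = u₀ t := by
    intro t ht; simp only [hv₀def, max_eq_left ht]
  have hvmild : ∀ n (t : ℝ), 0 ≤ t →
      v n t = S t (v n 0) + ∫ s in (0:ℝ)..t, S (t - s) (F (l n) s (v n s)) := by
    intro n t ht
    have := (hmildv (l n) (u n) (hu n).1).2 t ht
    simp only [hvdef]
    convert this using 3
    simp
  have hv₀mild : ∀ t : ℝ, 0 ≤ t →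
      v₀ t = S t (v₀ 0) + ∫ s in (0:ℝ)..t, S (t - s) (F l₀ s (v₀ s)) := by
    intro t ht
    have := (hmildv l₀ u₀ hu₀.1).2 t ht
    simp only [hv₀def]
    convert this using 3
    simp
  have hvn0 : ∀ n, v n 0 = x n := by
    intro n; rw [hveq n 0 le_rfl, (hu n).2]
  have hv₀0 : v₀ 0 = x₀ := by rw [hv₀eq 0 le_rfl, hu₀.2]
  -- continuity and integrability of integrands
  have hFcomp : ∀ (lam : Λ) (w : ℝ → X), Continuous w →
      ContinuousOn (fun s => F lam s (w s)) (Ici (0:ℝ)) := by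
    intro lam w hwc
    have : (fun s => F lam s (w s)) =
        (fun p : Λ × ℝ × X => F p.1 p.2.1 p.2.2) ∘ (fun s => (lam, s, w s)) := rfl
    rw [this]
    apply hFcont.comp (Continuous.continuousOn
      (continuous_const.prodMk (continuous_id.prodMk hwc)))
    intro s hs
    exact hs
  have hintc : ∀ (lam : Λ) (w : ℝ → X), Continuous w → ∀ t ∈ Icc (0:ℝ) t₀,
      ContinuousOn (fun s => S (t - s) (F lam s (w s))) (Icc (0:ℝ) t) := by
    intro lam w hwc t ht
    have : (fun s => S (t - s) (F lam s (w s))) =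
        (fun p : ℝ × X => S p.1 p.2) ∘ (fun s => (t - s, F lam s (w s))) := rfl
    rw [this]
    apply hjoint.comp
    · apply ContinuousOn.prodMk
      · exact (continuous_const.sub continuous_id).continuousOn
      · exact (hFcomp lam w hwc).mono (Icc_subset_Ici_self)
    · intro s hs
      obtain ⟨hs1, hs2⟩ := hs
      obtain ⟨ht1, ht2⟩ := ht
      refine Set.mem_prod.2 ⟨Set.mem_Icc.2 ⟨?_, ?_⟩, mem_univ _⟩ <;>
        · show _ ≤ _
          simp only []
          linarith
  have hinti : ∀ (lam : Λ) (w : ℝ → X), Continuous w → ∀ t ∈ Icc (0:ℝ) t₀,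
      ∀ a b : ℝ, a ∈ Icc (0:ℝ) t → b ∈ Icc (0:ℝ) t →
      IntervalIntegrable (fun s => S (t - s) (F lam s (w s))) volume a b := by
    intro lam w hwc t ht a b ha hb
    exact ((hintc lam w hwc t ht).mono (uIcc_subset_Icc ha hb)).intervalIntegrable
  -- uniform bound on initial data
  have hC₀ : IsCompact (insert x₀ (Set.range x)) := hx.isCompact_insert_range
  obtain ⟨Xs, hXs⟩ : ∃ Xs : ℝ, ∀ y ∈ insert x₀ (Set.range x), ‖y‖ ≤ Xs :=
    isBounded_iff_forall_norm_le.1 hC₀.isBounded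
  have hXs0 : 0 ≤ Xs := le_trans (norm_nonneg x₀) (hXs x₀ (mem_insert _ _))
  -- bound on c
  obtain ⟨c₁, hc₁pos, hc₁⟩ : ∃ c₁ : ℝ, 0 < c₁ ∧ ∀ s ∈ Icc (0:ℝ) t₀, c s ≤ c₁ := by
    obtain ⟨C, hC⟩ := isCompact_Icc.exists_bound_of_continuousOn
      (hc.continuousOn (s := Icc (0:ℝ) t₀))
    exact ⟨max C 1, lt_of_lt_of_le one_pos (le_max_right _ _),
      fun s hs => le_trans (le_trans (le_abs_self _) (hC s hs)) (le_max_left _ _)⟩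
  -- uniform a priori bound on solutions
  set R : ℝ := (M * Xs + M * c₁ * t₀) * exp (M * c₁ * t₀) with hRdef
  have hR0 : 0 ≤ R := by positivity
  have hRbound : ∀ (lam : Λ) (w : ℝ → X), Continuous w →
      (∀ t : ℝ, 0 ≤ t → w t = S t (w 0) + ∫ s in (0:ℝ)..t, S (t - s) (F lam s (w s))) →
      ‖w 0‖ ≤ Xs → ∀ t ∈ Icc (0:ℝ) t₀, ‖w t‖ ≤ R := by
    intro lam w hwc hweq hw0
    have hφc : Continuous (fun s => ‖w s‖) := hwc.norm
    have key : ∀ t ∈ Icc (0:ℝ) t₀,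
        ‖w t‖ ≤ (M * Xs + M * c₁ * t₀) + (M * c₁) * ∫ s in (0:ℝ)..t, ‖w s‖ := by
      intro t ht
      rw [hweq t ht.1]
      have h1 : ‖S t (w 0)‖ ≤ M * Xs := by
        calc ‖S t (w 0)‖ ≤ ‖S t‖ * ‖w 0‖ := (S t).le_opNorm _
        _ ≤ M * Xs := mul_le_mul (hM t ht) hw0 (norm_nonneg _) (by linarith)
      have hgint : IntervalIntegrable (fun s => M * c₁ + M * c₁ * ‖w s‖) volume 0 t :=
        (continuous_const.add (continuous_const.mul hφc)).intervalIntegrable _ _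
      have hae : ∀ᵐ s ∂(volume.restrict (Set.uIoc (0:ℝ) t)),
          ‖S (t - s) (F lam s (w s))‖ ≤ M * c₁ + M * c₁ * ‖w s‖ := by
        filter_upwards [ae_restrict_mem measurableSet_uIoc] with s hs
        rw [uIoc_of_le ht.1] at hs
        have hs1 : (0:ℝ) ≤ s := hs.1.le
        have hs2 : s ≤ t := hs.2
        have hsI : s ∈ Icc (0:ℝ) t₀ := ⟨hs1, hs2.trans ht.2⟩
        have hts : t - s ∈ Icc (0:ℝ) t₀ := ⟨by linarith, by linarith [ht.2]⟩
        calc ‖S (t - s) (F lam s (w s))‖ ≤ ‖S (t - s)‖ * ‖F lam s (w s)‖ :=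
              (S (t - s)).le_opNorm _
        _ ≤ M * (c₁ * (1 + ‖w s‖)) := by
            apply mul_le_mul (hM _ hts) ?_ (norm_nonneg _) hM0.le
            calc ‖F lam s (w s)‖ ≤ c s * (1 + ‖w s‖) := hF2 lam s (w s) hs1
            _ ≤ c₁ * (1 + ‖w s‖) := by
                apply mul_le_mul_of_nonneg_right (hc₁ s hsI)
                positivity
        _ = M * c₁ + M * c₁ * ‖w s‖ := by ring
      have h2 : ‖∫ s in (0:ℝ)..t, S (t - s) (F lam s (w s))‖ ≤
          ∫ s in (0:ℝ)..t, (M * c₁ + M * c₁ * ‖w s‖) := by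
        refine le_trans (intervalIntegral.norm_integral_le_abs_of_norm_le hae hgint) ?_
        rw [abs_of_nonneg]
        apply intervalIntegral.integral_nonneg ht.1
        intro s hs
        nlinarith [mul_pos hM0 hc₁pos, mul_nonneg (mul_pos hM0 hc₁pos).le (norm_nonneg (w s))]
      have h3 : ∫ s in (0:ℝ)..t, (M * c₁ + M * c₁ * ‖w s‖) =
          M * c₁ * t + M * c₁ * ∫ s in (0:ℝ)..t, ‖w s‖ := by
        rw [intervalIntegral.integral_add (f := fun _ => M * c₁) (g := fun s => M * c₁ * ‖w s‖) (intervalIntegrable_const)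
          ((continuous_const.mul hφc).intervalIntegrable _ _),
          intervalIntegral.integral_const, intervalIntegral.integral_const_mul]
        simp [smul_eq_mul]
        ring
      have h4 : M * c₁ * t ≤ M * c₁ * t₀ := by
        apply mul_le_mul_of_nonneg_left ht.2 (by positivity)
      rw [h3] at h2
      calc ‖S t (w 0) + ∫ s in (0:ℝ)..t, S (t - s) (F lam s (w s))‖ ≤
            ‖S t (w 0)‖ + ‖∫ s in (0:ℝ)..t, S (t - s) (F lam s (w s))‖ := norm_add_le _ _
      _ ≤ (M * Xs + M * c₁ * t₀) + (M * c₁) * ∫ s in (0:ℝ)..t, ‖w s‖ := by linarith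
    exact my_gron (by positivity) hφc (fun s => norm_nonneg _) key
  -- bound on F along solutions
  set CF : ℝ := c₁ * (1 + R) with hCFdef
  have hCF0 : 0 < CF := by positivity
  have hFb : ∀ (lam : Λ) (w : ℝ → X), (∀ t ∈ Icc (0:ℝ) t₀, ‖w t‖ ≤ R) →
      ∀ s ∈ Icc (0:ℝ) t₀, ‖F lam s (w s)‖ ≤ CF := by
    intro lam w hwR s hs
    calc ‖F lam s (w s)‖ ≤ c s * (1 + ‖w s‖) := hF2 lam s (w s) hs.1
    _ ≤ c₁ * (1 + R) := by
        apply mul_le_mul (hc₁ s hs) (by linarith [hwR s hs]) (by positivity) hc₁pos.le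
  -- the compact set Z of semigroup orbit points
  set Z : Set X := (fun p : ℝ × X => S p.1 p.2) '' (Icc (0:ℝ) t₀ ×ˢ insert x₀ (Set.range x))
    with hZdef
  have hZcomp : IsCompact Z :=
    (isCompact_Icc.prod hC₀).image_of_continuousOn
      (hjoint.mono (prod_mono_right (subset_univ _)))
  set R₂ : ℝ := M * CF * t₀ with hR₂def
  -- decomposition of solutions
  have hdecomp : ∀ h : ℝ, 0 < h → ∀ (lam : Λ) (w : ℝ → X), Continuous w →
      (∀ t : ℝ, 0 ≤ t → w t = S t (w 0) + ∫ s in (0:ℝ)..t, S (t - s) (F lam s (w s))) →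
      w 0 ∈ insert x₀ (Set.range x) → ∀ t ∈ Icc (0:ℝ) t₀,
      ∃ z ∈ Z, ∃ q ∈ closure (S h '' Metric.closedBall (0:X) R₂),
        ‖w t - (z + q)‖ ≤ M * CF * h := by
    intro h hh lam w hwc hweq hw0 t ht
    have hwR : ∀ s ∈ Icc (0:ℝ) t₀, ‖w s‖ ≤ R := hRbound lam w hwc hweq (hXs _ hw0)
    have hFbw : ∀ s ∈ Icc (0:ℝ) t₀, ‖F lam s (w s)‖ ≤ CF := hFb lam w hwR
    have hR₂0 : 0 ≤ R₂ := mul_nonneg (mul_nonneg hM0.le hCF0.le) ht₀.le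
    have hMCF : 0 ≤ M * CF := mul_nonneg hM0.le hCF0.le
    have hzmem : S t (w 0) ∈ Z := ⟨(t, w 0), ⟨ht, hw0⟩, rfl⟩
    have hbnd : ∀ a b : ℝ, a ∈ Icc (0:ℝ) t → b ∈ Icc (0:ℝ) t → a ≤ b →
        ‖∫ s in a..b, S (t - s) (F lam s (w s))‖ ≤ M * CF * (b - a) := by
      intro a b ha hb hab
      refine le_trans (intervalIntegral.norm_integral_le_of_norm_le_const (C := M * CF) ?_) ?_
      · intro s hs
        rw [uIoc_of_le hab] at hs
        have hs1 : (0:ℝ) ≤ s := le_trans ha.1 hs.1.le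
        have hs2 : s ≤ t := le_trans hs.2 hb.2
        have hsI : s ∈ Icc (0:ℝ) t₀ := ⟨hs1, hs2.trans ht.2⟩
        have htsI : t - s ∈ Icc (0:ℝ) t₀ := ⟨by linarith, by linarith [ht.2]⟩
        calc ‖S (t - s) (F lam s (w s))‖ ≤ ‖S (t - s)‖ * ‖F lam s (w s)‖ :=
              (S (t - s)).le_opNorm _
        _ ≤ M * CF := mul_le_mul (hM _ htsI) (hFbw s hsI) (norm_nonneg _) hM0.le
      · rw [abs_of_nonneg (by linarith)]
    by_cases hth : t ≤ h
    · refine ⟨S t (w 0), hzmem, 0,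
        subset_closure ⟨0, Metric.mem_closedBall_self hR₂0, map_zero _⟩, ?_⟩
      rw [hweq t ht.1]
      have heq : S t (w 0) + (∫ s in (0:ℝ)..t, S (t - s) (F lam s (w s))) -
          (S t (w 0) + 0) = ∫ s in (0:ℝ)..t, S (t - s) (F lam s (w s)) := by abel
      rw [heq]
      refine le_trans (hbnd 0 t ⟨le_rfl, ht.1⟩ ⟨ht.1, le_rfl⟩ ht.1) ?_
      rw [sub_zero]
      exact mul_le_mul_of_nonneg_left hth hMCF
    · push_neg at hth
      have hth0 : (0:ℝ) ≤ t - h := by linarith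
      have hthI : t - h ∈ Icc (0:ℝ) t₀ := ⟨hth0, by linarith [ht.2]⟩
      have hint1 := hinti lam w hwc t ht 0 (t - h) ⟨le_rfl, ht.1⟩ ⟨hth0, by linarith⟩
      have hint2 := hinti lam w hwc t ht (t - h) t ⟨hth0, by linarith⟩ ⟨ht.1, le_rfl⟩
      have hsplit := intervalIntegral.integral_add_adjacent_intervals hint1 hint2
      set inner : X := ∫ s in (0:ℝ)..(t - h), S (t - h - s) (F lam s (w s)) with hinnerdef
      have hinnernorm : ‖inner‖ ≤ R₂ := by
        rw [hinnerdef]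
        refine le_trans (intervalIntegral.norm_integral_le_of_norm_le_const
          (C := M * CF) ?_) ?_
        · intro s hs
          rw [uIoc_of_le hth0] at hs
          have hs1 : (0:ℝ) ≤ s := hs.1.le
          have hsI : s ∈ Icc (0:ℝ) t₀ := ⟨hs1, le_trans hs.2 hthI.2⟩
          have htsI : t - h - s ∈ Icc (0:ℝ) t₀ :=
            ⟨by linarith [hs.2], by linarith [hthI.2, hs.1]⟩
          calc ‖S (t - h - s) (F lam s (w s))‖ ≤ ‖S (t - h - s)‖ * ‖F lam s (w s)‖ :=
                (S (t - h - s)).le_opNorm _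
          _ ≤ M * CF := mul_le_mul (hM _ htsI) (hFbw s hsI) (norm_nonneg _) hM0.le
        · rw [sub_zero, abs_of_nonneg hth0, hR₂def]
          exact mul_le_mul_of_nonneg_left (by linarith [ht.2]) hMCF
      have hmid : (∫ s in (0:ℝ)..(t - h), S (t - s) (F lam s (w s))) = S h inner := by
        have hcongr : EqOn (fun s => S (t - s) (F lam s (w s)))
            (fun s => S h (S (t - h - s) (F lam s (w s)))) (uIcc (0:ℝ) (t - h)) := by
          intro s hs
          rw [uIcc_of_le hth0] at hs
          have harg : t - s = h + (t - h - s) := by ring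
          simp only [harg, hSadd h (t - h - s) hh.le (by linarith [hs.2])]
          rfl
        rw [intervalIntegral.integral_congr hcongr, hinnerdef,
          ← ContinuousLinearMap.intervalIntegral_comp_comm]
        exact hinti lam w hwc (t - h) hthI 0 (t - h) ⟨le_rfl, hth0⟩ ⟨hth0, le_rfl⟩
      refine ⟨S t (w 0), hzmem, S h inner,
        subset_closure ⟨inner, mem_closedBall_zero_iff.2 hinnernorm, rfl⟩, ?_⟩
      rw [hweq t ht.1, ← hsplit, hmid]
      have heq : S t (w 0) + (S h inner + ∫ s in (t - h)..t, S (t - s) (F lam s (w s))) -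
          (S t (w 0) + S h inner) = ∫ s in (t - h)..t, S (t - s) (F lam s (w s)) := by abel
      rw [heq]
      refine le_trans (hbnd (t - h) t ⟨hth0, by linarith⟩ ⟨ht.1, le_rfl⟩ (by linarith)) ?_
      have : t - (t - h) = h := by ring
      rw [this]
  -- the collection of all solution values
  set TT : Set X := {y | ∃ s ∈ Icc (0:ℝ) t₀, (∃ n, y = v n s) ∨ y = v₀ s} with hTTdef
  have hTB : TotallyBounded TT := by
    rw [Metric.totallyBounded_iff]
    intro ε hε
    have hMCF : 0 ≤ M * CF := mul_nonneg hM0.le hCF0.le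
    set h : ℝ := min t₀ (ε / (3 * (M * CF) + 1)) with hhdef
    have hDpos : (0:ℝ) < 3 * (M * CF) + 1 := by linarith
    have hh : 0 < h := lt_min ht₀ (div_pos hε hDpos)
    have hbound : M * CF * h ≤ ε / 3 := by
      have h2 : h ≤ ε / (3 * (M * CF) + 1) := min_le_right _ _
      have h3 : M * CF * h ≤ M * CF * (ε / (3 * (M * CF) + 1)) :=
        mul_le_mul_of_nonneg_left h2 hMCF
      have h4 : M * CF * (ε / (3 * (M * CF) + 1)) ≤ ε / 3 := by
        rw [← mul_div_assoc, div_le_div_iff₀ hDpos (by norm_num : (0:ℝ) < 3)]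
        nlinarith
      linarith
    set W : Set X := closure (S h '' Metric.closedBall (0:X) R₂) with hWdef
    have hWcomp : IsCompact W := hScomp h hh _ Metric.isBounded_closedBall
    have hKcomp : IsCompact (Z + W) := hZcomp.add hWcomp
    obtain ⟨N, hNfin, hN⟩ :=
      (Metric.totallyBounded_iff.1 hKcomp.totallyBounded) (ε / 2) (by positivity)
    refine ⟨N, hNfin, ?_⟩
    rintro y ⟨s, hs, hy⟩
    have hdy : ∃ z ∈ Z, ∃ q ∈ W, ‖y - (z + q)‖ ≤ M * CF * h := by
      rcases hy with ⟨n, rfl⟩ | rfl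
      · exact hdecomp h hh (l n) (v n) (hvc n) (hvmild n)
          (by rw [hvn0 n]; exact mem_insert_iff.2 (Or.inr ⟨n, rfl⟩)) s hs
      · exact hdecomp h hh l₀ v₀ hv₀c hv₀mild
          (by rw [hv₀0]; exact mem_insert _ _) s hs
    obtain ⟨z, hz, q, hq, hyzq⟩ := hdy
    have hzq : z + q ∈ Z + W := add_mem_add hz hq
    obtain ⟨p, hp, hpq⟩ := mem_iUnion₂.1 (hN hzq)
    refine mem_iUnion₂.2 ⟨p, hp, ?_⟩
    rw [Metric.mem_ball] at hpq ⊢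
    calc dist y p ≤ dist y (z + q) + dist (z + q) p := dist_triangle _ _ _
    _ < ε / 3 + ε / 2 := by
        apply add_lt_add_of_le_of_lt _ hpq
        rw [dist_eq_norm]
        exact le_trans hyzq hbound
    _ ≤ ε := by linarith
  set Q : Set X := closure TT with hQdef
  have hQcomp : IsCompact Q := TotallyBounded.isCompact_of_isClosed hTB.closure isClosed_closure
  have hvQ : ∀ s ∈ Icc (0:ℝ) t₀, (∀ n, v n s ∈ Q) ∧ v₀ s ∈ Q := by
    intro s hs
    exact ⟨fun n => subset_closure ⟨s, hs, Or.inl ⟨n, rfl⟩⟩,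
      subset_closure ⟨s, hs, Or.inr rfl⟩⟩
  have hQne : Q.Nonempty := ⟨v₀ 0, (hvQ 0 ⟨le_rfl, ht₀.le⟩).2⟩
  -- uniform closeness of F in the parameter, on Q
  have hclose : ∀ ε : ℝ, 0 < ε → ∃ δ : ℝ, 0 < δ ∧ ∀ lam : Λ, dist lam l₀ < δ →
      ∀ s ∈ Icc (0:ℝ) t₀, ∀ y ∈ Q, ‖F lam s y - F l₀ s y‖ ≤ ε := by
    intro ε hε
    set P : Set (ℝ × X) := Icc (0:ℝ) t₀ ×ˢ Q with hPdef
    have hPcomp : IsCompact P := isCompact_Icc.prod hQcomp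
    have hPne : P.Nonempty :=
      ⟨(0, v₀ 0), Set.mem_prod.2 ⟨⟨le_rfl, ht₀.le⟩, (hvQ 0 ⟨le_rfl, ht₀.le⟩).2⟩⟩
    have key : ∀ p : ℝ × X, p ∈ P → ∃ d : ℝ, 0 < d ∧ ∀ q : Λ × ℝ × X, 0 ≤ q.2.1 →
        dist q (l₀, p.1, p.2) < d → dist (F q.1 q.2.1 q.2.2) (F l₀ p.1 p.2) < ε / 2 := by
      intro p hp
      have hmem : (l₀, p.1, p.2) ∈ {q : Λ × ℝ × X | 0 ≤ q.2.1} := hp.1.1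
      have hcw := hFcont (l₀, p.1, p.2) hmem
      rw [Metric.continuousWithinAt_iff] at hcw
      obtain ⟨d, hd, hball⟩ := hcw (ε / 2) (by positivity)
      exact ⟨d, hd, fun q hq hqd => hball hq hqd⟩
    choose d hd hball using key
    obtain ⟨tf, htf⟩ := hPcomp.elim_nhds_subcover' (fun p hp => Metric.ball p (d p hp / 2))
      (fun p hp => Metric.ball_mem_nhds _ (by linarith [hd p hp]))
    have htfne : tf.Nonempty := by
      rcases hPne with ⟨p0, hp0⟩
      obtain ⟨q, hq, -⟩ := mem_iUnion₂.1 (htf hp0)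
      exact ⟨q, hq⟩
    refine ⟨tf.inf' htfne (fun p => d p.1 p.2 / 2), ?_, ?_⟩
    · rw [Finset.lt_inf'_iff]
      intro p hp
      linarith [hd p.1 p.2]
    intro lam hlam s hsI y hyQ
    have hsy : (s, y) ∈ P := Set.mem_prod.2 ⟨hsI, hyQ⟩
    obtain ⟨p, hp, hpball⟩ := mem_iUnion₂.1 (htf hsy)
    have hδle : tf.inf' htfne (fun p => d p.1 p.2 / 2) ≤ d p.1 p.2 / 2 :=
      Finset.inf'_le _ hp
    rw [Metric.mem_ball] at hpball
    have hdp := hd p.1 p.2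
    have hdist2 : dist (s, y) (p.1.1, p.1.2) < d p.1 p.2 / 2 := by
      rwa [Prod.mk.eta]
    have e1 : dist (F lam s y) (F l₀ p.1.1 p.1.2) < ε / 2 := by
      apply hball p.1 p.2 (lam, s, y) hsI.1
      rw [Prod.dist_eq]
      exact max_lt (by linarith [lt_of_lt_of_le hlam hδle]) (by linarith [hdist2])
    have e2 : dist (F l₀ s y) (F l₀ p.1.1 p.1.2) < ε / 2 := by
      apply hball p.1 p.2 (l₀, s, y) hsI.1
      rw [Prod.dist_eq]
      simp only [dist_self]
      exact max_lt hdp (by linarith [hdist2])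
    rw [← dist_eq_norm]
    calc dist (F lam s y) (F l₀ s y) ≤
          dist (F lam s y) (F l₀ p.1.1 p.1.2) + dist (F l₀ p.1.1 p.1.2) (F l₀ s y) :=
        dist_triangle _ _ _
    _ ≤ ε / 2 + ε / 2 := by
        rw [dist_comm (F l₀ p.1.1 p.1.2)]
        exact add_le_add e1.le e2.le
    _ = ε := by ring
  -- uniform local Lipschitz bound along Q
  obtain ⟨r, L, hr, hL, hlip⟩ : ∃ r L : ℝ, 0 < r ∧ 0 < L ∧ ∀ y ∈ Q, ∀ z : X, ‖z - y‖ ≤ r →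
      ∀ t : ℝ, 0 ≤ t → ‖F l₀ t z - F l₀ t y‖ ≤ L * ‖z - y‖ := by
    have key : ∀ p : X, p ∈ Q → ∃ d : ℝ, 0 < d ∧ ∃ LL : ℝ, 0 < LL ∧ ∀ y z : X,
        dist y p < d → dist z p < d → ∀ τ : ℝ, 0 ≤ τ →
        ‖F l₀ τ y - F l₀ τ z‖ ≤ LL * ‖y - z‖ := by
      intro p hp
      obtain ⟨W, hW, LL, hLL, hLip⟩ := hF1 l₀ p
      obtain ⟨d, hd, hdW⟩ := Metric.mem_nhds_iff.1 hW
      exact ⟨d, hd, LL, hLL, fun y z hy z2 τ hτ => hLip y (hdW hy) z (hdW z2) τ hτ⟩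
    choose d hd LL hLL hLip using key
    obtain ⟨tf, htf⟩ := hQcomp.elim_nhds_subcover' (fun p hp => Metric.ball p (d p hp / 3))
      (fun p hp => Metric.ball_mem_nhds _ (by linarith [hd p hp]))
    have htfne : tf.Nonempty := by
      rcases hQne with ⟨p0, hp0⟩
      obtain ⟨q, hq, -⟩ := mem_iUnion₂.1 (htf hp0)
      exact ⟨q, hq⟩
    refine ⟨tf.inf' htfne (fun p => d p.1 p.2 / 3),
      tf.sup' htfne (fun p => LL p.1 p.2), ?_, ?_, ?_⟩
    · rw [Finset.lt_inf'_iff]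
      intro p hp
      linarith [hd p.1 p.2]
    · rw [Finset.lt_sup'_iff]
      obtain ⟨p, hp⟩ := htfne
      exact ⟨p, hp, hLL p.1 p.2⟩
    · intro y hyQ z hzy τ hτ
      obtain ⟨p, hp, hyball⟩ := mem_iUnion₂.1 (htf hyQ)
      rw [Metric.mem_ball] at hyball
      have hrle : tf.inf' htfne (fun p => d p.1 p.2 / 3) ≤ d p.1 p.2 / 3 :=
        Finset.inf'_le _ hp
      have h1 : dist y p.1 < d p.1 p.2 := by linarith [hd p.1 p.2]
      have h2 : dist z p.1 < d p.1 p.2 := by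
        have h3 := dist_triangle z y p.1
        rw [dist_eq_norm z y] at h3
        linarith [hzy.trans hrle, hd p.1 p.2]
      have := hLip p.1 p.2 z y h2 h1 τ hτ
      exact le_trans this
        (mul_le_mul_of_nonneg_right (Finset.le_sup' (fun p => LL p.1 p.2) hp)
          (norm_nonneg _))
  -- main argument
  rw [Metric.tendstoUniformlyOn_iff]
  intro ε' hε'
  have hKpos : 0 < M * L := mul_pos hM0 hL
  set E : ℝ := exp (M * L * t₀) with hEdef
  have hE1 : 1 ≤ E := one_le_exp (by positivity)
  have hE0 : 0 < E := exp_pos _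
  set ρ : ℝ := min ε' r with hρdef
  have hρ0 : 0 < ρ := lt_min hε' hr
  have hden : 0 < 4 * M * t₀ * E := by positivity
  set ε₁ : ℝ := ρ / (4 * M * t₀ * E) with hε₁def
  have hε₁pos : 0 < ε₁ := div_pos hρ0 hden
  obtain ⟨δ, hδpos, hδ⟩ := hclose ε₁ hε₁pos
  have ev1 : ∀ᶠ n in atTop, dist (l n) l₀ < δ := Metric.tendsto_nhds.1 hl δ hδpos
  have hden2 : 0 < 4 * M * E := by positivity
  have ev2 : ∀ᶠ n in atTop, dist (x n) x₀ < ρ / (4 * M * E) :=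
    Metric.tendsto_nhds.1 hx _ (div_pos hρ0 hden2)
  filter_upwards [ev1, ev2] with n hn1 hn2
  intro t htI
  set φ : ℝ → ℝ := fun s => ‖v n s - v₀ s‖ with hφdef
  have hφapp : ∀ s, φ s = ‖v n s - v₀ s‖ := fun s => by rw [hφdef]
  have hφc : Continuous φ := by
    rw [hφdef]
    exact ((hvc n).sub hv₀c).norm
  have hφ0 : ∀ s, 0 ≤ φ s := fun s => by rw [hφapp s]; exact norm_nonneg _
  set A : ℝ := M * ‖x n - x₀‖ + M * ε₁ * t₀ with hAdef
  have hA0 : 0 ≤ A := add_nonneg (mul_nonneg hM0.le (norm_nonneg _))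
    (mul_nonneg (mul_nonneg hM0.le hε₁pos.le) ht₀.le)
  clear_value φ A
  rw [dist_eq_norm] at hn2
  have hB : A * E < ρ / 2 := by
    have b1 : M * ε₁ * t₀ * E = ρ / 4 := by
      rw [hε₁def]
      field_simp
    have b2 : M * ‖x n - x₀‖ * E < ρ / 4 := by
      calc M * ‖x n - x₀‖ * E < M * (ρ / (4 * M * E)) * E := by
            apply mul_lt_mul_of_pos_right (mul_lt_mul_of_pos_left hn2 hM0) hE0
      _ = ρ / 4 := by field_simp
    have b3 : A * E = M * ‖x n - x₀‖ * E + M * ε₁ * t₀ * E := by rw [hAdef]; ring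
    linarith
  have Hcore : ∀ T, T ∈ Icc (0:ℝ) t₀ → (∀ s ∈ Icc (0:ℝ) T, φ s ≤ r) →
      ∀ τ ∈ Icc (0:ℝ) T, φ τ ≤ A * E := by
    intro T hT htube
    have hineq : ∀ τ ∈ Icc (0:ℝ) T, φ τ ≤ A + (M * L) * ∫ s in (0:ℝ)..τ, φ s := by
      intro τ hτ
      have hτI : τ ∈ Icc (0:ℝ) t₀ := ⟨hτ.1, hτ.2.trans hT.2⟩
      have hint1 := hinti (l n) (v n) (hvc n) τ hτI 0 τ ⟨le_rfl, hτ.1⟩ ⟨hτ.1, le_rfl⟩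
      have hint2 := hinti l₀ v₀ hv₀c τ hτI 0 τ ⟨le_rfl, hτ.1⟩ ⟨hτ.1, le_rfl⟩
      have hsub : v n τ - v₀ τ = S τ (x n) - S τ x₀ +
          ∫ s in (0:ℝ)..τ, (S (τ - s) (F (l n) s (v n s)) - S (τ - s) (F l₀ s (v₀ s))) := by
        rw [hvmild n τ hτ.1, hv₀mild τ hτ.1, hvn0 n, hv₀0,
          intervalIntegral.integral_sub hint1 hint2]
        abel
      have hptw : ∀ s ∈ Icc (0:ℝ) τ,
          ‖S (τ - s) (F (l n) s (v n s)) - S (τ - s) (F l₀ s (v₀ s))‖ ≤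
          M * ε₁ + M * L * φ s := by
        intro s hs
        have hsI : s ∈ Icc (0:ℝ) t₀ := ⟨hs.1, le_trans hs.2 hτI.2⟩
        have hsT : s ∈ Icc (0:ℝ) T := ⟨hs.1, le_trans hs.2 hτ.2⟩
        have hQn : v n s ∈ Q := (hvQ s hsI).1 n
        have hQ0 : v₀ s ∈ Q := (hvQ s hsI).2
        have hτsI : τ - s ∈ Icc (0:ℝ) t₀ :=
          ⟨by linarith [hs.2], by linarith [hτI.2, hs.1]⟩
        have hinner : ‖F (l n) s (v n s) - F l₀ s (v₀ s)‖ ≤ ε₁ + L * φ s := by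
          have t1 : ‖F (l n) s (v n s) - F l₀ s (v n s)‖ ≤ ε₁ :=
            hδ (l n) hn1 s hsI (v n s) hQn
          have htr : ‖v n s - v₀ s‖ ≤ r := by rw [← hφapp s]; exact htube s hsT
          have t2 : ‖F l₀ s (v n s) - F l₀ s (v₀ s)‖ ≤ L * ‖v n s - v₀ s‖ :=
            hlip (v₀ s) hQ0 (v n s) htr s hs.1
          have t3 : ‖F (l n) s (v n s) - F l₀ s (v₀ s)‖ ≤
              ‖F (l n) s (v n s) - F l₀ s (v n s)‖ +
              ‖F l₀ s (v n s) - F l₀ s (v₀ s)‖ := by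
            have h4 := dist_triangle (F (l n) s (v n s)) (F l₀ s (v n s)) (F l₀ s (v₀ s))
            rw [dist_eq_norm, dist_eq_norm, dist_eq_norm] at h4
            exact h4
          rw [hφapp s]
          linarith
        rw [← map_sub]
        calc ‖S (τ - s) (F (l n) s (v n s) - F l₀ s (v₀ s))‖ ≤
              ‖S (τ - s)‖ * ‖F (l n) s (v n s) - F l₀ s (v₀ s)‖ :=
            (S (τ - s)).le_opNorm _
        _ ≤ M * (ε₁ + L * φ s) := mul_le_mul (hM _ hτsI) hinner (norm_nonneg _) hM0.le
        _ = M * ε₁ + M * L * φ s := by ring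
      have hgint : IntervalIntegrable (fun s => M * ε₁ + M * L * φ s) volume 0 τ :=
        (continuous_const.add (continuous_const.mul hφc)).intervalIntegrable _ _
      have hIbd : ‖∫ s in (0:ℝ)..τ,
          (S (τ - s) (F (l n) s (v n s)) - S (τ - s) (F l₀ s (v₀ s)))‖ ≤
          ∫ s in (0:ℝ)..τ, (M * ε₁ + M * L * φ s) := by
        have hae : ∀ᵐ s ∂(volume.restrict (Set.uIoc (0:ℝ) τ)),
            ‖S (τ - s) (F (l n) s (v n s)) - S (τ - s) (F l₀ s (v₀ s))‖ ≤
            M * ε₁ + M * L * φ s := by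
          filter_upwards [ae_restrict_mem measurableSet_uIoc] with s hs
          rw [uIoc_of_le hτ.1] at hs
          exact hptw s ⟨hs.1.le, hs.2⟩
        refine le_trans (intervalIntegral.norm_integral_le_abs_of_norm_le hae hgint) ?_
        rw [abs_of_nonneg]
        apply intervalIntegral.integral_nonneg hτ.1
        intro s hs
        have := hφ0 s
        nlinarith [mul_pos hM0 hε₁pos, mul_pos hM0 hL]
      have hsum : ∫ s in (0:ℝ)..τ, (M * ε₁ + M * L * φ s) =
          M * ε₁ * τ + M * L * ∫ s in (0:ℝ)..τ, φ s := by
        rw [intervalIntegral.integral_add (f := fun _ => M * ε₁) (g := fun s => M * L * φ s) intervalIntegrable_const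
          ((continuous_const.mul hφc).intervalIntegrable _ _),
          intervalIntegral.integral_const, intervalIntegral.integral_const_mul]
        simp [smul_eq_mul]
        ring
      have hS1 : ‖S τ (x n) - S τ x₀‖ ≤ M * ‖x n - x₀‖ := by
        rw [← map_sub]
        calc ‖S τ (x n - x₀)‖ ≤ ‖S τ‖ * ‖x n - x₀‖ := (S τ).le_opNorm _
        _ ≤ M * ‖x n - x₀‖ := mul_le_mul_of_nonneg_right (hM τ hτI) (norm_nonneg _)
      have hτt₀ : M * ε₁ * τ ≤ M * ε₁ * t₀ :=
        mul_le_mul_of_nonneg_left hτI.2 (mul_nonneg hM0.le hε₁pos.le)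
      rw [hsum] at hIbd
      have : φ τ ≤ ‖S τ (x n) - S τ x₀‖ + ‖∫ s in (0:ℝ)..τ,
          (S (τ - s) (F (l n) s (v n s)) - S (τ - s) (F l₀ s (v₀ s)))‖ := by
        rw [hφapp τ, hsub]
        exact norm_add_le _ _
      rw [hAdef]
      linarith
    intro τ hτ
    refine le_trans (my_gron hKpos hφc hφ0 hineq τ hτ) ?_
    apply mul_le_mul_of_nonneg_left _ hA0
    rw [hEdef]
    exact exp_le_exp.2 (mul_le_mul_of_nonneg_left hT.2 hKpos.le)
  have hρr : ρ ≤ r := min_le_right _ _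
  have hφzero : φ 0 < r := by
    have e0 : φ 0 = ‖x n - x₀‖ := by
      rw [hφapp 0, hvn0 n, hv₀0]
    have hle : ρ / (4 * M * E) ≤ r := by
      have h1 : ρ / (4 * M * E) ≤ ρ := by
        apply div_le_self hρ0.le
        nlinarith
      linarith
    rw [e0]
    calc ‖x n - x₀‖ < ρ / (4 * M * E) := hn2
    _ ≤ r := hle
  have htube : ∀ s ∈ Icc (0:ℝ) t₀, φ s ≤ r := by
    by_contra hcon
    push_neg at hcon
    obtain ⟨s0, hs0, hs0r⟩ := hcon
    set Bad : Set ℝ := {s | s ∈ Icc (0:ℝ) t₀ ∧ r ≤ φ s} with hBaddef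
    have hBadne : Bad.Nonempty := ⟨s0, hs0, hs0r.le⟩
    have hBadclosed : IsClosed Bad := by
      have : Bad = Icc (0:ℝ) t₀ ∩ φ ⁻¹' (Ici r) := rfl
      rw [this]
      exact isClosed_Icc.inter (isClosed_Ici.preimage hφc)
    have hBadbdd : BddBelow Bad := ⟨0, fun y hy => hy.1.1⟩
    set ts : ℝ := sInf Bad with htsdef
    have htsBad : ts ∈ Bad := hBadclosed.csInf_mem hBadne hBadbdd
    have htsI : ts ∈ Icc (0:ℝ) t₀ := htsBad.1
    have htsr : r ≤ φ ts := htsBad.2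
    have hts0 : 0 < ts := by
      rcases lt_or_eq_of_le htsI.1 with h | h
      · exact h
      · exfalso
        rw [← h] at htsr
        linarith
    have hless : ∀ s : ℝ, 0 ≤ s → s < ts → φ s ≤ r := by
      intro s hs1 hs2
      by_contra hcc
      push_neg at hcc
      have hmem : s ∈ Bad := ⟨⟨hs1, le_trans hs2.le htsI.2⟩, hcc.le⟩
      exact absurd (csInf_le hBadbdd hmem) (not_le.2 hs2)
    have htstube : ∀ s ∈ Icc (0:ℝ) ts, φ s ≤ r := by
      intro s hs
      rcases lt_or_eq_of_le hs.2 with h | h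
      · exact hless s hs.1 h
      · rw [h]
        have htd : Tendsto φ (𝓝[<] ts) (𝓝 (φ ts)) :=
          (hφc.continuousAt).continuousWithinAt.tendsto
        apply le_of_tendsto htd
        filter_upwards [Ioo_mem_nhdsLT_of_mem (⟨hts0, le_rfl⟩ : ts ∈ Ioc (0:ℝ) ts)]
          with s2 hs2
        exact hless s2 hs2.1.le hs2.2
    have hcore := Hcore ts htsI htstube ts ⟨htsI.1, le_rfl⟩
    linarith
  have hfinal := Hcore t₀ ⟨ht₀.le, le_rfl⟩ htube t htI
  rw [dist_eq_norm]
  have heq2 : u₀ t - u n t = -(v n t - v₀ t) := by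
    rw [hveq n t htI.1, hv₀eq t htI.1]
    abel
  have hρε : ρ ≤ ε' := min_le_left _ _
  calc ‖u₀ t - u n t‖ = φ t := by rw [heq2, norm_neg, hφapp t]
  _ ≤ A * E := hfinal
  _ < ρ / 2 := hB
  _ ≤ ε' := by linarith
end

section
/- Let X be a real Banach space, T>0, and {S(t)}_{t≥0} a compact C0 semigroup on X. Let N := {x∈X : S(T)x = x} be nonzero, suppose S(t)x = x for every x∈N and t≥0, and let M be a closed subspace with X = N ⊕ M and S(t)M ⊆ M for all t≥0; let P be the projection onto N along M and Q = I − P. Let F:[0,∞)×X→X be continuous satisfying (F1) and (F2), and define g:N→N by g(x) := ∫₀ᵀ P F(s,x) ds. Let U⊆N be open bounded in N and V⊆M open bounded in M with 0∈V, and assume g(x)≠0 for every x in the boundary ∂_N U of U in N. Then there exists ε₀∈(0,1) such that for every ε∈(0,ε₀], every s∈[0,1], and every x in the boundary of U⊕V in X, there is no continuous map u:[0,T]→X with u(T)=x and u(t) = S(t)x + ∫₀ᵗ S(t−τ)[ ε P F(τ, s·u(τ) + (1−s)Px) + ε s Q F(τ,u(τ)) ] dτ for all t∈[0,T]. -/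
open MeasureTheory Set Filter Topology Bornology intervalIntegral

lemma sg_param_cont {X : Type*} [NormedAddCommGroup X] [NormedSpace ℝ X]
    (S : ℝ → X →L[ℝ] X)
    (hScont : ∀ x : X, ContinuousOn (fun t => S t x) (Set.Ici (0:ℝ)))
    {K T : ℝ} (hK : ∀ r ∈ Set.Icc (0:ℝ) T, ‖S r‖ ≤ K)
    {t : ℝ} (ht0 : 0 ≤ t) (htT : t ≤ T) {G : ℝ → X}
    (hG : ContinuousOn G (Set.Icc 0 t)) :
    ContinuousOn (fun τ => S (t - τ) (G τ)) (Set.Icc (0:ℝ) t) := by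
  intro τ₀ hτ₀
  have hsub : ∀ τ ∈ Icc (0:ℝ) t, t - τ ∈ Icc (0:ℝ) T := fun τ hτ =>
    ⟨by linarith [hτ.2], by linarith [hτ.1]⟩
  have h2 : ContinuousWithinAt (fun τ => S (t - τ) (G τ₀)) (Icc 0 t) τ₀ := by
    have hmap : MapsTo (fun τ => t - τ) (Icc (0:ℝ) t) (Ici (0:ℝ)) := fun τ hτ => by
      simp only [mem_Ici]; linarith [hτ.2]
    exact ContinuousWithinAt.comp (hScont (G τ₀) _ (hmap hτ₀))
      ((continuous_const.sub continuous_id).continuousWithinAt) hmap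
  have h1 : Tendsto (fun τ => S (t - τ) (G τ - G τ₀)) (𝓝[Icc (0:ℝ) t] τ₀) (𝓝 0) := by
    apply tendsto_zero_iff_norm_tendsto_zero.mpr
    have hb : ∀ᶠ τ in 𝓝[Icc (0:ℝ) t] τ₀, ‖S (t - τ) (G τ - G τ₀)‖ ≤ K * ‖G τ - G τ₀‖ := by
      filter_upwards [eventually_mem_nhdsWithin] with τ hτ
      exact ((S (t - τ)).le_opNorm _).trans
        (mul_le_mul_of_nonneg_right (hK _ (hsub τ hτ)) (norm_nonneg _))
    have hgt : Tendsto (fun τ => K * ‖G τ - G τ₀‖) (𝓝[Icc (0:ℝ) t] τ₀) (𝓝 0) := by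
      have h := ((hG τ₀ hτ₀).sub (tendsto_const_nhds (x := G τ₀))).norm
      simp only [ContinuousWithinAt, sub_self, norm_zero] at h
      simpa using h.const_mul K
    exact squeeze_zero' (Eventually.of_forall fun τ => norm_nonneg _) hb hgt
  have hsum := h1.add h2
  simp only [zero_add] at hsum
  refine Tendsto.congr (fun τ => ?_) hsum
  rw [map_sub]
  abel

set_option maxHeartbeats 2000000 in
/-- averaging principle at resonance. Under the stated hypotheses
(compact `C₀` semigroup, `N = Ker(I - S(T))` with `S(t) ≡ I` on `N`,
a topological complement `M` invariant under the semigroup, projections `P` onto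
`N` and `Q = I − P` onto `M`, a nonlinearity `F` satisfying (F1), (F2), and the
averaged map `g(x) = ∫₀ᵀ P F(s,x) ds` nonvanishing on `∂_N U`), there is
`ε₀ ∈ (0,1)` such that for `ε ∈ (0,ε₀]`, `s ∈ [0,1]` and `x ∈ ∂(U ⊕ V)` the
homotopy fixed point equation has no solution with `u(T) = x`. -/
theorem statement11
    {X : Type*} [NormedAddCommGroup X] [NormedSpace ℝ X] [CompleteSpace X]
    (T : ℝ) (hT : 0 < T)
    (S : ℝ → X →L[ℝ] X)
    (hS0 : S 0 = 1)
    (hSadd : ∀ t s : ℝ, 0 ≤ t → 0 ≤ s → S (t + s) = (S t).comp (S s))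
    (hScont : ∀ x : X, ContinuousOn (fun t => S t x) (Set.Ici (0:ℝ)))
    (hScomp : ∀ t : ℝ, 0 < t → ∀ B : Set X, Bornology.IsBounded B →
      IsCompact (closure (S t '' B)))
    (N M : Submodule ℝ X)
    (hNc : IsClosed (N : Set X)) (hMc : IsClosed (M : Set X))
    (hN : ∀ x : X, x ∈ N ↔ S T x = x)
    (hNne : N ≠ ⊥)
    (hSN : ∀ x ∈ N, ∀ t : ℝ, 0 ≤ t → S t x = x)
    (hcompl : IsCompl N M)
    (hSM : ∀ x ∈ M, ∀ t : ℝ, 0 ≤ t → S t x ∈ M)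
    (P : X →L[ℝ] X)
    (hPN : ∀ x : X, P x ∈ N)
    (hPM : ∀ x : X, x - P x ∈ M)
    (hPid : ∀ x ∈ N, P x = x)
    (F : ℝ → X → X)
    (hFcont : ContinuousOn (fun p : ℝ × X => F p.1 p.2) {p : ℝ × X | 0 ≤ p.1})
    (hF1 : ∀ x₀ : X, ∃ W ∈ nhds x₀, ∃ L : ℝ, 0 < L ∧
      ∀ x ∈ W, ∀ y ∈ W, ∀ t : ℝ, 0 ≤ t → ‖F t x - F t y‖ ≤ L * ‖x - y‖)
    (c : ℝ → ℝ) (hc : Continuous c) (hc0 : ∀ t : ℝ, 0 ≤ t → 0 ≤ c t)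
    (hF2 : ∀ (t : ℝ) (x : X), 0 ≤ t → ‖F t x‖ ≤ c t * (1 + ‖x‖))
    (U : Set ↥N) (V : Set ↥M)
    (hUo : IsOpen U) (hUb : Bornology.IsBounded U)
    (hVo : IsOpen V) (hVb : Bornology.IsBounded V) (hV0 : (0 : ↥M) ∈ V)
    (hg : ∀ x : ↥N, x ∈ frontier U → (∫ s in (0:ℝ)..T, P (F s (x : X))) ≠ 0) :
    ∃ ε₀ : ℝ, 0 < ε₀ ∧ ε₀ < 1 ∧
      ∀ ε : ℝ, 0 < ε → ε ≤ ε₀ →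
      ∀ s ∈ Set.Icc (0:ℝ) 1,
      ∀ x ∈ frontier (Set.image2 (fun (a : ↥N) (b : ↥M) => (a : X) + (b : X)) U V),
      ¬ ∃ u : ℝ → X, ContinuousOn u (Set.Icc (0:ℝ) T) ∧ u T = x ∧
        ∀ t ∈ Set.Icc (0:ℝ) T,
          u t = S t x + ∫ τ in (0:ℝ)..t,
            S (t - τ) (ε • P (F τ (s • u τ + (1 - s) • P x)) +
              (ε * s) • (F τ (u τ) - P (F τ (u τ)))) := by
  classical
  haveI hNcs : CompleteSpace N := hNc.completeSpace_coe
  haveI hMcs : CompleteSpace M := hMc.completeSpace_coe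
  -- uniform bound on the semigroup on [0,T]
  obtain ⟨K, hK1, hK⟩ : ∃ K : ℝ, 1 ≤ K ∧ ∀ t ∈ Icc (0:ℝ) T, ‖S t‖ ≤ K := by
    have hpt : ∀ xx : X, ∃ C : ℝ, ∀ t : Icc (0:ℝ) T, ‖S t xx‖ ≤ C := by
      intro xx
      obtain ⟨C, hC⟩ := (isCompact_Icc (a := (0:ℝ)) (b := T)).exists_bound_of_continuousOn
        ((hScont xx).mono Icc_subset_Ici_self)
      exact ⟨C, fun t => hC t t.2⟩
    obtain ⟨C', hC'⟩ := banach_steinhaus (g := fun t : Icc (0:ℝ) T => S t) hpt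
    exact ⟨max C' 1, le_max_right _ _, fun t ht => le_max_of_le_left (hC' ⟨t, ht⟩)⟩
  have hKpos : 0 < K := lt_of_lt_of_le zero_lt_one hK1
  have hSnorm : ∀ r ∈ Icc (0:ℝ) T, ∀ z : X, ‖S r z‖ ≤ K * ‖z‖ := fun r hr z =>
    ((S r).le_opNorm z).trans (mul_le_mul_of_nonneg_right (hK r hr) (norm_nonneg _))
  -- bound on c
  obtain ⟨c₀, hc₀0, hc₀⟩ : ∃ c₀ : ℝ, 0 ≤ c₀ ∧ ∀ t ∈ Icc (0:ℝ) T, c t ≤ c₀ := by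
    obtain ⟨C, hC⟩ := (isCompact_Icc (a := (0:ℝ)) (b := T)).exists_bound_of_continuousOn
      hc.continuousOn
    refine ⟨max C 0, le_max_right _ _, fun t ht => le_max_of_le_left ?_⟩
    exact (le_abs_self _).trans (le_of_eq_of_le (Real.norm_eq_abs _).symm (hC t ht))
  have hFb : ∀ τ ∈ Icc (0:ℝ) T, ∀ z : X, ‖F τ z‖ ≤ c₀ * (1 + ‖z‖) := by
    intro τ hτ z
    refine (hF2 τ z hτ.1).trans (mul_le_mul_of_nonneg_right (hc₀ τ hτ) ?_)
    positivity
  -- bound on P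
  set p : ℝ := max ‖P‖ 1 with hpdef
  have hp1 : 1 ≤ p := le_max_right _ _
  have hp0 : 0 < p := lt_of_lt_of_le zero_lt_one hp1
  have hPnorm : ∀ z : X, ‖P z‖ ≤ p * ‖z‖ := fun z =>
    (P.le_opNorm z).trans (mul_le_mul_of_nonneg_right (le_max_left _ _) (norm_nonneg _))
  -- algebraic facts about P and S
  have hPM0 : ∀ m ∈ M, P m = 0 := by
    intro m hm
    have h1 : P m ∈ M := by
      have := hPM m
      have h2 : P m = m - (m - P m) := by abel
      rw [h2]; exact M.sub_mem hm this
    exact (Submodule.disjoint_def.mp hcompl.disjoint (P m) (hPN m) h1)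
  have hPP : ∀ z : X, P (P z) = P z := fun z => hPid _ (hPN z)
  have hPS : ∀ r : ℝ, 0 ≤ r → ∀ z : X, P (S r z) = P z := by
    intro r hr z
    have hz : z = P z + (z - P z) := by abel
    calc P (S r z) = P (S r (P z + (z - P z))) := by rw [← hz]
      _ = P (S r (P z)) + P (S r (z - P z)) := by rw [map_add, map_add]
      _ = P (P z) + P (S r (z - P z)) := by rw [hSN (P z) (hPN z) r hr]
      _ = P z + 0 := by rw [hPP, hPM0 _ (hSM _ (hPM z) r hr)]
      _ = P z := add_zero _
  -- the set A and its bound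
  set A := Set.image2 (fun (a : ↥N) (b : ↥M) => (a : X) + (b : X)) U V with hAdef
  obtain ⟨R, hR0, hfrontR⟩ : ∃ R : ℝ, 0 ≤ R ∧ ∀ z ∈ frontier A, ‖z‖ ≤ R := by
    obtain ⟨RU, hRU⟩ := isBounded_iff_forall_norm_le.mp hUb
    obtain ⟨RV, hRV⟩ := isBounded_iff_forall_norm_le.mp hVb
    refine ⟨max RU 0 + max RV 0, by positivity, ?_⟩
    intro z hz
    have hA : A ⊆ Metric.closedBall (0:X) (max RU 0 + max RV 0) := by
      rintro _ ⟨a, ha, b, hb, rfl⟩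
      rw [Metric.mem_closedBall, dist_zero_right]
      exact (norm_add_le _ _).trans (add_le_add
        (le_max_of_le_left (hRU a ha)) (le_max_of_le_left (hRV b hb)))
    have := closure_minimal hA Metric.isClosed_closedBall (frontier_subset_closure hz)
    rwa [Metric.mem_closedBall, dist_zero_right] at this
  -- constants
  set B : ℝ := max (c₀ * (p * (1 + p * R) + (1 + p))) 1 with hBdef
  have hB1 : 1 ≤ B := le_max_right _ _
  have hBpos : 0 < B := lt_of_lt_of_le zero_lt_one hB1
  set Cb : ℝ := 2 * K * R + 1 with hCbdef
  have hCb0 : 0 < Cb := by positivity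
  set C₂ : ℝ := T * K * B * (1 + Cb) with hC₂def
  have hC₂0 : 0 < C₂ := by positivity
  set δ : ℝ := min (1 / (2 * T * K * B)) (1/2) with hδdef
  have hδ0 : 0 < δ := by
    apply lt_min _ (by norm_num)
    positivity
  have hδhalf : δ ≤ 1/2 := min_le_right _ _
  have hδsmall : ∀ e : ℝ, 0 < e → e ≤ δ → T * K * e * B ≤ 1/2 := by
    intro e he hle
    have h1 : e ≤ 1 / (2 * T * K * B) := hle.trans (min_le_left _ _)
    rw [le_div_iff₀ (by positivity)] at h1
    nlinarith [hT, hKpos, hBpos]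
  by_contra hcon
  push_neg at hcon
  have key : ∀ n : ℕ, ∃ ε s : ℝ, ∃ x : X, ∃ u : ℝ → X,
      (0 < ε ∧ ε ≤ δ / (n + 1)) ∧ s ∈ Icc (0:ℝ) 1 ∧ x ∈ frontier A ∧
      ContinuousOn u (Icc (0:ℝ) T) ∧ u T = x ∧
      ∀ t ∈ Icc (0:ℝ) T,
        u t = S t x + ∫ τ in (0:ℝ)..t,
          S (t - τ) (ε • P (F τ (s • u τ + (1 - s) • P x)) +
            (ε * s) • (F τ (u τ) - P (F τ (u τ)))) := by
    intro n
    have hn1 : (0:ℝ) < n + 1 := by positivity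
    have h1 : 0 < δ / (n + 1) := by positivity
    have h2 : δ / (n + 1) < 1 := by
      have : δ / (n + 1) ≤ δ := div_le_self hδ0.le (by linarith [Nat.cast_nonneg (α := ℝ) n])
      linarith [hδhalf]
    obtain ⟨e, he1, he2, ss, hss, xx, hxx, uu, huu⟩ := hcon (δ / (n + 1)) h1 h2
    exact ⟨e, ss, xx, uu, ⟨he1, he2⟩, hss, hxx, huu.1, huu.2.1, huu.2.2⟩
  choose ε s x u hε hs hxA hucont huT heqn using key
  have hεpos : ∀ n, 0 < ε n := fun n => (hε n).1
  have hεδ : ∀ n, ε n ≤ δ := by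
    intro n
    refine (hε n).2.trans ?_
    apply div_le_self hδ0.le
    have : (0:ℝ) ≤ n := Nat.cast_nonneg n
    linarith
  have hxR : ∀ n, ‖x n‖ ≤ R := fun n => hfrontR _ (hxA n)
  -- bound on the argument of F
  have hyb : ∀ n, ∀ τ : ℝ, ‖s n • u n τ + (1 - s n) • P (x n)‖ ≤ ‖u n τ‖ + p * R := by
    intro n τ
    have hs0 := (hs n).1
    have hs1 := (hs n).2
    refine (norm_add_le _ _).trans ?_
    rw [norm_smul, norm_smul, Real.norm_eq_abs, Real.norm_eq_abs,
      abs_of_nonneg hs0, abs_of_nonneg (by linarith : (0:ℝ) ≤ 1 - s n)]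
    have h1 : s n * ‖u n τ‖ ≤ ‖u n τ‖ := by
      nlinarith [norm_nonneg (u n τ)]
    have h2 : (1 - s n) * ‖P (x n)‖ ≤ p * R := by
      have h3 : ‖P (x n)‖ ≤ p * R := (hPnorm _).trans
        (mul_le_mul_of_nonneg_left (hxR n) hp0.le)
      nlinarith [norm_nonneg (P (x n))]
    linarith
  -- bound on the integrand vector
  have hZb : ∀ n, ∀ τ ∈ Icc (0:ℝ) T,
      ‖ε n • P (F τ (s n • u n τ + (1 - s n) • P (x n))) +
        (ε n * s n) • (F τ (u n τ) - P (F τ (u n τ)))‖ ≤ ε n * B * (1 + ‖u n τ‖) := by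
    intro n τ hτ
    have hs0 := (hs n).1
    have hs1 := (hs n).2
    have hεp := hεpos n
    have h1 : ‖ε n • P (F τ (s n • u n τ + (1 - s n) • P (x n))) +
        (ε n * s n) • (F τ (u n τ) - P (F τ (u n τ)))‖ ≤
        ε n * ‖P (F τ (s n • u n τ + (1 - s n) • P (x n)))‖ +
        (ε n * s n) * ‖F τ (u n τ) - P (F τ (u n τ))‖ := by
      refine (norm_add_le _ _).trans ?_
      rw [norm_smul, norm_smul, Real.norm_eq_abs, Real.norm_eq_abs,
        abs_of_pos hεp, abs_of_nonneg (by positivity)]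
    have h2 : ‖F τ (s n • u n τ + (1 - s n) • P (x n))‖ ≤ c₀ * (1 + (‖u n τ‖ + p * R)) :=
      (hFb τ hτ _).trans (mul_le_mul_of_nonneg_left (by linarith [hyb n τ]) hc₀0)
    have h3 : ‖P (F τ (s n • u n τ + (1 - s n) • P (x n)))‖ ≤
        p * (c₀ * (1 + (‖u n τ‖ + p * R))) :=
      (hPnorm _).trans (mul_le_mul_of_nonneg_left h2 hp0.le)
    have h4 : ‖F τ (u n τ) - P (F τ (u n τ))‖ ≤ (1 + p) * (c₀ * (1 + ‖u n τ‖)) := by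
      refine (norm_sub_le _ _).trans ?_
      have h5 := hFb τ hτ (u n τ)
      have h6 : ‖P (F τ (u n τ))‖ ≤ p * (c₀ * (1 + ‖u n τ‖)) :=
        (hPnorm _).trans (mul_le_mul_of_nonneg_left h5 hp0.le)
      nlinarith
    have hBle : c₀ * (p * (1 + p * R) + (1 + p)) ≤ B := le_max_left _ _
    have hnu : (0:ℝ) ≤ ‖u n τ‖ := norm_nonneg _
    refine h1.trans ?_
    have h7 : ε n * ‖P (F τ (s n • u n τ + (1 - s n) • P (x n)))‖ ≤
        ε n * (p * (c₀ * (1 + (‖u n τ‖ + p * R)))) :=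
      mul_le_mul_of_nonneg_left h3 hεp.le
    have h8 : (ε n * s n) * ‖F τ (u n τ) - P (F τ (u n τ))‖ ≤
        ε n * ((1 + p) * (c₀ * (1 + ‖u n τ‖))) := by
      have ha : ε n * s n ≤ ε n := by nlinarith
      calc (ε n * s n) * ‖F τ (u n τ) - P (F τ (u n τ))‖ ≤
          ε n * ‖F τ (u n τ) - P (F τ (u n τ))‖ :=
            mul_le_mul_of_nonneg_right ha (norm_nonneg _)
        _ ≤ ε n * ((1 + p) * (c₀ * (1 + ‖u n τ‖))) := mul_le_mul_of_nonneg_left h4 hεp.le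
    have h9 : ε n * (p * (c₀ * (1 + (‖u n τ‖ + p * R)))) +
        ε n * ((1 + p) * (c₀ * (1 + ‖u n τ‖))) ≤ ε n * B * (1 + ‖u n τ‖) := by
      have h10 : p * (c₀ * (1 + (‖u n τ‖ + p * R))) + (1 + p) * (c₀ * (1 + ‖u n τ‖)) ≤
          B * (1 + ‖u n τ‖) := by
        have h11 : p * (1 + (‖u n τ‖ + p * R)) ≤ p * (1 + p * R) * (1 + ‖u n τ‖) := by
          nlinarith [mul_nonneg (mul_nonneg (mul_nonneg hp0.le hp0.le) hR0) hnu]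
        nlinarith [mul_le_mul_of_nonneg_right hBle (by linarith : (0:ℝ) ≤ 1 + ‖u n τ‖)]
      nlinarith
    linarith
  -- a priori bound on u
  have hub : ∀ n, ∀ t ∈ Icc (0:ℝ) T, ‖u n t‖ ≤ Cb := by
    intro n
    obtain ⟨t₀, ht₀, hmax'⟩ := isCompact_Icc.exists_isMaxOn (nonempty_Icc.2 hT.le)
      (hucont n).norm
    have hmax : ∀ τ ∈ Icc (0:ℝ) T, ‖u n τ‖ ≤ ‖u n t₀‖ := fun τ hτ => hmax' hτ
    have hTKB : T * K * ε n * B ≤ 1/2 := hδsmall (ε n) (hεpos n) (hεδ n)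
    have heq := heqn n t₀ ht₀
    have hI : ‖∫ τ in (0:ℝ)..t₀,
        S (t₀ - τ) (ε n • P (F τ (s n • u n τ + (1 - s n) • P (x n))) +
          (ε n * s n) • (F τ (u n τ) - P (F τ (u n τ))))‖ ≤
        K * (ε n * B * (1 + ‖u n t₀‖)) * |t₀ - 0| := by
      apply intervalIntegral.norm_integral_le_of_norm_le_const
      intro τ hτ
      rw [uIoc_of_le ht₀.1] at hτ
      have hτIcc : τ ∈ Icc (0:ℝ) T := ⟨hτ.1.le, hτ.2.trans ht₀.2⟩
      have h1 : t₀ - τ ∈ Icc (0:ℝ) T := ⟨by linarith [hτ.2], by linarith [hτ.1, ht₀.2]⟩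
      refine (hSnorm _ h1 _).trans ?_
      have h2 := hZb n τ hτIcc
      have h3 : ‖u n τ‖ ≤ ‖u n t₀‖ := hmax τ hτIcc
      have hεB : (0:ℝ) ≤ ε n * B := mul_nonneg (hεpos n).le hBpos.le
      calc K * ‖ε n • P (F τ (s n • u n τ + (1 - s n) • P (x n))) +
            (ε n * s n) • (F τ (u n τ) - P (F τ (u n τ)))‖ ≤
            K * (ε n * B * (1 + ‖u n τ‖)) := mul_le_mul_of_nonneg_left h2 hKpos.le
        _ ≤ K * (ε n * B * (1 + ‖u n t₀‖)) := by
            refine mul_le_mul_of_nonneg_left ?_ hKpos.le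
            rw [mul_assoc (ε n) B, mul_assoc (ε n) B] at *
            exact mul_le_mul_of_nonneg_left
              (mul_le_mul_of_nonneg_left (by linarith) hBpos.le) (hεpos n).le
    have hnorm1 : ‖u n t₀‖ ≤ K * R + K * (ε n * B * (1 + ‖u n t₀‖)) * T := by
      conv_lhs => rw [heq]
      refine (norm_add_le _ _).trans (add_le_add ?_ ?_)
      · exact (hSnorm t₀ ht₀ _).trans (mul_le_mul_of_nonneg_left (hxR n) hKpos.le)
      · refine hI.trans ?_
        rw [sub_zero, abs_of_nonneg ht₀.1]
        have hε' := hεpos n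
        have h4 : 0 ≤ K * (ε n * B * (1 + ‖u n t₀‖)) := by positivity
        exact mul_le_mul_of_nonneg_left ht₀.2 h4
    have hMx : ‖u n t₀‖ ≤ Cb := by
      have hnn : (0:ℝ) ≤ ‖u n t₀‖ := norm_nonneg _
      have hKR : (0:ℝ) ≤ K * R := by positivity
      have hmul := mul_le_mul_of_nonneg_right hTKB
        (by linarith : (0:ℝ) ≤ 1 + ‖u n t₀‖)
      nlinarith [hCbdef]
    intro t ht
    exact (hmax t ht).trans hMx
  -- u stays close to S t x
  have hclose : ∀ n, ∀ t ∈ Icc (0:ℝ) T, ‖u n t - S t (x n)‖ ≤ ε n * C₂ := by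
    intro n t ht
    have heq := heqn n t ht
    have hI : ‖∫ τ in (0:ℝ)..t,
        S (t - τ) (ε n • P (F τ (s n • u n τ + (1 - s n) • P (x n))) +
          (ε n * s n) • (F τ (u n τ) - P (F τ (u n τ))))‖ ≤
        K * (ε n * B * (1 + Cb)) * |t - 0| := by
      apply intervalIntegral.norm_integral_le_of_norm_le_const
      intro τ hτ
      rw [uIoc_of_le ht.1] at hτ
      have hτIcc : τ ∈ Icc (0:ℝ) T := ⟨hτ.1.le, hτ.2.trans ht.2⟩
      have h1 : t - τ ∈ Icc (0:ℝ) T := ⟨by linarith [hτ.2], by linarith [hτ.1, ht.2]⟩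
      refine (hSnorm _ h1 _).trans ?_
      have h2 := hZb n τ hτIcc
      have h3 := hub n τ hτIcc
      calc K * ‖ε n • P (F τ (s n • u n τ + (1 - s n) • P (x n))) +
            (ε n * s n) • (F τ (u n τ) - P (F τ (u n τ)))‖ ≤
            K * (ε n * B * (1 + ‖u n τ‖)) := mul_le_mul_of_nonneg_left h2 hKpos.le
        _ ≤ K * (ε n * B * (1 + Cb)) := by
            refine mul_le_mul_of_nonneg_left ?_ hKpos.le
            rw [mul_assoc (ε n) B, mul_assoc (ε n) B]
            exact mul_le_mul_of_nonneg_left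
              (mul_le_mul_of_nonneg_left (by linarith) hBpos.le) (hεpos n).le
    have h5 : u n t - S t (x n) = ∫ τ in (0:ℝ)..t,
        S (t - τ) (ε n • P (F τ (s n • u n τ + (1 - s n) • P (x n))) +
          (ε n * s n) • (F τ (u n τ) - P (F τ (u n τ)))) := by
      rw [heq]; abel
    rw [h5]
    refine hI.trans ?_
    rw [sub_zero, abs_of_nonneg ht.1]
    have h6 : K * (ε n * B * (1 + Cb)) * t ≤ K * (ε n * B * (1 + Cb)) * T := by
      have hp : (0:ℝ) ≤ K * (ε n * B * (1 + Cb)) := by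
        have := hCb0
        have hε' := hεpos n
        positivity
      exact mul_le_mul_of_nonneg_left ht.2 hp
    refine h6.trans (le_of_eq ?_)
    rw [hC₂def]; ring
  -- continuity of the integrand and the key integral identity
  have hargcont : ∀ n, ContinuousOn (fun τ => s n • u n τ + (1 - s n) • P (x n))
      (Icc (0:ℝ) T) := fun n => ((hucont n).const_smul _).add continuousOn_const
  have hFycont : ∀ n, ContinuousOn
      (fun τ => F τ (s n • u n τ + (1 - s n) • P (x n))) (Icc (0:ℝ) T) := by
    intro n
    exact ContinuousOn.comp hFcont (continuousOn_id.prodMk (hargcont n)) (fun τ hτ => hτ.1)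
  have hFucont : ∀ n, ContinuousOn (fun τ => F τ (u n τ)) (Icc (0:ℝ) T) := by
    intro n
    exact ContinuousOn.comp hFcont (continuousOn_id.prodMk (hucont n)) (fun τ hτ => hτ.1)
  have hZcont : ∀ n, ContinuousOn
      (fun τ => ε n • P (F τ (s n • u n τ + (1 - s n) • P (x n))) +
        (ε n * s n) • (F τ (u n τ) - P (F τ (u n τ)))) (Icc (0:ℝ) T) := fun n =>
    ((P.continuous.comp_continuousOn (hFycont n)).const_smul _).add
      (((hFucont n).sub (P.continuous.comp_continuousOn (hFucont n))).const_smul _)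
  have hSZint : ∀ n, IntervalIntegrable
      (fun τ => S (T - τ) (ε n • P (F τ (s n • u n τ + (1 - s n) • P (x n))) +
        (ε n * s n) • (F τ (u n τ) - P (F τ (u n τ))))) volume 0 T := by
    intro n
    apply ContinuousOn.intervalIntegrable
    rw [uIcc_of_le hT.le]
    exact sg_param_cont S hScont hK hT.le le_rfl (hZcont n)
  have hPint : ∀ n, (∫ τ in (0:ℝ)..T, P (F τ (s n • u n τ + (1 - s n) • P (x n)))) = 0 := by
    intro n
    have heq := heqn n T (right_mem_Icc.2 hT.le)
    have hPeq := congrArg (⇑P) heq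
    rw [huT n, map_add, hPS T hT.le, ← P.intervalIntegral_comp_comm (hSZint n)] at hPeq
    have hcongr : (∫ τ in (0:ℝ)..T,
        P (S (T - τ) (ε n • P (F τ (s n • u n τ + (1 - s n) • P (x n))) +
          (ε n * s n) • (F τ (u n τ) - P (F τ (u n τ)))))) =
        ∫ τ in (0:ℝ)..T, ε n • P (F τ (s n • u n τ + (1 - s n) • P (x n))) := by
      apply intervalIntegral.integral_congr
      intro τ hτ
      rw [uIcc_of_le hT.le] at hτ
      have hr : (0:ℝ) ≤ T - τ := by linarith [hτ.2]
      simp only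
      rw [hPS _ hr, map_add, P.map_smul, P.map_smul, map_sub, hPP, hPP, sub_self,
        smul_zero, add_zero]
    rw [hcongr, intervalIntegral.integral_smul] at hPeq
    have h0 : ε n • (∫ τ in (0:ℝ)..T, P (F τ (s n • u n τ + (1 - s n) • P (x n)))) = 0 :=
      (left_eq_add.mp hPeq)
    exact (smul_eq_zero.mp h0).resolve_left (ne_of_gt (hεpos n))
  -- ε tends to zero
  have hεtend : Tendsto ε atTop (𝓝 0) := by
    have hb : Tendsto (fun n : ℕ => δ / (n + 1)) atTop (𝓝 0) := by
      simpa [div_eq_mul_inv] using tendsto_one_div_add_atTop_nhds_zero_nat.const_mul δ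
    exact squeeze_zero (fun n => (hεpos n).le) (fun n => (hε n).2) (by simpa using hb)
  -- compactness: extract a convergent subsequence of x
  obtain ⟨z, hzmem, φ, hφmono, hφconv⟩ : ∃ z ∈ closure (S T '' Metric.closedBall (0:X) R),
      ∃ φ : ℕ → ℕ, StrictMono φ ∧ Tendsto ((fun n => S T (x n)) ∘ φ) atTop (𝓝 z) := by
    apply (hScomp T hT _ (Metric.isBounded_closedBall)).tendsto_subseq
    intro n
    exact subset_closure ⟨x n, Metric.mem_closedBall.2 (by simpa using hxR n), rfl⟩
  have hεφ : Tendsto (fun k => ε (φ k)) atTop (𝓝 0) :=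
    hεtend.comp (hφmono.tendsto_atTop)
  have hxconv : Tendsto (fun k => x (φ k)) atTop (𝓝 z) := by
    have hvx : Tendsto (fun k => x (φ k) - S T (x (φ k))) atTop (𝓝 0) := by
      apply tendsto_zero_iff_norm_tendsto_zero.mpr
      refine squeeze_zero (fun k => norm_nonneg _) (fun k => ?_) (by simpa using hεφ.mul_const C₂)
      have := hclose (φ k) T (right_mem_Icc.2 hT.le)
      rwa [huT (φ k)] at this
    have := hφconv.add hvx
    simp only [add_zero] at this
    refine this.congr fun k => ?_
    simp [Function.comp]
  have hzfr : z ∈ frontier A :=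
    isClosed_frontier.mem_of_tendsto hxconv (Eventually.of_forall fun k => hxA _)
  have hzfix : S T z = z :=
    tendsto_nhds_unique (((S T).continuous.tendsto z).comp hxconv) hφconv
  have hzN : z ∈ N := (hN z).2 hzfix
  -- identify z with a frontier point of U
  obtain ⟨a, haU, haz⟩ : ∃ a : ↥N, a ∈ frontier U ∧ (a : X) = z := by
    have hecont : Continuous (Submodule.prodEquivOfIsCompl N M hcompl) := by
      have h1 : ⇑(Submodule.prodEquivOfIsCompl N M hcompl) =
          fun q : ↥N × ↥M => (q.1 : X) + (q.2 : X) := by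
        funext q
        exact Submodule.coe_prodEquivOfIsCompl' N M hcompl q
      rw [h1]
      exact (continuous_subtype_val.comp continuous_fst).add
        (continuous_subtype_val.comp continuous_snd)
    set E := (Submodule.prodEquivOfIsCompl N M hcompl).toContinuousLinearEquivOfContinuous
      hecont with hEdef
    have hEcoe : ⇑E = fun q : ↥N × ↥M => (q.1 : X) + (q.2 : X) := by
      funext q
      exact Submodule.coe_prodEquivOfIsCompl' N M hcompl q
    have hAeq : ⇑E '' (U ×ˢ V) = A := by
      rw [hEcoe, hAdef]
      exact Set.image_prod (fun (a : ↥N) (b : ↥M) => (a : X) + (b : X))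
    have h2 : z ∈ frontier (⇑E.toHomeomorph '' (U ×ˢ V)) := by
      have : ⇑E.toHomeomorph = ⇑E := rfl
      rw [this, hAeq]
      exact hzfr
    rw [← E.toHomeomorph.image_frontier] at h2
    obtain ⟨⟨a, b⟩, hab, habz⟩ := h2
    have habz' : (a : X) + (b : X) = z := habz
    have hfrprod : frontier (U ×ˢ V) = closure (U ×ˢ V) \ (U ×ˢ V) := by
      rw [frontier, (hUo.prod hVo).interior_eq]
    rw [hfrprod] at hab
    have hacl : a ∈ closure U := by
      have := hab.1
      rw [closure_prod_eq] at this
      exact this.1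
    have hbN : (b : X) ∈ N := by
      have hbx : (b : X) = z - (a : X) := by rw [← habz']; abel
      rw [hbx]
      exact N.sub_mem hzN a.2
    have hb0 : (b : X) = 0 := Submodule.disjoint_def.mp hcompl.disjoint (b : X) hbN b.2
    have hbzero : b = 0 := Subtype.ext hb0
    have hanotU : a ∉ U := by
      intro haU'
      exact hab.2 ⟨haU', by rw [hbzero] at *; exact hV0⟩
    refine ⟨a, ?_, ?_⟩
    · have hfrU : frontier U = closure U \ U := by rw [frontier, hUo.interior_eq]
      rw [hfrU]
      exact ⟨hacl, hanotU⟩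
    · rw [← habz', hb0, add_zero]
  -- limit of the arguments
  have hyconv : ∀ τ ∈ Icc (0:ℝ) T,
      Tendsto (fun k => s (φ k) • u (φ k) τ + (1 - s (φ k)) • P (x (φ k))) atTop (𝓝 z) := by
    intro τ hτ
    apply tendsto_iff_norm_sub_tendsto_zero.mpr
    have hbnd : ∀ k, ‖(s (φ k) • u (φ k) τ + (1 - s (φ k)) • P (x (φ k))) - z‖ ≤
        ε (φ k) * C₂ + (K + p) * ‖x (φ k) - z‖ := by
      intro k
      have hs0 := (hs (φ k)).1
      have hs1 := (hs (φ k)).2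
      have hdecomp : (s (φ k) • u (φ k) τ + (1 - s (φ k)) • P (x (φ k))) - z =
          s (φ k) • (u (φ k) τ - z) + (1 - s (φ k)) • (P (x (φ k)) - z) := by
        module
      rw [hdecomp]
      have h1 : ‖u (φ k) τ - z‖ ≤ ε (φ k) * C₂ + K * ‖x (φ k) - z‖ := by
        have e1 : u (φ k) τ - z = (u (φ k) τ - S τ (x (φ k))) + S τ (x (φ k) - z) := by
          rw [map_sub, hSN z hzN τ hτ.1]
          abel
        rw [e1]
        exact (norm_add_le _ _).trans (add_le_add (hclose (φ k) τ hτ) (hSnorm τ hτ _))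
      have h2 : ‖P (x (φ k)) - z‖ ≤ p * ‖x (φ k) - z‖ := by
        have e2 : P (x (φ k)) - z = P (x (φ k) - z) := by rw [map_sub, hPid z hzN]
        rw [e2]
        exact hPnorm _
      have h3 : ‖s (φ k) • (u (φ k) τ - z)‖ ≤ ‖u (φ k) τ - z‖ := by
        rw [norm_smul, Real.norm_eq_abs, abs_of_nonneg hs0]
        nlinarith [norm_nonneg (u (φ k) τ - z)]
      have h4 : ‖(1 - s (φ k)) • (P (x (φ k)) - z)‖ ≤ ‖P (x (φ k)) - z‖ := by
        rw [norm_smul, Real.norm_eq_abs, abs_of_nonneg (by linarith : (0:ℝ) ≤ 1 - s (φ k))]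
        nlinarith [norm_nonneg (P (x (φ k)) - z)]
      refine (norm_add_le _ _).trans ?_
      linarith
    refine squeeze_zero (fun k => norm_nonneg _) hbnd ?_
    have hlim := (hεφ.mul_const C₂).add
      ((tendsto_iff_norm_sub_tendsto_zero.mp hxconv).const_mul (K + p))
    simpa using hlim
  -- dominated convergence
  have hDCT : Tendsto (fun k => ∫ τ in (0:ℝ)..T,
      P (F τ (s (φ k) • u (φ k) τ + (1 - s (φ k)) • P (x (φ k))))) atTop
      (𝓝 (∫ τ in (0:ℝ)..T, P (F τ z))) := by
    refine intervalIntegral.tendsto_integral_filter_of_dominated_convergence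
      (fun _ => p * (c₀ * (1 + (Cb + p * R)))) ?_ ?_ ?_ ?_
    · apply Eventually.of_forall
      intro k
      refine ContinuousOn.aestronglyMeasurable ?_ measurableSet_uIoc
      exact (P.continuous.comp_continuousOn (hFycont (φ k))).mono
        (by rw [uIoc_of_le hT.le]; exact Ioc_subset_Icc_self)
    · apply Eventually.of_forall
      intro k
      apply Eventually.of_forall
      intro τ hτ
      rw [uIoc_of_le hT.le] at hτ
      have hτIcc : τ ∈ Icc (0:ℝ) T := ⟨hτ.1.le, hτ.2⟩
      refine ((hPnorm _).trans (mul_le_mul_of_nonneg_left (hFb τ hτIcc _) hp0.le)).trans ?_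
      have h2 := hyb (φ k) τ
      have h3 := hub (φ k) τ hτIcc
      have h4 : 1 + ‖s (φ k) • u (φ k) τ + (1 - s (φ k)) • P (x (φ k))‖ ≤
          1 + (Cb + p * R) := by linarith
      exact mul_le_mul_of_nonneg_left (mul_le_mul_of_nonneg_left h4 hc₀0) hp0.le
    · exact intervalIntegrable_const
    · apply Eventually.of_forall
      intro τ hτ
      rw [uIoc_of_le hT.le] at hτ
      have hτIcc : τ ∈ Icc (0:ℝ) T := ⟨hτ.1.le, hτ.2⟩
      have hy := hyconv τ hτIcc
      have h1 : Tendsto (fun k => (τ, s (φ k) • u (φ k) τ + (1 - s (φ k)) • P (x (φ k))))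
          atTop (𝓝[{q : ℝ × X | 0 ≤ q.1}] (τ, z)) := by
        apply tendsto_nhdsWithin_of_tendsto_nhds_of_eventually_within
        · exact tendsto_const_nhds.prodMk_nhds hy
        · exact Eventually.of_forall fun k => hτIcc.1
      have h2 := (hFcont (τ, z) hτIcc.1).tendsto.comp h1
      exact (P.continuous.tendsto _).comp h2
  have hzero : (∫ τ in (0:ℝ)..T, P (F τ z)) = 0 := by
    have h0 : Tendsto (fun k : ℕ => (0 : X)) atTop (𝓝 (∫ τ in (0:ℝ)..T, P (F τ z))) := by
      refine hDCT.congr fun k => ?_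
      exact hPint (φ k)
    exact (tendsto_nhds_unique tendsto_const_nhds h0).symm
  exact hg a haU (by rw [haz]; exact hzero)
end

section
/- Let Ω⊆ℝⁿ be an open bounded set, X = L²(Ω) (real), T>0, N a finite-dimensional subspace of X, and P:X→X the orthogonal projection onto N. Let f:[0,∞)×Ω×ℝ→ℝ be continuous satisfying conditions (a) and (d), let F be the associated Nemytskii operator, and define g:N→N by g(u) := ∫₀ᵀ P F(t,u) dt. If for every u∈N with ‖u‖=1 one has ∫₀ᵀ∫_{{u>0}} f₊(t,x)u(x) dx dt + ∫₀ᵀ∫_{{u<0}} f₋(t,x)u(x) dx dt ≠ 0, then there exists R₀>0 such that g(u)≠0 for every u∈N with ‖u‖≥R₀. -/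
open MeasureTheory Set Filter Topology Bornology intervalIntegral
open scoped RealInnerProductSpace

set_option maxHeartbeats 1000000
set_option synthInstance.maxHeartbeats 400000

private lemma aux_contOn_integral {n : ℕ} {Ω : Set (EuclideanSpace ℝ (Fin n))}
    (hΩo : IsOpen Ω) {φ : ℝ → EuclideanSpace ℝ (Fin n) → ℝ}
    (hφc : ContinuousOn (fun p : ℝ × EuclideanSpace ℝ (Fin n) => φ p.1 p.2)
      (Set.Ici (0:ℝ) ×ˢ Ω))
    {m : ℝ}
    (hφb : ∀ t : ℝ, 0 ≤ t → ∀ x ∈ Ω, |φ t x| ≤ m)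
    {w : EuclideanSpace ℝ (Fin n) → ℝ} (hw : Integrable w (volume.restrict Ω))
    {s : Set (EuclideanSpace ℝ (Fin n))} (hs : MeasurableSet s)
    {T : ℝ} :
    ContinuousOn (fun t => ∫ x in s, φ t x * w x ∂(volume.restrict Ω)) (Set.Icc 0 T) := by
  intro t₀ ht₀
  have hxΩ : ∀ᵐ x ∂((volume.restrict Ω).restrict s), x ∈ Ω :=
    ae_restrict_of_ae (ae_restrict_mem hΩo.measurableSet)
  refine MeasureTheory.tendsto_integral_filter_of_dominated_convergence
    (fun x => m * |w x|) ?_ ?_ ?_ ?_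
  · filter_upwards [eventually_mem_nhdsWithin] with t ht
    have hc : ContinuousOn (fun x => φ t x) Ω := by
      have : ContinuousOn ((fun p : ℝ × EuclideanSpace ℝ (Fin n) => φ p.1 p.2)
          ∘ fun x => (t, x)) Ω :=
        hφc.comp ((continuous_const.prodMk continuous_id).continuousOn)
          (fun x hx => ⟨ht.1, hx⟩)
      exact this
    exact ((hc.aestronglyMeasurable hΩo.measurableSet).restrict.mul hw.1.restrict)
  · filter_upwards [eventually_mem_nhdsWithin] with t ht
    filter_upwards [hxΩ] with x hx
    rw [Real.norm_eq_abs, abs_mul]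
    exact mul_le_mul_of_nonneg_right (hφb t ht.1 x hx) (abs_nonneg _)
  · exact (hw.abs.const_mul m).restrict
  · filter_upwards [hxΩ] with x hx
    have h1 : ContinuousWithinAt ((fun p : ℝ × EuclideanSpace ℝ (Fin n) => φ p.1 p.2)
        ∘ fun t => (t, x)) (Set.Icc 0 T) t₀ :=
      ContinuousWithinAt.comp (hφc (t₀, x) ⟨ht₀.1, hx⟩)
        ((continuous_id.prodMk continuous_const).continuousWithinAt)
        (fun t ht => ⟨ht.1, hx⟩)
    exact h1.mul continuousWithinAt_const

private lemma aux_contOn_F {n : ℕ} {Ω : Set (EuclideanSpace ℝ (Fin n))}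
    (hΩo : IsOpen Ω) [IsFiniteMeasure (volume.restrict Ω : Measure (EuclideanSpace ℝ (Fin n)))]
    {f : ℝ → EuclideanSpace ℝ (Fin n) → ℝ → ℝ}
    (hfc : ContinuousOn (fun p : ℝ × EuclideanSpace ℝ (Fin n) × ℝ =>
      f p.1 p.2.1 p.2.2) (Set.Ici (0:ℝ) ×ˢ Ω ×ˢ Set.univ))
    {m : ℝ}
    (hfa : ∀ t : ℝ, 0 ≤ t → ∀ x ∈ Ω, ∀ y : ℝ, |f t x y| ≤ m)
    {F : ℝ → Lp ℝ 2 (volume.restrict Ω) → Lp ℝ 2 (volume.restrict Ω)}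
    (hF : ∀ t : ℝ, 0 ≤ t → ∀ u : Lp ℝ 2 (volume.restrict Ω),
      ∀ᵐ x ∂(volume.restrict Ω), F t u x = f t x (u x))
    (u : Lp ℝ 2 (volume.restrict Ω)) {T : ℝ} :
    ContinuousOn (fun t => F t u) (Set.Icc 0 T) := by
  intro t₀ ht₀
  have hxΩ : ∀ᵐ x ∂(volume.restrict Ω), x ∈ Ω := ae_restrict_mem hΩo.measurableSet
  set G : ℝ → ℝ := fun t => ∫ x, (f t x (u x) - f t₀ x (u x))^2 ∂(volume.restrict Ω) with hGdef
  have hGnorm : ∀ t, 0 ≤ t → ‖F t u - F t₀ u‖ = Real.sqrt (G t) := by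
    intro t ht
    have h1 : ⟪F t u - F t₀ u, F t u - F t₀ u⟫ = G t := by
      rw [MeasureTheory.L2.inner_def, hGdef]
      refine integral_congr_ae ?_
      filter_upwards [Lp.coeFn_sub (F t u) (F t₀ u), hF t ht u, hF t₀ ht₀.1 u]
        with x h1 h2 h3
      rw [h1]
      simp [RCLike.inner_apply, h2, h3, sq]
    rw [← Real.sqrt_sq (norm_nonneg (F t u - F t₀ u)), ← real_inner_self_eq_norm_sq, h1]
  have hG0 : Tendsto G (𝓝[Set.Icc 0 T] t₀) (𝓝 0) := by
    have h0 := MeasureTheory.tendsto_integral_filter_of_dominated_convergence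
      (μ := volume.restrict Ω) (l := 𝓝[Set.Icc 0 T] t₀)
      (F := fun t x => (f t x (u x) - f t₀ x (u x))^2) (f := fun _ => (0:ℝ))
      (fun _ => (2*m)^2) ?_ ?_ ?_ ?_
    · simpa using h0
    · filter_upwards [eventually_mem_nhdsWithin] with t ht
      refine AEStronglyMeasurable.congr
        ((((Lp.aestronglyMeasurable (F t u)).sub
          (Lp.aestronglyMeasurable (F t₀ u))).pow 2)) ?_
      filter_upwards [hF t ht.1 u, hF t₀ ht₀.1 u] with x h2 h3
      simp [h2, h3]
    · filter_upwards [eventually_mem_nhdsWithin] with t ht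
      filter_upwards [hxΩ] with x hx
      have hb : |f t x (u x) - f t₀ x (u x)| ≤ 2*m := by
        calc |f t x (u x) - f t₀ x (u x)| ≤ |f t x (u x)| + |f t₀ x (u x)| := abs_sub _ _
        _ ≤ m + m := add_le_add (hfa t ht.1 x hx _) (hfa t₀ ht₀.1 x hx _)
        _ = 2*m := by ring
      rw [Real.norm_eq_abs, abs_pow]
      exact pow_le_pow_left₀ (abs_nonneg _) hb 2
    · exact integrable_const _
    · filter_upwards [hxΩ] with x hx
      have h1 : ContinuousWithinAt ((fun p : ℝ × EuclideanSpace ℝ (Fin n) × ℝ =>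
          f p.1 p.2.1 p.2.2) ∘ fun t => (t, x, u x)) (Set.Icc 0 T) t₀ :=
        ContinuousWithinAt.comp (hfc (t₀, x, u x) ⟨ht₀.1, hx, trivial⟩)
          ((continuous_id.prodMk continuous_const).continuousWithinAt)
          (fun t ht => ⟨ht.1, hx, trivial⟩)
      have h2 : Tendsto (fun t => (f t x (u x) - f t₀ x (u x))^2) (𝓝[Set.Icc 0 T] t₀)
          (𝓝 ((f t₀ x (u x) - f t₀ x (u x))^2)) :=
        (h1.sub (continuousWithinAt_const (b := f t₀ x (u x)))).pow 2
      simpa using h2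
  have hT0 : Tendsto (fun t => ‖F t u - F t₀ u‖) (𝓝[Set.Icc 0 T] t₀) (𝓝 0) := by
    have hsq := (Real.continuous_sqrt.tendsto 0).comp hG0
    rw [Real.sqrt_zero] at hsq
    refine hsq.congr' ?_
    filter_upwards [eventually_mem_nhdsWithin] with t ht
    exact (hGnorm t ht.1).symm
  show Tendsto (fun t => F t u) (𝓝[Set.Icc 0 T] t₀) (𝓝 (F t₀ u))
  exact tendsto_iff_norm_sub_tendsto_zero.mpr hT0
/-- under the Landesman–Lazer type condition (LL≠), the averaged
map `g(u) = ∫₀ᵀ P F(t,u) dt` has no zeros on `N` outside a large ball. -/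
theorem statement13
    (n : ℕ) (Ω : Set (EuclideanSpace ℝ (Fin n)))
    (hΩo : IsOpen Ω) (hΩb : Bornology.IsBounded Ω)
    (T : ℝ) (hT : 0 < T)
    (N : Submodule ℝ (Lp ℝ 2 (volume.restrict Ω)))
    (hNfin : FiniteDimensional ℝ ↥N)
    -- `P` is the orthogonal projection onto `N`
    (P : Lp ℝ 2 (volume.restrict Ω) →L[ℝ] Lp ℝ 2 (volume.restrict Ω))
    (hPmem : ∀ x : Lp ℝ 2 (volume.restrict Ω), P x ∈ N)
    (hPorth : ∀ x : Lp ℝ 2 (volume.restrict Ω), ∀ y ∈ N, ⟪x - P x, y⟫ = (0:ℝ))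
    (f : ℝ → EuclideanSpace ℝ (Fin n) → ℝ → ℝ)
    (hfc : ContinuousOn (fun p : ℝ × EuclideanSpace ℝ (Fin n) × ℝ =>
      f p.1 p.2.1 p.2.2) (Set.Ici (0:ℝ) ×ˢ Ω ×ˢ Set.univ))
    -- condition (a): boundedness
    (m : ℝ) (hm : 0 < m)
    (hfa : ∀ t : ℝ, 0 ≤ t → ∀ x ∈ Ω, ∀ y : ℝ, |f t x y| ≤ m)
    -- condition (d): limits at ±∞
    (fp fm : ℝ → EuclideanSpace ℝ (Fin n) → ℝ)
    (hfpc : ContinuousOn (fun p : ℝ × EuclideanSpace ℝ (Fin n) => fp p.1 p.2)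
      (Set.Ici (0:ℝ) ×ˢ Ω))
    (hfmc : ContinuousOn (fun p : ℝ × EuclideanSpace ℝ (Fin n) => fm p.1 p.2)
      (Set.Ici (0:ℝ) ×ˢ Ω))
    (hfp : ∀ t : ℝ, 0 ≤ t → ∀ x ∈ Ω,
      Filter.Tendsto (fun y => f t x y) Filter.atTop (nhds (fp t x)))
    (hfm : ∀ t : ℝ, 0 ≤ t → ∀ x ∈ Ω,
      Filter.Tendsto (fun y => f t x y) Filter.atBot (nhds (fm t x)))
    -- `F` is the Nemytskii operator associated with `f`
    (F : ℝ → Lp ℝ 2 (volume.restrict Ω) → Lp ℝ 2 (volume.restrict Ω))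
    (hF : ∀ t : ℝ, 0 ≤ t → ∀ u : Lp ℝ 2 (volume.restrict Ω),
      ∀ᵐ x ∂(volume.restrict Ω), F t u x = f t x (u x))
    -- Landesman–Lazer type condition (LL≠)
    (hLL : ∀ u : Lp ℝ 2 (volume.restrict Ω), u ∈ N → ‖u‖ = 1 →
      (∫ t in (0:ℝ)..T, ∫ x in {x | 0 < u x}, fp t x * u x ∂(volume.restrict Ω)) +
      (∫ t in (0:ℝ)..T, ∫ x in {x | u x < 0}, fm t x * u x ∂(volume.restrict Ω))
        ≠ 0) :
    ∃ R₀ : ℝ, 0 < R₀ ∧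
      ∀ u : Lp ℝ 2 (volume.restrict Ω), u ∈ N → R₀ ≤ ‖u‖ →
        (∫ t in (0:ℝ)..T, P (F t u)) ≠ 0 := by
  classical
  haveI hμfin : IsFiniteMeasure (volume.restrict Ω) := by
    constructor
    rw [Measure.restrict_apply_univ]
    exact lt_of_le_of_lt (measure_mono subset_closure)
      hΩb.isCompact_closure.measure_lt_top
  haveI := hNfin
  by_contra hcon
  push_neg at hcon
  obtain ⟨u, hu⟩ : ∃ u : ℕ → Lp ℝ 2 (volume.restrict Ω), ∀ k : ℕ,
      u k ∈ N ∧ ((k:ℝ) + 1 ≤ ‖u k‖) ∧ (∫ t in (0:ℝ)..T, P (F t (u k))) = 0 := by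
    choose u h1 h2 h3 using fun k : ℕ => hcon ((k:ℝ) + 1) (by positivity)
    exact ⟨u, fun k => ⟨h1 k, h2 k, h3 k⟩⟩
  have hupos : ∀ k, 0 < ‖u k‖ := fun k =>
    lt_of_lt_of_le (by positivity) (hu k).2.1
  set v : ℕ → Lp ℝ 2 (volume.restrict Ω) := fun k => (‖u k‖)⁻¹ • u k with hvdef
  have hvmem : ∀ k, v k ∈ N := fun k => N.smul_mem _ (hu k).1
  have hvnorm : ∀ k, ‖v k‖ = 1 := by
    intro k
    rw [hvdef]
    simp only [norm_smul, Real.norm_eq_abs, abs_inv, abs_norm]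
    exact inv_mul_cancel₀ (hupos k).ne'
  -- compactness of the unit sphere in N
  obtain ⟨w₀, hw₀s, φ₁, hφ₁mono, hφ₁tend⟩ :=
    (isCompact_sphere (0 : ↥N) 1).tendsto_subseq
      (x := fun k => (⟨v k, hvmem k⟩ : ↥N))
      (fun k => by
        rw [mem_sphere_zero_iff_norm]
        exact hvnorm k)
  set v₀ : Lp ℝ 2 (volume.restrict Ω) := (w₀ : Lp ℝ 2 (volume.restrict Ω)) with hv₀def
  have hv₀mem : v₀ ∈ N := w₀.2
  have hv₀norm : ‖v₀‖ = 1 := by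
    have := mem_sphere_zero_iff_norm.mp hw₀s
    simpa [hv₀def] using this
  have hvtend : Tendsto (fun k => v (φ₁ k)) atTop (𝓝 v₀) :=
    ((continuous_subtype_val.tendsto w₀).comp hφ₁tend)
  -- a.e. convergent subsequence
  have helpn : Tendsto (fun k => eLpNorm (⇑(v (φ₁ k)) - ⇑v₀) 2 (volume.restrict Ω))
      atTop (𝓝 0) :=
    (Lp.tendsto_Lp_iff_tendsto_eLpNorm' _ _).mp hvtend
  have hmeasconv : TendstoInMeasure (volume.restrict Ω) (fun k => ⇑(v (φ₁ k))) atTop ⇑v₀ :=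
    tendstoInMeasure_of_tendsto_eLpNorm (by norm_num)
      (fun k => Lp.aestronglyMeasurable _) (Lp.aestronglyMeasurable _) helpn
  obtain ⟨ψ, hψmono, haeconv⟩ := hmeasconv.exists_seq_tendsto_ae
  set σ : ℕ → ℕ := fun k => φ₁ (ψ k) with hσdef
  have hσmono : StrictMono σ := hφ₁mono.comp hψmono
  -- a.e. identity u (σ k) = ‖u (σ k)‖ * v (σ k)
  have haeid : ∀ᵐ x ∂(volume.restrict Ω), ∀ k, (u (σ k)) x = ‖u (σ k)‖ * (v (σ k)) x := by
    rw [ae_all_iff]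
    intro k
    filter_upwards [Lp.coeFn_smul (‖u (σ k)‖)⁻¹ (u (σ k))] with x hx
    have : (v (σ k)) x = (‖u (σ k)‖)⁻¹ * (u (σ k)) x := hx
    rw [this, ← mul_assoc, mul_inv_cancel₀ (hupos (σ k)).ne', one_mul]
  have hutop : Tendsto (fun k => ‖u (σ k)‖) atTop atTop := by
    refine tendsto_atTop_mono (fun k => ?_)
      (tendsto_atTop_add_const_right _ 1 tendsto_natCast_atTop_atTop)
    calc ((k:ℝ) + 1) ≤ ((σ k : ℕ) : ℝ) + 1 := by
          gcongr
          exact_mod_cast hσmono.le_apply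
    _ ≤ ‖u (σ k)‖ := (hu (σ k)).2.1
  -- bounds for fp and fm
  have hfpb : ∀ t : ℝ, 0 ≤ t → ∀ x ∈ Ω, |fp t x| ≤ m := fun t ht x hx =>
    le_of_tendsto ((continuous_abs.tendsto _).comp (hfp t ht x hx))
      (Eventually.of_forall fun y => hfa t ht x hx y)
  have hfmb : ∀ t : ℝ, 0 ≤ t → ∀ x ∈ Ω, |fm t x| ≤ m := fun t ht x hx =>
    le_of_tendsto ((continuous_abs.tendsto _).comp (hfm t ht x hx))
      (Eventually.of_forall fun y => hfa t ht x hx y)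
  have hxΩ : ∀ᵐ x ∂(volume.restrict Ω), x ∈ Ω := ae_restrict_mem hΩo.measurableSet
  have hv₀int : Integrable (⇑v₀) (volume.restrict Ω) :=
    (Lp.memLp v₀).integrable (by norm_num)
  have hv₀meas := (Lp.stronglyMeasurable v₀).measurable
  have hsp : MeasurableSet {x | 0 < v₀ x} := measurableSet_lt measurable_const hv₀meas
  have hsm : MeasurableSet {x | v₀ x < 0} := measurableSet_lt hv₀meas measurable_const
  -- the key pointwise (in t) convergence
  have key : ∀ t : ℝ, 0 ≤ t →
      Tendsto (fun k => ∫ x, f t x ((u (σ k)) x) * v₀ x ∂(volume.restrict Ω)) atTop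
        (𝓝 ((∫ x in {x | 0 < v₀ x}, fp t x * v₀ x ∂(volume.restrict Ω)) +
            (∫ x in {x | v₀ x < 0}, fm t x * v₀ x ∂(volume.restrict Ω)))) := by
    intro t ht
    have hfp_meas : AEStronglyMeasurable (fun x => fp t x) (volume.restrict Ω) := by
      have hc : ContinuousOn ((fun p : ℝ × EuclideanSpace ℝ (Fin n) => fp p.1 p.2)
          ∘ fun x => (t, x)) Ω :=
        hfpc.comp ((continuous_const.prodMk continuous_id).continuousOn)
          (fun x hx => ⟨ht, hx⟩)
      exact hc.aestronglyMeasurable hΩo.measurableSet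
    have hfm_meas : AEStronglyMeasurable (fun x => fm t x) (volume.restrict Ω) := by
      have hc : ContinuousOn ((fun p : ℝ × EuclideanSpace ℝ (Fin n) => fm p.1 p.2)
          ∘ fun x => (t, x)) Ω :=
        hfmc.comp ((continuous_const.prodMk continuous_id).continuousOn)
          (fun x hx => ⟨ht, hx⟩)
      exact hc.aestronglyMeasurable hΩo.measurableSet
    have hfpint : Integrable (fun x => fp t x * v₀ x) (volume.restrict Ω) := by
      refine Integrable.mono' (hv₀int.abs.const_mul m)
        (hfp_meas.mul (Lp.aestronglyMeasurable v₀)) ?_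
      filter_upwards [hxΩ] with x hx
      rw [Real.norm_eq_abs, abs_mul]
      exact mul_le_mul_of_nonneg_right (hfpb t ht x hx) (abs_nonneg _)
    have hfmint : Integrable (fun x => fm t x * v₀ x) (volume.restrict Ω) := by
      refine Integrable.mono' (hv₀int.abs.const_mul m)
        (hfm_meas.mul (Lp.aestronglyMeasurable v₀)) ?_
      filter_upwards [hxΩ] with x hx
      rw [Real.norm_eq_abs, abs_mul]
      exact mul_le_mul_of_nonneg_right (hfmb t ht x hx) (abs_nonneg _)
    have hsum : (∫ x in {x | 0 < v₀ x}, fp t x * v₀ x ∂(volume.restrict Ω)) +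
        (∫ x in {x | v₀ x < 0}, fm t x * v₀ x ∂(volume.restrict Ω)) =
        ∫ x, ({x | 0 < v₀ x}.indicator (fun x => fp t x * v₀ x) x +
          {x | v₀ x < 0}.indicator (fun x => fm t x * v₀ x) x) ∂(volume.restrict Ω) := by
      rw [integral_add (hfpint.indicator hsp) (hfmint.indicator hsm),
        MeasureTheory.integral_indicator hsp, MeasureTheory.integral_indicator hsm]
    rw [hsum]
    refine tendsto_integral_of_dominated_convergence (fun x => m * |v₀ x|) ?_
      (hv₀int.abs.const_mul m) ?_ ?_
    · intro k
      refine AEStronglyMeasurable.congr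
        ((Lp.aestronglyMeasurable (F t (u (σ k)))).mul (Lp.aestronglyMeasurable v₀)) ?_
      filter_upwards [hF t ht (u (σ k))] with x hx
      simp only [Pi.mul_apply, hx]
    · intro k
      filter_upwards [hxΩ] with x hx
      rw [Real.norm_eq_abs, abs_mul]
      exact mul_le_mul_of_nonneg_right (hfa t ht x hx _) (abs_nonneg _)
    · filter_upwards [hxΩ, haeid, haeconv] with x hx hid hcv
      rcases lt_trichotomy (v₀ x) 0 with hneg | hzero | hpos
      · have hval : {x | 0 < v₀ x}.indicator (fun x => fp t x * v₀ x) x +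
            {x | v₀ x < 0}.indicator (fun x => fm t x * v₀ x) x = fm t x * v₀ x := by
          rw [Set.indicator_of_notMem (by simp [not_lt.mpr hneg.le]),
            Set.indicator_of_mem (by simpa using hneg), zero_add]
        rw [hval]
        have h1 : Tendsto (fun k => (u (σ k)) x) atTop atBot := by
          refine (hutop.atTop_mul_neg hneg hcv).congr (fun k => (hid k).symm)
        exact ((hfm t ht x hx).comp h1).mul_const (v₀ x)
      · have hval : {x | 0 < v₀ x}.indicator (fun x => fp t x * v₀ x) x +
            {x | v₀ x < 0}.indicator (fun x => fm t x * v₀ x) x = 0 := by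
          rw [Set.indicator_of_notMem (by simp [hzero]),
            Set.indicator_of_notMem (by simp [hzero]), add_zero]
        rw [hval]
        have : (fun k => f t x ((u (σ k)) x) * v₀ x) = fun _ => (0:ℝ) := by
          funext k; rw [hzero, mul_zero]
        rw [this]
        exact tendsto_const_nhds
      · have hval : {x | 0 < v₀ x}.indicator (fun x => fp t x * v₀ x) x +
            {x | v₀ x < 0}.indicator (fun x => fm t x * v₀ x) x = fp t x * v₀ x := by
          rw [Set.indicator_of_mem (by simpa using hpos),
            Set.indicator_of_notMem (by simp [not_lt.mpr hpos.le]), add_zero]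
        rw [hval]
        have h1 : Tendsto (fun k => (u (σ k)) x) atTop atTop := by
          refine (hutop.atTop_mul_pos hpos hcv).congr (fun k => (hid k).symm)
        exact ((hfp t ht x hx).comp h1).mul_const (v₀ x)
  -- continuity of t ↦ F t (u (σ k)) and interval integrability
  have hFcont : ∀ k, ContinuousOn (fun t => F t (u (σ k))) (Set.Icc 0 T) :=
    fun k => aux_contOn_F hΩo hfc hfa hF (u (σ k))
  have hPFii : ∀ k, IntervalIntegrable (fun t => P (F t (u (σ k)))) volume 0 T := by
    intro k
    apply ContinuousOn.intervalIntegrable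
    rw [Set.uIcc_of_le hT.le]
    exact P.continuous.comp_continuousOn (hFcont k)
  -- inner product formula
  have hinner : ∀ k, ∀ t : ℝ, 0 ≤ t → ⟪v₀, P (F t (u (σ k)))⟫ =
      ∫ x, f t x ((u (σ k)) x) * v₀ x ∂(volume.restrict Ω) := by
    intro k t ht
    have h1 : ⟪v₀, P (F t (u (σ k)))⟫ = ⟪v₀, F t (u (σ k))⟫ := by
      have h2 := hPorth (F t (u (σ k))) v₀ hv₀mem
      rw [inner_sub_left] at h2
      have e1 : ⟪v₀, P (F t (u (σ k)))⟫ = ⟪P (F t (u (σ k))), v₀⟫ := real_inner_comm _ _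
      have e2 : ⟪v₀, F t (u (σ k))⟫ = ⟪F t (u (σ k)), v₀⟫ := real_inner_comm _ _
      rw [e1, e2]
      linarith
    rw [h1, MeasureTheory.L2.inner_def]
    refine integral_congr_ae ?_
    filter_upwards [hF t ht (u (σ k))] with x hx
    simp [RCLike.inner_apply, hx, mul_comm]
  -- uniform bound for the inner products
  obtain ⟨C₀, hC₀⟩ : ∃ C₀ : ℝ, ∀ w : Lp ℝ 2 (volume.restrict Ω),
      (∀ᵐ x ∂(volume.restrict Ω), ‖w x‖ ≤ m) → ‖w‖ ≤ C₀ :=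
    ⟨_, fun w h => Lp.norm_le_of_ae_bound hm.le h⟩
  have hFb : ∀ k, ∀ t : ℝ, 0 ≤ t → ‖F t (u (σ k))‖ ≤ C₀ := by
    intro k t ht
    refine hC₀ _ ?_
    filter_upwards [hF t ht (u (σ k)), hxΩ] with x hx hxo
    rw [hx, Real.norm_eq_abs]
    exact hfa t ht x hxo _
  -- dominated convergence for the interval integrals
  have hTint : Tendsto (fun k => ∫ t in (0:ℝ)..T, ⟪v₀, P (F t (u (σ k)))⟫) atTop
      (𝓝 (∫ t in (0:ℝ)..T,
        ((∫ x in {x | 0 < v₀ x}, fp t x * v₀ x ∂(volume.restrict Ω)) +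
         (∫ x in {x | v₀ x < 0}, fm t x * v₀ x ∂(volume.restrict Ω))))) := by
    refine intervalIntegral.tendsto_integral_filter_of_dominated_convergence
      (fun _ => ‖v₀‖ * (‖P‖ * C₀)) ?_ ?_ ?_ ?_
    · refine Eventually.of_forall fun k => ?_
      have hcont : ContinuousOn (fun t => ⟪v₀, P (F t (u (σ k)))⟫) (Set.Icc 0 T) := by
        have := ((innerSL ℝ v₀).continuous.comp P.continuous).comp_continuousOn (hFcont k)
        exact this
      refine (hcont.mono ?_).aestronglyMeasurable measurableSet_uIoc
      rw [Set.uIoc_of_le hT.le]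
      exact Set.Ioc_subset_Icc_self
    · refine Eventually.of_forall fun k => ?_
      refine Eventually.of_forall fun t => ?_
      intro ht
      have ht0 : (0:ℝ) ≤ t := by
        rw [Set.uIoc_of_le hT.le] at ht
        exact ht.1.le
      calc ‖⟪v₀, P (F t (u (σ k)))⟫‖ ≤ ‖v₀‖ * ‖P (F t (u (σ k)))‖ := by
            rw [Real.norm_eq_abs]
            exact abs_real_inner_le_norm _ _
      _ ≤ ‖v₀‖ * (‖P‖ * C₀) := by
            refine mul_le_mul_of_nonneg_left ?_ (norm_nonneg _)
            exact (P.le_opNorm _).trans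
              (mul_le_mul_of_nonneg_left (hFb k t ht0) (norm_nonneg _))
    · exact intervalIntegrable_const
    · refine Eventually.of_forall fun t => ?_
      intro ht
      have ht0 : (0:ℝ) ≤ t := by
        rw [Set.uIoc_of_le hT.le] at ht
        exact ht.1.le
      exact (key t ht0).congr (fun k => (hinner k t ht0).symm)
  -- each interval integral vanishes
  have hzero : ∀ k, (∫ t in (0:ℝ)..T, ⟪v₀, P (F t (u (σ k)))⟫) = 0 := by
    intro k
    have h1 := (innerSL ℝ v₀).intervalIntegral_comp_comm (hPFii k)
    rw [(hu (σ k)).2.2] at h1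
    simpa [innerSL_apply_apply] using h1
  have hlim0 : (∫ t in (0:ℝ)..T,
      ((∫ x in {x | 0 < v₀ x}, fp t x * v₀ x ∂(volume.restrict Ω)) +
       (∫ x in {x | v₀ x < 0}, fm t x * v₀ x ∂(volume.restrict Ω)))) = 0 := by
    have h2 : (fun k => ∫ t in (0:ℝ)..T, ⟪v₀, P (F t (u (σ k)))⟫) = fun _ => (0:ℝ) := by
      funext k; exact hzero k
    rw [h2] at hTint
    exact tendsto_nhds_unique hTint tendsto_const_nhds
  -- split the interval integral and contradict (LL≠)
  have hAii : IntervalIntegrable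
      (fun t => ∫ x in {x | 0 < v₀ x}, fp t x * v₀ x ∂(volume.restrict Ω)) volume 0 T := by
    apply ContinuousOn.intervalIntegrable
    rw [Set.uIcc_of_le hT.le]
    exact aux_contOn_integral hΩo hfpc hfpb hv₀int hsp
  have hBii : IntervalIntegrable
      (fun t => ∫ x in {x | v₀ x < 0}, fm t x * v₀ x ∂(volume.restrict Ω)) volume 0 T := by
    apply ContinuousOn.intervalIntegrable
    rw [Set.uIcc_of_le hT.le]
    exact aux_contOn_integral hΩo hfmc hfmb hv₀int hsm
  refine hLL v₀ hv₀mem hv₀norm ?_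
  rw [← intervalIntegral.integral_add hAii hBii]
  exact hlim0
end

section
/- Let Ω⊆ℝⁿ be an open bounded set, X = L²(Ω) (real), T>0, N a finite-dimensional subspace of X, and P:X→X the orthogonal projection onto N. Let f:[0,∞)×Ω×ℝ→ℝ be continuous satisfying conditions (a) and (d), let F be the associated Nemytskii operator, and define g:N→N by g(u) := ∫₀ᵀ P F(t,u) dt. If for every u∈N with ‖u‖=1 one has ∫₀ᵀ∫_{{u>0}} f₊(t,x)u(x) dx dt + ∫₀ᵀ∫_{{u<0}} f₋(t,x)u(x) dx dt > 0, then there exists R₀>0 such that ⟨g(u),u⟩ > 0 for every u∈N with ‖u‖≥R₀. -/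
open MeasureTheory Set Filter Topology Bornology intervalIntegral
open scoped RealInnerProductSpace

set_option maxHeartbeats 2000000
set_option synthInstance.maxHeartbeats 400000

/-- under the Landesman–Lazer type condition (LL+), the averaged
map `g(u) = ∫₀ᵀ P F(t,u) dt` satisfies `⟪g(u),u⟫ > 0` on `N` outside a large ball. -/
theorem statement14
    (n : ℕ) (Ω : Set (EuclideanSpace ℝ (Fin n)))
    (hΩo : IsOpen Ω) (hΩb : Bornology.IsBounded Ω)
    (T : ℝ) (hT : 0 < T)
    (N : Submodule ℝ (Lp ℝ 2 (volume.restrict Ω)))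
    (hNfin : FiniteDimensional ℝ ↥N)
    -- `P` is the orthogonal projection onto `N`
    (P : Lp ℝ 2 (volume.restrict Ω) →L[ℝ] Lp ℝ 2 (volume.restrict Ω))
    (hPmem : ∀ x : Lp ℝ 2 (volume.restrict Ω), P x ∈ N)
    (hPorth : ∀ x : Lp ℝ 2 (volume.restrict Ω), ∀ y ∈ N, ⟪x - P x, y⟫ = (0:ℝ))
    (f : ℝ → EuclideanSpace ℝ (Fin n) → ℝ → ℝ)
    (hfc : ContinuousOn (fun p : ℝ × EuclideanSpace ℝ (Fin n) × ℝ =>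
      f p.1 p.2.1 p.2.2) (Set.Ici (0:ℝ) ×ˢ Ω ×ˢ Set.univ))
    -- condition (a): boundedness
    (m : ℝ) (hm : 0 < m)
    (hfa : ∀ t : ℝ, 0 ≤ t → ∀ x ∈ Ω, ∀ y : ℝ, |f t x y| ≤ m)
    -- condition (d): limits at ±∞
    (fp fm : ℝ → EuclideanSpace ℝ (Fin n) → ℝ)
    (hfpc : ContinuousOn (fun p : ℝ × EuclideanSpace ℝ (Fin n) => fp p.1 p.2)
      (Set.Ici (0:ℝ) ×ˢ Ω))
    (hfmc : ContinuousOn (fun p : ℝ × EuclideanSpace ℝ (Fin n) => fm p.1 p.2)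
      (Set.Ici (0:ℝ) ×ˢ Ω))
    (hfp : ∀ t : ℝ, 0 ≤ t → ∀ x ∈ Ω,
      Filter.Tendsto (fun y => f t x y) Filter.atTop (nhds (fp t x)))
    (hfm : ∀ t : ℝ, 0 ≤ t → ∀ x ∈ Ω,
      Filter.Tendsto (fun y => f t x y) Filter.atBot (nhds (fm t x)))
    -- `F` is the Nemytskii operator associated with `f`
    (F : ℝ → Lp ℝ 2 (volume.restrict Ω) → Lp ℝ 2 (volume.restrict Ω))
    (hF : ∀ t : ℝ, 0 ≤ t → ∀ u : Lp ℝ 2 (volume.restrict Ω),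
      ∀ᵐ x ∂(volume.restrict Ω), F t u x = f t x (u x))
    -- Landesman–Lazer type condition (LL+)
    (hLL : ∀ u : Lp ℝ 2 (volume.restrict Ω), u ∈ N → ‖u‖ = 1 →
      0 < (∫ t in (0:ℝ)..T, ∫ x in {x | 0 < u x}, fp t x * u x ∂(volume.restrict Ω)) +
        (∫ t in (0:ℝ)..T, ∫ x in {x | u x < 0}, fm t x * u x ∂(volume.restrict Ω))) :
    ∃ R₀ : ℝ, 0 < R₀ ∧
      ∀ u : Lp ℝ 2 (volume.restrict Ω), u ∈ N → R₀ ≤ ‖u‖ →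
        0 < ⟪∫ t in (0:ℝ)..T, P (F t u), u⟫ := by
  haveI : IsFiniteMeasure (volume.restrict Ω : Measure (EuclideanSpace ℝ (Fin n))) := ⟨by
    rw [Measure.restrict_apply_univ]; exact hΩb.measure_lt_top⟩
  have hΩae : ∀ᵐ x ∂(volume.restrict Ω), x ∈ Ω := ae_restrict_mem hΩo.measurableSet
  have hinner : ∀ a b : Lp ℝ 2 (volume.restrict Ω), ⟪a, b⟫ = ∫ x, a x * b x ∂(volume.restrict Ω) := by
    intro a b
    rw [MeasureTheory.L2.inner_def]
    simp [RCLike.inner_apply, starRingEnd_apply]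
    exact integral_congr_ae (Filter.Eventually.of_forall fun x => mul_comm _ _)
  have hmul_int : ∀ a b : Lp ℝ 2 (volume.restrict Ω), Integrable (fun x => a x * b x) (volume.restrict Ω) := by
    intro a b
    have := MeasureTheory.L2.integrable_inner (𝕜 := ℝ) a b
    simp [RCLike.inner_apply, starRingEnd_apply] at this
    exact this.congr (Filter.Eventually.of_forall fun x => mul_comm _ _)
  have hnormsq : ∀ a : Lp ℝ 2 (volume.restrict Ω), ‖a‖ ^ 2 = ∫ x, a x * a x ∂(volume.restrict Ω) := by
    intro a
    rw [← hinner, real_inner_self_eq_norm_sq]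
  -- norm bound for a.e. bounded L² functions
  have hCb : ∀ w : Lp ℝ 2 (volume.restrict Ω), (∀ᵐ x ∂(volume.restrict Ω), |w x| ≤ m) →
      ‖w‖ ≤ m * Real.sqrt ((volume.restrict Ω) univ).toReal := by
    intro w hw
    have h1 : ‖w‖ ^ 2 ≤ m ^ 2 * ((volume.restrict Ω) univ).toReal := by
      rw [hnormsq]
      calc ∫ x, w x * w x ∂(volume.restrict Ω) ≤ ∫ _x, m ^ 2 ∂(volume.restrict Ω) := by
            apply integral_mono_ae (hmul_int w w) (integrable_const _)
            filter_upwards [hw] with x hx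
            have hxx : w x * w x = |w x| ^ 2 := by
              rw [← abs_mul_abs_self]; ring
            rw [hxx]
            exact pow_le_pow_left₀ (abs_nonneg _) hx 2
        _ = m ^ 2 * ((volume.restrict Ω) univ).toReal := by simp [mul_comm, measureReal_def]
    have h2 : m * Real.sqrt ((volume.restrict Ω) univ).toReal = Real.sqrt (m ^ 2 * ((volume.restrict Ω) univ).toReal) := by
      rw [Real.sqrt_mul (sq_nonneg m), Real.sqrt_sq hm.le]
    rw [h2]
    calc ‖w‖ = Real.sqrt (‖w‖ ^ 2) := (Real.sqrt_sq (norm_nonneg _)).symm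
      _ ≤ _ := Real.sqrt_le_sqrt h1
  -- bound for F
  have hFb : ∀ t : ℝ, 0 ≤ t → ∀ u : Lp ℝ 2 (volume.restrict Ω),
      ‖F t u‖ ≤ m * Real.sqrt ((volume.restrict Ω) univ).toReal := by
    intro t ht u
    apply hCb
    filter_upwards [hF t ht u, hΩae] with x hx hxΩ
    rw [hx]; exact hfa t ht x hxΩ _
  -- continuity of t ↦ F t u on [0,∞)
  have hFcont : ∀ u : Lp ℝ 2 (volume.restrict Ω), ContinuousOn (fun t => F t u) (Set.Ici 0) := by
    intro u t₀ ht₀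
    have key : Tendsto (fun s => ∫ x, (f s x (u x) - f t₀ x (u x)) *
        (f s x (u x) - f t₀ x (u x)) ∂(volume.restrict Ω)) (𝓝[Set.Ici 0] t₀) (𝓝 0) := by
      have h0 : (𝓝 (0:ℝ)) = 𝓝 (∫ _x, (0:ℝ) ∂(volume.restrict Ω)) := by simp
      rw [h0]
      apply MeasureTheory.tendsto_integral_filter_of_dominated_convergence (fun _ => (2*m)^2)
      · filter_upwards [self_mem_nhdsWithin] with s hs
        have h1 := hF s hs u
        have h2 := hF t₀ ht₀ u
        apply AEStronglyMeasurable.congr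
          (f := fun x => (F s u x - F t₀ u x) * (F s u x - F t₀ u x))
        · exact (((Lp.aestronglyMeasurable (F s u)).sub
            (Lp.aestronglyMeasurable (F t₀ u))).mul
            (((Lp.aestronglyMeasurable (F s u)).sub (Lp.aestronglyMeasurable (F t₀ u)))))
        · filter_upwards [h1, h2] with x hx hx2
          rw [hx, hx2]
      · filter_upwards [self_mem_nhdsWithin] with s hs
        filter_upwards [hΩae] with x hxΩ
        have hb1 := hfa s hs x hxΩ (u x)
        have hb2 := hfa t₀ ht₀ x hxΩ (u x)
        have : |f s x (u x) - f t₀ x (u x)| ≤ 2 * m := by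
          calc |f s x (u x) - f t₀ x (u x)| ≤ |f s x (u x)| + |f t₀ x (u x)| := abs_sub _ _
            _ ≤ m + m := add_le_add hb1 hb2
            _ = 2 * m := by ring
        calc ‖(f s x (u x) - f t₀ x (u x)) * (f s x (u x) - f t₀ x (u x))‖
            = |f s x (u x) - f t₀ x (u x)| * |f s x (u x) - f t₀ x (u x)| := by
              rw [Real.norm_eq_abs, abs_mul]
          _ ≤ (2*m) * (2*m) := by
              apply mul_le_mul this this (abs_nonneg _) (by positivity)
          _ = (2*m)^2 := by ring
      · exact integrable_const _
      · filter_upwards [hΩae] with x hxΩ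
        have hmem : (t₀, (x, u x)) ∈ Set.Ici (0:ℝ) ×ˢ Ω ×ˢ Set.univ :=
          ⟨ht₀, hxΩ, mem_univ _⟩
        have hx : Tendsto (fun s : ℝ => (s, (x, u x))) (𝓝[Set.Ici 0] t₀)
            (𝓝[Set.Ici (0:ℝ) ×ˢ Ω ×ˢ Set.univ] (t₀, (x, u x))) := by
          apply tendsto_nhdsWithin_of_tendsto_nhds_of_eventually_within
          · exact ((continuous_id.prodMk continuous_const).tendsto t₀).mono_left
              nhdsWithin_le_nhds
          · filter_upwards [self_mem_nhdsWithin] with s hs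
            exact ⟨hs, hxΩ, mem_univ _⟩
        have hft : Tendsto (fun s => f s x (u x)) (𝓝[Set.Ici 0] t₀) (𝓝 (f t₀ x (u x))) :=
          (hfc _ hmem).tendsto.comp hx
        have hd : Tendsto (fun s => f s x (u x) - f t₀ x (u x)) (𝓝[Set.Ici 0] t₀) (𝓝 0) := by
          simpa using hft.sub (tendsto_const_nhds (x := f t₀ x (u x)))
        simpa using hd.mul hd
    have hnormeq : ∀ s ∈ Set.Ici (0:ℝ), ‖F s u - F t₀ u‖ ^ 2 =
        ∫ x, (f s x (u x) - f t₀ x (u x)) * (f s x (u x) - f t₀ x (u x)) ∂(volume.restrict Ω) := by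
      intro s hs
      rw [hnormsq]
      apply MeasureTheory.integral_congr_ae
      filter_upwards [hF s hs u, hF t₀ ht₀ u, Lp.coeFn_sub (F s u) (F t₀ u)] with x h1 h2 h3
      rw [h3]; simp only [Pi.sub_apply, h1, h2]
    have hsq : Tendsto (fun s => ‖F s u - F t₀ u‖ ^ 2) (𝓝[Set.Ici 0] t₀) (𝓝 0) := by
      apply key.congr'
      filter_upwards [self_mem_nhdsWithin] with s hs
      exact (hnormeq s hs).symm
    have hnrm : Tendsto (fun s => ‖F s u - F t₀ u‖) (𝓝[Set.Ici 0] t₀) (𝓝 0) := by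
      have := (Real.continuous_sqrt.tendsto 0).comp hsq
      simp only [Real.sqrt_zero] at this
      apply this.congr
      intro s
      simp [Real.sqrt_sq (norm_nonneg _)]
    rw [ContinuousWithinAt]
    rw [tendsto_iff_norm_sub_tendsto_zero]
    exact hnrm.congr (fun s => by rw [norm_sub_rev])
  -- interval integrability of t ↦ P (F t u)
  have hPFint : ∀ u, IntervalIntegrable (fun t => P (F t u)) volume 0 T := by
    intro u
    apply ContinuousOn.intervalIntegrable
    rw [Set.uIcc_of_le hT.le]
    exact P.continuous.comp_continuousOn ((hFcont u).mono Icc_subset_Ici_self)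
  -- inner product with the averaged map
  have hG : ∀ u, u ∈ N → ⟪∫ t in (0:ℝ)..T, P (F t u), u⟫ =
      ∫ t in (0:ℝ)..T, ⟪F t u, u⟫ := by
    intro u hu
    rw [real_inner_comm]
    show (innerSL ℝ u) (∫ t in (0:ℝ)..T, P (F t u)) = _
    rw [← (innerSL ℝ u).intervalIntegral_comp_comm (hPFint u)]
    apply intervalIntegral.integral_congr
    intro t _
    show ⟪u, P (F t u)⟫ = ⟪F t u, u⟫
    have h1 := hPorth (F t u) u hu
    rw [inner_sub_left] at h1
    rw [real_inner_comm]
    linarith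
  -- pointwise formula for the inner product
  have hFIP : ∀ t : ℝ, 0 ≤ t → ∀ u v : Lp ℝ 2 (volume.restrict Ω),
      ⟪F t u, v⟫ = ∫ x, f t x (u x) * v x ∂(volume.restrict Ω) := by
    intro t ht u v
    rw [hinner]
    apply MeasureTheory.integral_congr_ae
    filter_upwards [hF t ht u] with x hx
    rw [hx]
  -- bounds on fp and fm
  have hfpb : ∀ t : ℝ, 0 ≤ t → ∀ x ∈ Ω, |fp t x| ≤ m := by
    intro t ht x hx
    exact le_of_tendsto (hfp t ht x hx).abs
      (Filter.Eventually.of_forall fun y => hfa t ht x hx y)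
  have hfmb : ∀ t : ℝ, 0 ≤ t → ∀ x ∈ Ω, |fm t x| ≤ m := by
    intro t ht x hx
    exact le_of_tendsto (hfm t ht x hx).abs
      (Filter.Eventually.of_forall fun y => hfa t ht x hx y)
  -- all L² functions are integrable
  have hL1 : ∀ a : Lp ℝ 2 (volume.restrict Ω), Integrable (a : _ → ℝ) (volume.restrict Ω) :=
    fun a => (Lp.memLp a).integrable (by norm_num)
  -- measurability in x of continuous-in-(t,x) functions, and pointwise t-continuity
  have hgen : ∀ g : ℝ → EuclideanSpace ℝ (Fin n) → ℝ,
      ContinuousOn (fun p : ℝ × EuclideanSpace ℝ (Fin n) => g p.1 p.2)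
        (Set.Ici (0:ℝ) ×ˢ Ω) →
      (∀ s : ℝ, 0 ≤ s → AEStronglyMeasurable (fun x => g s x) (volume.restrict Ω)) ∧
      (∀ t : ℝ, 0 ≤ t → ∀ x ∈ Ω,
        Tendsto (fun s => g s x) (𝓝[Set.Ici 0] t) (𝓝 (g t x))) := by
    intro g hgc
    constructor
    · intro s hs
      have hc : ContinuousOn (fun x => g s x) Ω := by
        intro x hx
        exact (hgc (s, x) ⟨hs, hx⟩).comp
          ((continuous_const.prodMk continuous_id).continuousWithinAt)
          (fun y hy => ⟨hs, hy⟩)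
      exact hc.aestronglyMeasurable hΩo.measurableSet
    · intro t ht x hx
      have hps : Tendsto (fun s : ℝ => (s, x)) (𝓝[Set.Ici 0] t)
          (𝓝[Set.Ici (0:ℝ) ×ˢ Ω] (t, x)) := by
        apply tendsto_nhdsWithin_of_tendsto_nhds_of_eventually_within
        · exact ((continuous_id.prodMk continuous_const).tendsto t).mono_left
            nhdsWithin_le_nhds
        · filter_upwards [self_mem_nhdsWithin] with s hs
          exact ⟨hs, hx⟩
      exact (hgc (t, x) ⟨ht, hx⟩).tendsto.comp hps
  -- continuity of parametric set integrals
  have hcontP : ∀ g : ℝ → EuclideanSpace ℝ (Fin n) → ℝ,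
      ContinuousOn (fun p : ℝ × EuclideanSpace ℝ (Fin n) => g p.1 p.2)
        (Set.Ici (0:ℝ) ×ˢ Ω) →
      (∀ t : ℝ, 0 ≤ t → ∀ x ∈ Ω, |g t x| ≤ m) →
      ∀ S : Set (EuclideanSpace ℝ (Fin n)), ∀ a : Lp ℝ 2 (volume.restrict Ω),
      ContinuousOn (fun t => ∫ x in S, g t x * a x ∂(volume.restrict Ω)) (Set.Ici 0) := by
    intro g hgc hgb S a t₀ ht₀
    have hΩae' : ∀ᵐ x ∂((volume.restrict Ω).restrict S), x ∈ Ω :=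
      ae_restrict_of_ae hΩae
    apply MeasureTheory.tendsto_integral_filter_of_dominated_convergence
      (fun x => m * |a x|)
    · filter_upwards [self_mem_nhdsWithin] with s hs
      exact (((hgen g hgc).1 s hs).restrict).mul ((Lp.aestronglyMeasurable a).restrict)
    · filter_upwards [self_mem_nhdsWithin] with s hs
      filter_upwards [hΩae'] with x hxΩ
      rw [Real.norm_eq_abs, abs_mul]
      exact mul_le_mul_of_nonneg_right (hgb s hs x hxΩ) (abs_nonneg _)
    · exact (((hL1 a).abs).const_mul m).restrict
    · filter_upwards [hΩae'] with x hxΩ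
      exact ((hgen g hgc).2 t₀ ht₀ x hxΩ).mul tendsto_const_nhds
  by_contra hcon
  push_neg at hcon
  have hsel : ∀ k : ℕ, ∃ u, u ∈ N ∧ ((k : ℝ) + 1) ≤ ‖u‖ ∧
      ⟪∫ t in (0:ℝ)..T, P (F t u), u⟫ ≤ 0 := by
    intro k
    obtain ⟨u, hu1, hu2, hu3⟩ := hcon ((k : ℝ) + 1) (by positivity)
    exact ⟨u, hu1, hu2, hu3⟩
  choose u humem hunorm hule using hsel
  have hupos : ∀ k, 0 < ‖u k‖ := fun k => lt_of_lt_of_le (by positivity) (hunorm k)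
  set v : ℕ → Lp ℝ 2 (volume.restrict Ω) := fun k => (‖u k‖)⁻¹ • u k with hvdef
  have hvmem : ∀ k, v k ∈ N := fun k => N.smul_mem _ (humem k)
  have hvnorm : ∀ k, ‖v k‖ = 1 := by
    intro k
    rw [hvdef]
    simp only [norm_smul, norm_inv, norm_norm]
    exact inv_mul_cancel₀ (hupos k).ne'
  have huv : ∀ k, u k = ‖u k‖ • v k := by
    intro k
    rw [hvdef]
    simp only [smul_smul, mul_inv_cancel₀ (hupos k).ne', one_smul]
  haveI : ProperSpace ↥N := FiniteDimensional.proper ℝ ↥N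
  obtain ⟨vlim, hvlimsph, φ₁, hφ₁mono, hφ₁tend⟩ :=
    (isCompact_sphere (0 : ↥N) 1).tendsto_subseq
      (x := fun k => (⟨v k, hvmem k⟩ : ↥N))
      (fun k => by simp [mem_sphere_zero_iff_norm, hvnorm k])
  set c : Lp ℝ 2 (volume.restrict Ω) := (vlim : Lp ℝ 2 (volume.restrict Ω)) with hcdef
  have hcmem : c ∈ N := vlim.2
  have hcnorm : ‖c‖ = 1 := by
    have := mem_sphere_zero_iff_norm.mp hvlimsph
    simpa [hcdef] using this
  have htendLp : Tendsto (fun k => v (φ₁ k)) atTop (𝓝 c) := by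
    have h2 := (continuous_subtype_val.tendsto vlim).comp hφ₁tend
    exact h2
  have htm : TendstoInMeasure (volume.restrict Ω)
      (fun k => ((v (φ₁ k) : Lp ℝ 2 (volume.restrict Ω)) : _ → ℝ)) atTop c :=
    tendstoInMeasure_of_tendsto_Lp htendLp
  obtain ⟨ns, hnsmono, hae⟩ := htm.exists_seq_tendsto_ae
  set σ : ℕ → ℕ := φ₁ ∘ ns with hσdef
  have hσmono : StrictMono σ := hφ₁mono.comp hnsmono
  have hWtend : Tendsto (fun k => v (σ k)) atTop (𝓝 c) :=
    htendLp.comp hnsmono.tendsto_atTop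
  have hUtop : Tendsto (fun k => ‖u (σ k)‖) atTop atTop := by
    apply tendsto_atTop_mono (fun k => ?_) tendsto_natCast_atTop_atTop
    calc (k : ℝ) ≤ (σ k : ℝ) := by exact_mod_cast hσmono.le_apply
      _ ≤ (σ k : ℝ) + 1 := by linarith
      _ ≤ ‖u (σ k)‖ := hunorm (σ k)
  have hLLpos := hLL c hcmem hcnorm
  have hcm : StronglyMeasurable (c : _ → ℝ) := Lp.stronglyMeasurable c
  have hA : MeasurableSet {x | 0 < c x} := measurableSet_lt measurable_const hcm.measurable
  have hB : MeasurableSet {x | c x < 0} := measurableSet_lt hcm.measurable measurable_const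
  set ψ : ℝ → ℝ := fun t =>
    (∫ x in {x | 0 < c x}, fp t x * c x ∂(volume.restrict Ω)) +
    (∫ x in {x | c x < 0}, fm t x * c x ∂(volume.restrict Ω)) with hψdef
  have hseq_le : ∀ k, (∫ t in (0:ℝ)..T, ⟪F t (u (σ k)), v (σ k)⟫) ≤ 0 := by
    intro k
    have h1 := hule (σ k)
    rw [hG _ (humem (σ k))] at h1
    have h2 : (∫ t in (0:ℝ)..T, ⟪F t (u (σ k)), u (σ k)⟫)
        = ‖u (σ k)‖ * ∫ t in (0:ℝ)..T, ⟪F t (u (σ k)), v (σ k)⟫ := by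
      rw [← intervalIntegral.integral_const_mul]
      apply intervalIntegral.integral_congr
      intro t _
      exact (congrArg (fun w => ⟪F t (u (σ k)), w⟫) (huv (σ k))).trans
        (real_inner_smul_right _ _ _)
    rw [h2] at h1
    have h3 : ‖u (σ k)‖ * (∫ t in (0:ℝ)..T, ⟪F t (u (σ k)), v (σ k)⟫) ≤ ‖u (σ k)‖ * 0 := by
      simpa using h1
    exact le_of_mul_le_mul_left h3 (hupos (σ k))
  have hlimψ : ∀ t ∈ Set.Ioc (0:ℝ) T,
      Tendsto (fun k => ⟪F t (u (σ k)), v (σ k)⟫) atTop (𝓝 (ψ t)) := by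
    intro t ht
    have ht0 : (0:ℝ) ≤ t := ht.1.le
    have hA0 : Tendsto (fun k => ⟪F t (u (σ k)), v (σ k) - c⟫) atTop (𝓝 0) := by
      apply squeeze_zero_norm
        (a := fun k => (m * Real.sqrt ((volume.restrict Ω) univ).toReal) * ‖v (σ k) - c‖)
      · intro k
        rw [Real.norm_eq_abs]
        calc |⟪F t (u (σ k)), v (σ k) - c⟫| ≤ ‖F t (u (σ k))‖ * ‖v (σ k) - c‖ :=
              abs_real_inner_le_norm _ _
          _ ≤ _ := mul_le_mul_of_nonneg_right (hFb t ht0 _) (norm_nonneg _)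
      · have hd : Tendsto (fun k => ‖v (σ k) - c‖) atTop (𝓝 0) :=
          tendsto_iff_norm_sub_tendsto_zero.mp hWtend
        have := hd.const_mul (m * Real.sqrt ((volume.restrict Ω) univ).toReal)
        simpa using this
    obtain ⟨H, hHdef⟩ : ∃ H : EuclideanSpace ℝ (Fin n) → ℝ, H = fun x =>
      if 0 < c x then fp t x * c x else if c x < 0 then fm t x * c x else 0 := ⟨_, rfl⟩
    have hHeq : H = fun x => ({x | 0 < c x}.indicator (fun x => fp t x * c x) x) +
        ({x | c x < 0}.indicator (fun x => fm t x * c x) x) := by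
      funext x
      simp only [hHdef]
      by_cases h1 : 0 < c x
      · rw [if_pos h1, Set.indicator_of_mem (show x ∈ {x | 0 < c x} from h1),
          Set.indicator_of_notMem (show x ∉ {x | c x < 0} by
            simp only [mem_setOf_eq, not_lt]; linarith), add_zero]
      · rw [if_neg h1, Set.indicator_of_notMem (show x ∉ {x | 0 < c x} from h1), zero_add]
        by_cases h2 : c x < 0
        · rw [if_pos h2, Set.indicator_of_mem (show x ∈ {x | c x < 0} from h2)]
        · rw [if_neg h2, Set.indicator_of_notMem (show x ∉ {x | c x < 0} from h2)]
    have hfpm := (hgen fp hfpc).1 t ht0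
    have hfmm := (hgen fm hfmc).1 t ht0
    have hint1 : Integrable ({x | 0 < c x}.indicator (fun x => fp t x * c x))
        (volume.restrict Ω) := by
      apply Integrable.indicator _ hA
      apply Integrable.mono' ((hL1 c).abs.const_mul m) (hfpm.mul (Lp.aestronglyMeasurable c))
      filter_upwards [hΩae] with x hx
      simp only [Pi.mul_apply, Real.norm_eq_abs, abs_mul]
      exact mul_le_mul_of_nonneg_right (hfpb t ht0 x hx) (abs_nonneg _)
    have hint2 : Integrable ({x | c x < 0}.indicator (fun x => fm t x * c x))
        (volume.restrict Ω) := by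
      apply Integrable.indicator _ hB
      apply Integrable.mono' ((hL1 c).abs.const_mul m) (hfmm.mul (Lp.aestronglyMeasurable c))
      filter_upwards [hΩae] with x hx
      simp only [Pi.mul_apply, Real.norm_eq_abs, abs_mul]
      exact mul_le_mul_of_nonneg_right (hfmb t ht0 x hx) (abs_nonneg _)
    have hB0 : Tendsto (fun k => ⟪F t (u (σ k)), c⟫) atTop
        (𝓝 (∫ x, H x ∂(volume.restrict Ω))) := by
      apply Filter.Tendsto.congr (fun k => (hinner (F t (u (σ k))) c).symm)
      apply MeasureTheory.tendsto_integral_filter_of_dominated_convergence (fun x => m * |c x|)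
      · exact Filter.Eventually.of_forall fun k =>
          (Lp.aestronglyMeasurable _).mul (Lp.aestronglyMeasurable c)
      · apply Filter.Eventually.of_forall
        intro k
        filter_upwards [hF t ht0 (u (σ k)), hΩae] with x hx hxΩ
        rw [Real.norm_eq_abs, abs_mul, hx]
        exact mul_le_mul_of_nonneg_right (hfa t ht0 x hxΩ _) (abs_nonneg _)
      · exact (hL1 c).abs.const_mul m
      · have haeF : ∀ᵐ x ∂(volume.restrict Ω), ∀ k, F t (u (σ k)) x = f t x (u (σ k) x) :=
          ae_all_iff.mpr (fun k => hF t ht0 (u (σ k)))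
        have haeU : ∀ᵐ x ∂(volume.restrict Ω), ∀ k,
            (u (σ k) : EuclideanSpace ℝ (Fin n) → ℝ) x = ‖u (σ k)‖ * v (σ k) x := by
          apply ae_all_iff.mpr
          intro k
          filter_upwards [Lp.coeFn_smul (‖u (σ k)‖) (v (σ k))] with x hx
          conv_lhs => rw [huv (σ k)]
          rw [hx]
          rfl
        filter_upwards [haeF, haeU, hae, hΩae] with x hxF hxU hxae hxΩ
        have hxae' : Tendsto (fun k => (v (σ k) : EuclideanSpace ℝ (Fin n) → ℝ) x) atTop
            (𝓝 (c x)) := hxae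
        rcases lt_trichotomy 0 (c x) with hcx | hcx | hcx
        · have hUx : Tendsto (fun k => (u (σ k) : EuclideanSpace ℝ (Fin n) → ℝ) x)
              atTop atTop := by
            apply Tendsto.congr (fun k => (hxU k).symm)
            exact hUtop.atTop_mul_pos hcx hxae'
          have h5 : Tendsto (fun k => f t x ((u (σ k) : EuclideanSpace ℝ (Fin n) → ℝ) x))
              atTop (𝓝 (fp t x)) := (hfp t ht0 x hxΩ).comp hUx
          have h6 : Tendsto (fun k => F t (u (σ k)) x * c x) atTop (𝓝 (fp t x * c x)) :=
            Tendsto.mul (Tendsto.congr (fun k => (hxF k).symm) h5) tendsto_const_nhds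
          have hHx : H x = fp t x * c x := by simp only [hHdef]; rw [if_pos hcx]
          rw [hHx]
          exact h6
        · have hzero : (fun k => F t (u (σ k)) x * c x) = fun _ => (0:ℝ) :=
            funext fun k => by rw [← hcx, mul_zero]
          have hHx : H x = 0 := by
            simp only [hHdef]
            rw [if_neg (by rw [← hcx]; exact lt_irrefl 0), if_neg (by rw [← hcx]; exact lt_irrefl 0)]
          rw [hzero, hHx]
          exact tendsto_const_nhds
        · have hUx : Tendsto (fun k => (u (σ k) : EuclideanSpace ℝ (Fin n) → ℝ) x)
              atTop atBot := by
            apply Tendsto.congr (fun k => (hxU k).symm)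
            exact hUtop.atTop_mul_neg hcx hxae'
          have h5 : Tendsto (fun k => f t x ((u (σ k) : EuclideanSpace ℝ (Fin n) → ℝ) x))
              atTop (𝓝 (fm t x)) := (hfm t ht0 x hxΩ).comp hUx
          have h6 : Tendsto (fun k => F t (u (σ k)) x * c x) atTop (𝓝 (fm t x * c x)) :=
            Tendsto.mul (Tendsto.congr (fun k => (hxF k).symm) h5) tendsto_const_nhds
          have hHx : H x = fm t x * c x := by
            simp only [hHdef]
            rw [if_neg (not_lt.mpr hcx.le), if_pos hcx]
          rw [hHx]
          exact h6
    have hHψ : (∫ x, H x ∂(volume.restrict Ω)) = ψ t := by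
      rw [hHeq, MeasureTheory.integral_add hint1 hint2,
        MeasureTheory.integral_indicator hA, MeasureTheory.integral_indicator hB]
    have hsum := hA0.add hB0
    rw [zero_add, hHψ] at hsum
    apply hsum.congr
    intro k
    rw [inner_sub_right]
    ring
  have hmain : Tendsto (fun k => ∫ t in (0:ℝ)..T, ⟪F t (u (σ k)), v (σ k)⟫) atTop
      (𝓝 (∫ t in (0:ℝ)..T, ψ t)) := by
    apply intervalIntegral.tendsto_integral_filter_of_dominated_convergence
      (fun _ => m * Real.sqrt ((volume.restrict Ω) univ).toReal)
    · apply Filter.Eventually.of_forall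
      intro k
      have hcont : ContinuousOn (fun t => ⟪F t (u (σ k)), v (σ k)⟫) (Set.Ici 0) :=
        (hFcont (u (σ k))).inner continuousOn_const
      rw [Set.uIoc_of_le hT.le]
      exact (hcont.mono (Set.Ioc_subset_Icc_self.trans Icc_subset_Ici_self)).aestronglyMeasurable measurableSet_Ioc
    · apply Filter.Eventually.of_forall
      intro k
      apply Filter.Eventually.of_forall
      intro t ht
      rw [Set.uIoc_of_le hT.le] at ht
      calc ‖⟪F t (u (σ k)), v (σ k)⟫‖ ≤ ‖F t (u (σ k))‖ * ‖v (σ k)‖ := by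
            rw [Real.norm_eq_abs]; exact abs_real_inner_le_norm _ _
        _ = ‖F t (u (σ k))‖ := by rw [hvnorm (σ k), mul_one]
        _ ≤ _ := hFb t ht.1.le (u (σ k))
    · exact intervalIntegrable_const
    · apply Filter.Eventually.of_forall
      intro t ht
      rw [Set.uIoc_of_le hT.le] at ht
      exact hlimψ t ht
  have hψint : (∫ t in (0:ℝ)..T, ψ t) =
      (∫ t in (0:ℝ)..T, ∫ x in {x | 0 < c x}, fp t x * c x ∂(volume.restrict Ω)) +
      (∫ t in (0:ℝ)..T, ∫ x in {x | c x < 0}, fm t x * c x ∂(volume.restrict Ω)) := by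
    have i1 : IntervalIntegrable
        (fun t => ∫ x in {x | 0 < c x}, fp t x * c x ∂(volume.restrict Ω)) volume 0 T := by
      apply ContinuousOn.intervalIntegrable
      rw [Set.uIcc_of_le hT.le]
      exact (hcontP fp hfpc hfpb _ c).mono Icc_subset_Ici_self
    have i2 : IntervalIntegrable
        (fun t => ∫ x in {x | c x < 0}, fm t x * c x ∂(volume.restrict Ω)) volume 0 T := by
      apply ContinuousOn.intervalIntegrable
      rw [Set.uIcc_of_le hT.le]
      exact (hcontP fm hfmc hfmb _ c).mono Icc_subset_Ici_self
    exact intervalIntegral.integral_add i1 i2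
  have hfinal := le_of_tendsto hmain (Filter.Eventually.of_forall hseq_le)
  rw [hψint] at hfinal
  exact absurd hfinal (not_le.mpr hLLpos)
end
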